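/- arXiv:1204.5828 — 11 statements merged into one kernel-verified Lean document; each statement's English description precedes it below -/
import Mathlib

section
/- Let γ : [0,1] → ℝ² be a curve of finite length L. Then there exist side lengths w ≥ h ≥ 0 and a rectangle Q with side lengths w and h such that the image of γ is contained in Q and w + 2h ≤ √2 · L (equivalently, per(Q) − long(Q) ≤ √2 · L, i.e., the sum of the lengths of the three shortest sides of Q is at most √2 · L). -/
open Set

private lemma l1l2 (u v : ℝ) : |u| + |v| ≤ Real.sqrt 2 * Real.sqrt (u^2 + v^2) := by
  have h1 : (|u| + |v|)^2 ≤ 2*(u^2+v^2) := by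
    nlinarith [sq_nonneg (|u| - |v|), sq_abs u, sq_abs v, abs_nonneg u, abs_nonneg v]
  have h2 := Real.sqrt_le_sqrt h1
  rwa [Real.sqrt_sq (by positivity), Real.sqrt_mul (by norm_num : (0:ℝ) ≤ 2)] at h2

private lemma chain5 (γ : ℝ → EuclideanSpace ℝ (Fin 2))
    (hfin : eVariationOn γ (Set.Icc 0 1) ≠ ⊤)
    {a b c d : ℝ} (h0a : 0 ≤ a) (hab : a ≤ b) (hbc : b ≤ c) (hcd : c ≤ d) (hd1 : d ≤ 1) :
    dist (γ 0) (γ a) + dist (γ a) (γ b) + dist (γ b) (γ c) + dist (γ c) (γ d) + dist (γ d) (γ 1)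
      ≤ (eVariationOn γ (Set.Icc 0 1)).toReal := by
  have ha : a ∈ Icc (0:ℝ) 1 := ⟨h0a, hab.trans (hbc.trans (hcd.trans hd1))⟩
  have hb : b ∈ Icc (0:ℝ) 1 := ⟨h0a.trans hab, hbc.trans (hcd.trans hd1)⟩
  have hc : c ∈ Icc (0:ℝ) 1 := ⟨(h0a.trans hab).trans hbc, hcd.trans hd1⟩
  have hd : d ∈ Icc (0:ℝ) 1 := ⟨((h0a.trans hab).trans hbc).trans hcd, hd1⟩
  have h0 : (0:ℝ) ∈ Icc (0:ℝ) 1 := ⟨le_refl _, zero_le_one⟩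
  have h1 : (1:ℝ) ∈ Icc (0:ℝ) 1 := ⟨zero_le_one, le_refl _⟩
  have e1 := eVariationOn.Icc_add_Icc γ (s := Icc 0 1) h0a hab ha
  have e2 := eVariationOn.Icc_add_Icc γ (s := Icc 0 1) (h0a.trans hab) hbc hb
  have e3 := eVariationOn.Icc_add_Icc γ (s := Icc 0 1) hc.1 hcd hc
  have e4 := eVariationOn.Icc_add_Icc γ (s := Icc 0 1) hd.1 hd1 hd
  have d1 : edist (γ 0) (γ a) ≤ eVariationOn γ (Icc 0 1 ∩ Icc 0 a) :=
    eVariationOn.edist_le γ ⟨h0, le_refl _, h0a⟩ ⟨ha, h0a, le_refl _⟩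
  have d2 : edist (γ a) (γ b) ≤ eVariationOn γ (Icc 0 1 ∩ Icc a b) :=
    eVariationOn.edist_le γ ⟨ha, le_refl _, hab⟩ ⟨hb, hab, le_refl _⟩
  have d3 : edist (γ b) (γ c) ≤ eVariationOn γ (Icc 0 1 ∩ Icc b c) :=
    eVariationOn.edist_le γ ⟨hb, le_refl _, hbc⟩ ⟨hc, hbc, le_refl _⟩
  have d4 : edist (γ c) (γ d) ≤ eVariationOn γ (Icc 0 1 ∩ Icc c d) :=
    eVariationOn.edist_le γ ⟨hc, le_refl _, hcd⟩ ⟨hd, hcd, le_refl _⟩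
  have d5 : edist (γ d) (γ 1) ≤ eVariationOn γ (Icc 0 1 ∩ Icc d 1) :=
    eVariationOn.edist_le γ ⟨hd, le_refl _, hd1⟩ ⟨h1, hd1, le_refl _⟩
  have key : edist (γ 0) (γ a) + edist (γ a) (γ b) + edist (γ b) (γ c) + edist (γ c) (γ d)
      + edist (γ d) (γ 1) ≤ eVariationOn γ (Icc 0 1) := by
    calc edist (γ 0) (γ a) + edist (γ a) (γ b) + edist (γ b) (γ c) + edist (γ c) (γ d)
        + edist (γ d) (γ 1)
        ≤ eVariationOn γ (Icc 0 1 ∩ Icc 0 a) + eVariationOn γ (Icc 0 1 ∩ Icc a b)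
          + eVariationOn γ (Icc 0 1 ∩ Icc b c) + eVariationOn γ (Icc 0 1 ∩ Icc c d)
          + eVariationOn γ (Icc 0 1 ∩ Icc d 1) := by gcongr
      _ = eVariationOn γ (Icc 0 1) := by rw [e1, e2, e3, e4, inter_self]
  have H := ENNReal.toReal_mono hfin key
  have f1 : edist (γ (0:ℝ)) (γ a) ≠ ⊤ := edist_ne_top _ _
  have f2 : edist (γ a) (γ b) ≠ ⊤ := edist_ne_top _ _
  have f3 : edist (γ b) (γ c) ≠ ⊤ := edist_ne_top _ _
  have f4 : edist (γ c) (γ d) ≠ ⊤ := edist_ne_top _ _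
  have f5 : edist (γ d) (γ (1:ℝ)) ≠ ⊤ := edist_ne_top _ _
  rw [ENNReal.toReal_add (by finiteness) f5, ENNReal.toReal_add (by finiteness) f4,
    ENNReal.toReal_add (by finiteness) f3, ENNReal.toReal_add f1 f2] at H
  simpa [dist_edist] using H

private lemma core (γ : ℝ → EuclideanSpace ℝ (Fin 2))
    (hfin : eVariationOn γ (Set.Icc 0 1) ≠ ⊤) (x y : ℝ → ℝ)
    (key : ∀ s t : ℝ, |x t - x s| + |y t - y s| ≤ Real.sqrt 2 * dist (γ s) (γ t))
    (mx Mx my My : ℝ)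
    (p q u v : ℝ) (hp : p ∈ Icc (0:ℝ) 1) (hq : q ∈ Icc (0:ℝ) 1)
    (hu : u ∈ Icc (0:ℝ) 1) (hv : v ∈ Icc (0:ℝ) 1)
    (hpq : p ≤ q) (huv : u ≤ v)
    (hxp : x p = mx) (hxq : x q = Mx) (hyu : y u = My) (hyv : y v = my)
    (hy01 : y 0 = y 1) :
    (Mx - mx) + 2 * (My - my) ≤ Real.sqrt 2 * (eVariationOn γ (Set.Icc 0 1)).toReal := by
  have finish : ∀ a b c d : ℝ, 0 ≤ a → a ≤ b → b ≤ c → c ≤ d → d ≤ 1 →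
      (Mx - mx) + 2 * (My - my) ≤
        (|x a - x 0| + |y a - y 0|) + (|x b - x a| + |y b - y a|) + (|x c - x b| + |y c - y b|)
        + (|x d - x c| + |y d - y c|) + (|x 1 - x d| + |y 1 - y d|) →
      (Mx - mx) + 2 * (My - my) ≤ Real.sqrt 2 * (eVariationOn γ (Set.Icc 0 1)).toReal := by
    intro a b c d h0a hab hbc hcd hd1 habs
    have C := chain5 γ hfin h0a hab hbc hcd hd1
    have S : Real.sqrt 2 * (dist (γ 0) (γ a) + dist (γ a) (γ b) + dist (γ b) (γ c)
        + dist (γ c) (γ d) + dist (γ d) (γ 1))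
        ≤ Real.sqrt 2 * (eVariationOn γ (Set.Icc 0 1)).toReal :=
      mul_le_mul_of_nonneg_left C (Real.sqrt_nonneg 2)
    rw [mul_add, mul_add, mul_add, mul_add] at S
    have K1 := key 0 a; have K2 := key a b; have K3 := key b c
    have K4 := key c d; have K5 := key d 1
    linarith [habs]
  rcases le_total q u with h1 | h1
  · refine finish p q u v hp.1 hpq h1 huv hv.2 ?_
    linarith [le_abs_self (x q - x p), le_abs_self (y p - y 0), le_abs_self (y q - y p),
      le_abs_self (y u - y q), le_abs_self (y v - y u), le_abs_self (y 1 - y v),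
      neg_abs_le (y v - y u), neg_abs_le (y 1 - y v),
      abs_nonneg (x p - x 0), abs_nonneg (x u - x q), abs_nonneg (x v - x u),
      abs_nonneg (x 1 - x v), abs_nonneg (y p - y 0)]
  · rcases le_total p u with h2 | h2
    · rcases le_total q v with h3 | h3
      · refine finish p u q v hp.1 h2 h1 h3 hv.2 ?_
        linarith [le_abs_self (x u - x p), le_abs_self (x q - x u),
          le_abs_self (y p - y 0), le_abs_self (y u - y p),
          neg_abs_le (y q - y u), neg_abs_le (y v - y q), le_abs_self (y 1 - y v),
          abs_nonneg (x p - x 0), abs_nonneg (x v - x q), abs_nonneg (x 1 - x v)]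
      · refine finish p u v q hp.1 h2 huv h3 hq.2 ?_
        linarith [le_abs_self (x u - x p), le_abs_self (x v - x u), le_abs_self (x q - x v),
          le_abs_self (y p - y 0), le_abs_self (y u - y p),
          neg_abs_le (y v - y u), le_abs_self (y q - y v), le_abs_self (y 1 - y q),
          abs_nonneg (x p - x 0), abs_nonneg (x 1 - x q), abs_nonneg (y q - y v)]
    · rcases le_total v p with h3 | h3
      · refine finish u v p q hu.1 huv h3 hpq hq.2 ?_
        linarith [le_abs_self (x q - x p), le_abs_self (y u - y 0),
          neg_abs_le (y v - y u), le_abs_self (y p - y v), le_abs_self (y q - y p),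
          le_abs_self (y 1 - y q),
          abs_nonneg (x u - x 0), abs_nonneg (x v - x u), abs_nonneg (x p - x v),
          abs_nonneg (x 1 - x q)]
      · rcases le_total v q with h4 | h4
        · refine finish u p v q hu.1 h2 h3 h4 hq.2 ?_
          linarith [le_abs_self (x v - x p), le_abs_self (x q - x v),
            le_abs_self (y u - y 0), neg_abs_le (y p - y u), neg_abs_le (y v - y p),
            le_abs_self (y q - y v), le_abs_self (y 1 - y q),
            abs_nonneg (x u - x 0), abs_nonneg (x p - x u), abs_nonneg (x 1 - x q)]
        · refine finish u p q v hu.1 h2 hpq h4 hv.2 ?_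
          linarith [le_abs_self (x q - x p),
            le_abs_self (y u - y 0), neg_abs_le (y p - y u), neg_abs_le (y q - y p),
            neg_abs_le (y v - y q), le_abs_self (y 1 - y v),
            abs_nonneg (x u - x 0), abs_nonneg (x p - x u), abs_nonneg (x v - x q),
            abs_nonneg (x 1 - x v)]

private lemma isom2 (a b c d cx cy : ℝ) (h1 : a^2 + c^2 = 1) (h2 : b^2 + d^2 = 1)
    (h3 : a*b + c*d = 0) :
    Isometry (fun p : EuclideanSpace ℝ (Fin 2) =>
      ((WithLp.equiv 2 (Fin 2 → ℝ)).symm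
        ![a * p 0 + b * p 1 + cx, c * p 0 + d * p 1 + cy] : EuclideanSpace ℝ (Fin 2))) := by
  apply Isometry.of_dist_eq
  intro p q
  rw [EuclideanSpace.dist_eq, EuclideanSpace.dist_eq]
  simp only [Fin.sum_univ_two, WithLp.equiv_symm_apply, PiLp.toLp_apply, WithLp.ofLp_toLp, Matrix.cons_val_zero,
    Matrix.cons_val_one, Matrix.head_cons, Real.dist_eq, sq_abs]
  congr 1
  linear_combination (p 0 - q 0)^2 * h1 + (p 1 - q 1)^2 * h2 + (2*(p 0 - q 0)*(p 1 - q 1)) * h3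

/-- Any curve `γ : [0,1] → ℝ²` of finite length `L` can be enclosed in a
rectangle `Q` (an isometric image of a box `[0,w] × [0,h]` with `w ≥ h ≥ 0`) such that the total
length of the three shortest sides satisfies `w + 2h ≤ √2 · L`
(equivalently `per(Q) − long(Q) ≤ √2 · L`). -/
theorem stmt_0 (γ : ℝ → EuclideanSpace ℝ (Fin 2)) (L : ℝ)
    (hcont : ContinuousOn γ (Set.Icc 0 1))
    (hfin : eVariationOn γ (Set.Icc 0 1) ≠ ⊤)
    (hL : L = (eVariationOn γ (Set.Icc 0 1)).toReal) :
    ∃ (w h : ℝ) (Q : Set (EuclideanSpace ℝ (Fin 2)))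
      (f : EuclideanSpace ℝ (Fin 2) → EuclideanSpace ℝ (Fin 2)),
      0 ≤ h ∧ h ≤ w ∧ Isometry f ∧
      Q = f '' {p : EuclideanSpace ℝ (Fin 2) | p 0 ∈ Set.Icc 0 w ∧ p 1 ∈ Set.Icc 0 h} ∧
      γ '' Set.Icc 0 1 ⊆ Q ∧
      w + 2 * h ≤ Real.sqrt 2 * L := by
  classical
  -- choose a rotation aligning the chord with the first axis
  obtain ⟨A, B, hAB, hchord⟩ : ∃ A B : ℝ, A^2 + B^2 = 1 ∧
      A * (γ 1 1 - γ 0 1) = B * (γ 1 0 - γ 0 0) := by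
    by_cases hz : γ 1 0 - γ 0 0 = 0 ∧ γ 1 1 - γ 0 1 = 0
    · exact ⟨1, 0, by norm_num, by rw [hz.1, hz.2]; ring⟩
    · have hpos : 0 < (γ 1 0 - γ 0 0)^2 + (γ 1 1 - γ 0 1)^2 := by
        rcases not_and_or.mp hz with h | h
        · have : 0 < (γ 1 0 - γ 0 0)^2 := lt_of_le_of_ne (sq_nonneg _) (Ne.symm (pow_ne_zero 2 h))
          nlinarith [sq_nonneg (γ 1 1 - γ 0 1)]
        · have : 0 < (γ 1 1 - γ 0 1)^2 := lt_of_le_of_ne (sq_nonneg _) (Ne.symm (pow_ne_zero 2 h))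
          nlinarith [sq_nonneg (γ 1 0 - γ 0 0)]
      have hr : 0 < Real.sqrt ((γ 1 0 - γ 0 0)^2 + (γ 1 1 - γ 0 1)^2) := Real.sqrt_pos.2 hpos
      have hr2 := Real.sq_sqrt hpos.le
      refine ⟨(γ 1 0 - γ 0 0) / Real.sqrt ((γ 1 0 - γ 0 0)^2 + (γ 1 1 - γ 0 1)^2),
        (γ 1 1 - γ 0 1) / Real.sqrt ((γ 1 0 - γ 0 0)^2 + (γ 1 1 - γ 0 1)^2), ?_, by ring⟩
      field_simp
      exact hr2.symm
  -- rotated coordinates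
  have hc0 : ContinuousOn (fun t => γ t 0) (Icc (0:ℝ) 1) := by
    have := (EuclideanSpace.proj (0 : Fin 2) (𝕜 := ℝ)).continuous.comp_continuousOn hcont
    simpa [Function.comp_def] using this
  have hc1 : ContinuousOn (fun t => γ t 1) (Icc (0:ℝ) 1) := by
    have := (EuclideanSpace.proj (1 : Fin 2) (𝕜 := ℝ)).continuous.comp_continuousOn hcont
    simpa [Function.comp_def] using this
  set x : ℝ → ℝ := fun t => A * γ t 0 + B * γ t 1 with hxd
  set y : ℝ → ℝ := fun t => -B * γ t 0 + A * γ t 1 with hyd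
  have hcx : ContinuousOn x (Icc (0:ℝ) 1) := by
    rw [hxd]; exact (hc0.const_smul A).add (hc1.const_smul B)
  have hcy : ContinuousOn y (Icc (0:ℝ) 1) := by
    rw [hyd]; exact (hc0.const_smul (-B)).add (hc1.const_smul A)
  have hy01 : y 0 = y 1 := by simp only [hyd]; linear_combination -hchord
  obtain ⟨tp, htp, hminx⟩ :=
    isCompact_Icc.exists_isMinOn (nonempty_Icc.mpr zero_le_one) hcx
  obtain ⟨tq, htq, hmaxx⟩ :=
    isCompact_Icc.exists_isMaxOn (nonempty_Icc.mpr zero_le_one) hcx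
  obtain ⟨tu, htu, hmaxy⟩ :=
    isCompact_Icc.exists_isMaxOn (nonempty_Icc.mpr zero_le_one) hcy
  obtain ⟨tv, htv, hminy⟩ :=
    isCompact_Icc.exists_isMinOn (nonempty_Icc.mpr zero_le_one) hcy
  have hxlo : ∀ t ∈ Icc (0:ℝ) 1, x tp ≤ x t := fun t ht => isMinOn_iff.mp hminx t ht
  have hxhi : ∀ t ∈ Icc (0:ℝ) 1, x t ≤ x tq := fun t ht => isMaxOn_iff.mp hmaxx t ht
  have hylo : ∀ t ∈ Icc (0:ℝ) 1, y tv ≤ y t := fun t ht => isMinOn_iff.mp hminy t ht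
  have hyhi : ∀ t ∈ Icc (0:ℝ) 1, y t ≤ y tu := fun t ht => isMaxOn_iff.mp hmaxy t ht
  -- the ℓ¹/ℓ² comparison
  have key : ∀ s t : ℝ, |x t - x s| + |y t - y s| ≤ Real.sqrt 2 * dist (γ s) (γ t) := by
    intro s t
    have hd : dist (γ s) (γ t) = Real.sqrt ((γ s 0 - γ t 0)^2 + (γ s 1 - γ t 1)^2) := by
      rw [EuclideanSpace.dist_eq, Fin.sum_univ_two]
      simp [Real.dist_eq, sq_abs]
    have h2 : (x t - x s)^2 + (y t - y s)^2 = (γ s 0 - γ t 0)^2 + (γ s 1 - γ t 1)^2 := by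
      simp only [hxd, hyd]
      linear_combination ((γ t 0 - γ s 0)^2 + (γ t 1 - γ s 1)^2) * hAB
    calc |x t - x s| + |y t - y s|
        ≤ Real.sqrt 2 * Real.sqrt ((x t - x s)^2 + (y t - y s)^2) := l1l2 _ _
      _ = Real.sqrt 2 * dist (γ s) (γ t) := by rw [h2, hd]
  -- main estimate
  have main : (x tq - x tp) + 2 * (y tu - y tv)
      ≤ Real.sqrt 2 * (eVariationOn γ (Set.Icc 0 1)).toReal := by
    rcases le_total tp tq with hpq | hqp <;> rcases le_total tu tv with huv | hvu
    · exact core γ hfin x y key (x tp) (x tq) (y tv) (y tu) tp tq tu tv htp htq htu htv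
        hpq huv rfl rfl rfl rfl hy01
    · set Y : ℝ → ℝ := fun s => y tv + y tu - y s with hYd
      have keyY : ∀ s t : ℝ, |x t - x s| + |Y t - Y s| ≤ Real.sqrt 2 * dist (γ s) (γ t) := by
        intro s t
        have e : Y t - Y s = -(y t - y s) := by simp only [hYd]; ring
        rw [e, abs_neg]; exact key s t
      exact core γ hfin x Y keyY (x tp) (x tq) (y tv) (y tu) tp tq tv tu htp htq htv htu
        hpq hvu rfl rfl (by simp only [hYd]; ring) (by simp only [hYd]; ring)
        (by simp only [hYd, hy01])
    · set X : ℝ → ℝ := fun s => x tp + x tq - x s with hXd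
      have keyX : ∀ s t : ℝ, |X t - X s| + |y t - y s| ≤ Real.sqrt 2 * dist (γ s) (γ t) := by
        intro s t
        have e : X t - X s = -(x t - x s) := by simp only [hXd]; ring
        rw [e, abs_neg]; exact key s t
      exact core γ hfin X y keyX (x tp) (x tq) (y tv) (y tu) tq tp tu tv htq htp htu htv
        hqp huv (by simp only [hXd]; ring) (by simp only [hXd]; ring) rfl rfl hy01
    · set X : ℝ → ℝ := fun s => x tp + x tq - x s with hXd
      set Y : ℝ → ℝ := fun s => y tv + y tu - y s with hYd
      have keyXY : ∀ s t : ℝ, |X t - X s| + |Y t - Y s| ≤ Real.sqrt 2 * dist (γ s) (γ t) := by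
        intro s t
        have e : X t - X s = -(x t - x s) := by simp only [hXd]; ring
        have e' : Y t - Y s = -(y t - y s) := by simp only [hYd]; ring
        rw [e, e', abs_neg, abs_neg]; exact key s t
      exact core γ hfin X Y keyXY (x tp) (x tq) (y tv) (y tu) tq tp tv tu htq htp htv htu
        hqp hvu (by simp only [hXd]; ring) (by simp only [hXd]; ring)
        (by simp only [hYd]; ring) (by simp only [hYd]; ring) (by simp only [hYd, hy01])
  rw [hL]
  rcases le_total (y tu - y tv) (x tq - x tp) with hbr | hbr
  · -- rectangle with long side along the rotated x-axis
    refine ⟨x tq - x tp, y tu - y tv, _,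
      fun p : EuclideanSpace ℝ (Fin 2) =>
        ((WithLp.equiv 2 (Fin 2 → ℝ)).symm
          ![A * p 0 + (-B) * p 1 + (A * x tp - B * y tv),
            B * p 0 + A * p 1 + (B * x tp + A * y tv)] : EuclideanSpace ℝ (Fin 2)),
      sub_nonneg.mpr (hylo tu htu), hbr,
      isom2 A (-B) B A _ _ (by linarith) (by linear_combination hAB) (by ring), rfl, ?_, main⟩
    rintro _ ⟨t, ht, rfl⟩
    refine ⟨(WithLp.equiv 2 (Fin 2 → ℝ)).symm ![x t - x tp, y t - y tv], ?_, ?_⟩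
    · constructor
      · simp only [WithLp.equiv_symm_apply, PiLp.toLp_apply, WithLp.ofLp_toLp, Matrix.cons_val_zero]
        exact Set.mem_Icc.mpr ⟨sub_nonneg.mpr (hxlo t ht), sub_le_sub_right (hxhi t ht) _⟩
      · simp only [WithLp.equiv_symm_apply, PiLp.toLp_apply, WithLp.ofLp_toLp, Matrix.cons_val_one, Matrix.head_cons]
        exact Set.mem_Icc.mpr ⟨sub_nonneg.mpr (hylo t ht), sub_le_sub_right (hyhi t ht) _⟩
    · ext i
      fin_cases i <;>
        simp only [hxd, hyd, WithLp.equiv_symm_apply, PiLp.toLp_apply, WithLp.ofLp_toLp, Fin.zero_eta, Fin.mk_one,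
          Matrix.cons_val_zero, Matrix.cons_val_one, Matrix.head_cons, Fin.isValue]
      · linear_combination (γ t 0) * hAB
      · linear_combination (γ t 1) * hAB
  · -- rectangle with long side along the rotated y-axis
    refine ⟨y tu - y tv, x tq - x tp, _,
      fun p : EuclideanSpace ℝ (Fin 2) =>
        ((WithLp.equiv 2 (Fin 2 → ℝ)).symm
          ![(-B) * p 0 + A * p 1 + (A * x tp - B * y tv),
            A * p 0 + B * p 1 + (B * x tp + A * y tv)] : EuclideanSpace ℝ (Fin 2)),
      sub_nonneg.mpr (hxlo tq htq), hbr,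
      isom2 (-B) A A B _ _ (by linear_combination hAB) (by linarith) (by ring), rfl, ?_,
      by linarith⟩
    rintro _ ⟨t, ht, rfl⟩
    refine ⟨(WithLp.equiv 2 (Fin 2 → ℝ)).symm ![y t - y tv, x t - x tp], ?_, ?_⟩
    · constructor
      · simp only [WithLp.equiv_symm_apply, PiLp.toLp_apply, WithLp.ofLp_toLp, Matrix.cons_val_zero]
        exact Set.mem_Icc.mpr ⟨sub_nonneg.mpr (hylo t ht), sub_le_sub_right (hyhi t ht) _⟩
      · simp only [WithLp.equiv_symm_apply, PiLp.toLp_apply, WithLp.ofLp_toLp, Matrix.cons_val_one, Matrix.head_cons]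
        exact Set.mem_Icc.mpr ⟨sub_nonneg.mpr (hxlo t ht), sub_le_sub_right (hxhi t ht) _⟩
    · ext i
      fin_cases i <;>
        simp only [hxd, hyd, WithLp.equiv_symm_apply, PiLp.toLp_apply, WithLp.ofLp_toLp, Fin.zero_eta, Fin.mk_one,
          Matrix.cons_val_zero, Matrix.cons_val_one, Matrix.head_cons, Fin.isValue]
      · linear_combination (γ t 0) * hAB
      · linear_combination (γ t 1) * hAB
end

section
/- Let γ : [0,1] → ℝ² be a curve of finite length L whose endpoints a = γ(0) and b = γ(1) have equal y-coordinates. Let w = sup{x(p) : p ∈ im γ} − inf{x(p) : p ∈ im γ} and h = sup{y(p) : p ∈ im γ} − inf{y(p) : p ∈ im γ} be the width and height of the axis-aligned bounding box of the image of γ. Then w + 2h ≤ √2 · L. -/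
open Set

lemma aux_l1_le (p q : EuclideanSpace ℝ (Fin 2)) :
    |p 0 - q 0| + |p 1 - q 1| ≤ Real.sqrt 2 * dist p q := by
  have hd : dist p q = Real.sqrt (dist (p 0) (q 0) ^ 2 + dist (p 1) (q 1) ^ 2) := by
    rw [EuclideanSpace.dist_eq, Fin.sum_univ_two]
  rw [hd, Real.dist_eq, Real.dist_eq]
  set a := |p 0 - q 0|; set b := |p 1 - q 1|
  have ha : 0 ≤ a := abs_nonneg _
  have hb : 0 ≤ b := abs_nonneg _
  have h1 : a + b = Real.sqrt ((a + b) ^ 2) := (Real.sqrt_sq (by linarith)).symm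
  rw [h1, ← Real.sqrt_mul (by norm_num : (0:ℝ) ≤ 2)]
  exact Real.sqrt_le_sqrt (by nlinarith [sq_nonneg (a - b)])

lemma aux_chain (f : ℕ → ℝ) {j k : ℕ} (h : j ≤ k) :
    |f k - f j| ≤ ∑ i ∈ Finset.Ico j k, |f (i + 1) - f i| := by
  have : ∑ i ∈ Finset.Ico j k, (f (i + 1) - f i) = f k - f j := by
    rw [Finset.sum_Ico_eq_sub _ h, Finset.sum_range_sub, Finset.sum_range_sub]
    ring
  calc |f k - f j| = |∑ i ∈ Finset.Ico j k, (f (i + 1) - f i)| := by rw [this]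
    _ ≤ _ := Finset.abs_sum_le_sum_abs _ _

lemma aux_sort (T : Finset ℝ) (hT : ∀ t ∈ T, t ∈ Icc (0:ℝ) 1) :
    ∃ (u : ℕ → ℝ) (N : ℕ), Monotone u ∧ (∀ i, u i ∈ Icc (0:ℝ) 1) ∧
      (∀ t ∈ T, ∃ i, i < N ∧ u i = t) ∧
      (∀ i j, i < N → j < N → u i ≤ u j → i ≤ j) := by
  classical
  set l := T.sort (· ≤ ·) with hl
  have hsort : List.Pairwise (· < ·) l := (Finset.sortedLT_sort T).pairwise
  have hstrict : ∀ i j : ℕ, (hi : i < l.length) → (hj : j < l.length) → i < j →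
      l.getD i 1 < l.getD j 1 := by
    intro i j hi hj hij
    rw [List.getD_eq_getElem _ _ hi, List.getD_eq_getElem _ _ hj]
    exact hsort.rel_get_of_lt (a := ⟨i, hi⟩) (b := ⟨j, hj⟩) hij
  have hmem : ∀ i : ℕ, l.getD i 1 ∈ Icc (0:ℝ) 1 := by
    intro i
    rcases lt_or_ge i l.length with hi | hi
    · rw [List.getD_eq_getElem _ _ hi]
      exact hT _ ((Finset.mem_sort _).mp (List.getElem_mem _))
    · rw [List.getD_eq_default _ _ hi]; exact ⟨zero_le_one, le_refl 1⟩
  refine ⟨fun i => l.getD i 1, l.length, ?_, hmem, ?_, ?_⟩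
  · intro i j hij
    rcases eq_or_lt_of_le hij with rfl | hij; · exact le_rfl
    rcases lt_or_ge j l.length with hj | hj
    · exact (hstrict i j (hij.trans hj) hj hij).le
    · show l.getD i 1 ≤ l.getD j 1
      rw [List.getD_eq_default _ _ hj]; exact (hmem i).2
  · intro t ht
    have : t ∈ l := (Finset.mem_sort _).mpr ht
    obtain ⟨n, hn⟩ := List.mem_iff_get.mp this
    refine ⟨n, n.isLt, ?_⟩
    show l.getD n 1 = t
    rw [List.getD_eq_getElem _ _ n.isLt]; exact hn
  · intro i j hi hj hle
    by_contra hc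
    exact absurd hle (not_le.mpr (hstrict j i hj hi (not_le.mp hc)))


/-- For a curve `γ : [0,1] → ℝ²` of finite length `L` whose endpoints have
equal `y`-coordinates, the width `w` and height `h` of the axis-aligned bounding box of the
image of `γ` satisfy `w + 2h ≤ √2 · L`. -/
theorem stmt_1 (γ : ℝ → EuclideanSpace ℝ (Fin 2)) (L w h : ℝ)
    (hcont : ContinuousOn γ (Set.Icc 0 1))
    (hfin : eVariationOn γ (Set.Icc 0 1) ≠ ⊤)
    (hL : L = (eVariationOn γ (Set.Icc 0 1)).toReal)
    (hend : γ 0 1 = γ 1 1)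
    (hw : w = sSup ((fun t => γ t 0) '' Set.Icc 0 1) - sInf ((fun t => γ t 0) '' Set.Icc 0 1))
    (hh : h = sSup ((fun t => γ t 1) '' Set.Icc 0 1) - sInf ((fun t => γ t 1) '' Set.Icc 0 1)) :
    w + 2 * h ≤ Real.sqrt 2 * L := by
  classical
  set x : ℝ → ℝ := fun t => γ t 0 with hxdef
  set y : ℝ → ℝ := fun t => γ t 1 with hydef
  have hIcc : (0:ℝ) ∈ Icc (0:ℝ) 1 := by norm_num
  have h1Icc : (1:ℝ) ∈ Icc (0:ℝ) 1 := by norm_num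
  have hxc : ContinuousOn x (Icc 0 1) := (PiLp.continuous_apply 2 (fun _ : Fin 2 => ℝ) (0 : Fin 2)).comp_continuousOn hcont
  have hyc : ContinuousOn y (Icc 0 1) := (PiLp.continuous_apply 2 (fun _ : Fin 2 => ℝ) (1 : Fin 2)).comp_continuousOn hcont
  obtain ⟨ta, hta, hxmax⟩ := isCompact_Icc.exists_isMaxOn ⟨0, hIcc⟩ hxc
  obtain ⟨tb, htb, hxmin⟩ := isCompact_Icc.exists_isMinOn ⟨0, hIcc⟩ hxc
  obtain ⟨tc, htc, hymax⟩ := isCompact_Icc.exists_isMaxOn ⟨0, hIcc⟩ hyc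
  obtain ⟨td, htd, hymin⟩ := isCompact_Icc.exists_isMinOn ⟨0, hIcc⟩ hyc
  have hwv : w = x ta - x tb := by
    rw [hw]
    congr 1
    · exact IsGreatest.csSup_eq ⟨mem_image_of_mem _ hta, fun v ⟨t, ht, hv⟩ => hv ▸ hxmax ht⟩
    · exact IsLeast.csInf_eq ⟨mem_image_of_mem _ htb, fun v ⟨t, ht, hv⟩ => hv ▸ hxmin ht⟩
  have hhv : h = y tc - y td := by
    rw [hh]
    congr 1
    · exact IsGreatest.csSup_eq ⟨mem_image_of_mem _ htc, fun v ⟨t, ht, hv⟩ => hv ▸ hymax ht⟩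
    · exact IsLeast.csInf_eq ⟨mem_image_of_mem _ htd, fun v ⟨t, ht, hv⟩ => hv ▸ hymin ht⟩
  -- sorted partition
  set T : Finset ℝ := {0, ta, tb, tc, td, 1} with hT
  have hTmem : ∀ t ∈ T, t ∈ Icc (0:ℝ) 1 := by
    intro t ht
    simp only [hT, Finset.mem_insert, Finset.mem_singleton] at ht
    rcases ht with rfl | rfl | rfl | rfl | rfl | rfl
    exacts [hIcc, hta, htb, htc, htd, h1Icc]
  obtain ⟨u, N, humono, humem, huidx, huord⟩ := aux_sort T hTmem
  obtain ⟨i0, hi0N, hi0⟩ := huidx 0 (by simp [hT])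
  obtain ⟨ja, hjaN, hja⟩ := huidx ta (by simp [hT])
  obtain ⟨jb, hjbN, hjb⟩ := huidx tb (by simp [hT])
  obtain ⟨jc, hjcN, hjc⟩ := huidx tc (by simp [hT])
  obtain ⟨jd, hjdN, hjd⟩ := huidx td (by simp [hT])
  obtain ⟨i1, hi1N, hi1⟩ := huidx 1 (by simp [hT])
  have hle_i0 : ∀ j, j < N → i0 ≤ j := fun j hj =>
    huord i0 j hi0N hj (by rw [hi0]; exact (humem j).1)
  have hle_i1 : ∀ j, j < N → j ≤ i1 := fun j hj =>
    huord j i1 hj hi1N (by rw [hi1]; exact (humem j).2)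
  -- sums
  set Sx : ℝ := ∑ i ∈ Finset.range i1, |x (u (i+1)) - x (u i)| with hSx
  set Sy : ℝ := ∑ i ∈ Finset.range i1, |y (u (i+1)) - y (u i)| with hSy
  set S : ℝ := ∑ i ∈ Finset.range i1, dist (γ (u (i+1))) (γ (u i)) with hS
  have hIcoSub : ∀ p q : ℕ, q ≤ i1 → Finset.Ico p q ⊆ Finset.range i1 := by
    intro p q hq i hi
    rw [Finset.mem_Ico] at hi
    exact Finset.mem_range.mpr (lt_of_lt_of_le hi.2 hq)
  have habs_nonneg : ∀ (f : ℝ → ℝ) (i : ℕ), i ∈ Finset.range i1 → (0:ℝ) ≤ |f (u (i+1)) - f (u i)| :=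
    fun f i _ => abs_nonneg _
  -- chain bounds for x
  have hchainx : ∀ p q : ℕ, p ≤ q → q ≤ i1 →
      |x (u q) - x (u p)| ≤ Sx := by
    intro p q hpq hq
    calc |x (u q) - x (u p)| ≤ ∑ i ∈ Finset.Ico p q, |x (u (i+1)) - x (u i)| :=
          aux_chain (fun i => x (u i)) hpq
      _ ≤ Sx := Finset.sum_le_sum_of_subset_of_nonneg (hIcoSub p q hq) (fun i hi _ => abs_nonneg _)
  -- w ≤ Sx
  have hwSx : w ≤ Sx := by
    rcases le_total ja jb with hab | hab
    · have := hchainx ja jb hab (hle_i1 jb hjbN)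
      rw [hja, hjb] at this
      calc w = x ta - x tb := hwv
        _ ≤ |x tb - x ta| := by rw [abs_sub_comm]; exact le_abs_self _
        _ ≤ Sx := this
    · have := hchainx jb ja hab (hle_i1 ja hjaN)
      rw [hja, hjb] at this
      calc w = x ta - x tb := hwv
        _ ≤ |x ta - x tb| := le_abs_self _
        _ ≤ Sx := this
  -- 2h ≤ Sy
  have hychain : ∀ p q : ℕ, i0 ≤ p → p ≤ q → q ≤ i1 →
      |y (u p) - γ 0 1| + |y (u q) - y (u p)| + |γ 0 1 - y (u q)| ≤ Sy := by
    intro p q h0p hpq hq1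
    have e1 : |y (u p) - γ 0 1| ≤ ∑ i ∈ Finset.Ico i0 p, |y (u (i+1)) - y (u i)| := by
      have := aux_chain (fun i => y (u i)) h0p
      rw [hi0] at this
      exact this
    have e2 : |y (u q) - y (u p)| ≤ ∑ i ∈ Finset.Ico p q, |y (u (i+1)) - y (u i)| :=
      aux_chain (fun i => y (u i)) hpq
    have e3 : |γ 0 1 - y (u q)| ≤ ∑ i ∈ Finset.Ico q i1, |y (u (i+1)) - y (u i)| := by
      have := aux_chain (fun i => y (u i)) hq1
      rw [hi1] at this
      have hy01 : y (1:ℝ) = γ 0 1 := hend.symm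
      rwa [hy01] at this
    have hsplit : ∑ i ∈ Finset.Ico i0 p, |y (u (i+1)) - y (u i)|
        + ∑ i ∈ Finset.Ico p q, |y (u (i+1)) - y (u i)|
        + ∑ i ∈ Finset.Ico q i1, |y (u (i+1)) - y (u i)|
        = ∑ i ∈ Finset.Ico i0 i1, |y (u (i+1)) - y (u i)| := by
      rw [Finset.sum_Ico_consecutive _ h0p hpq, Finset.sum_Ico_consecutive _ (h0p.trans hpq) hq1]
    have hfull : ∑ i ∈ Finset.Ico i0 i1, |y (u (i+1)) - y (u i)| ≤ Sy :=
      Finset.sum_le_sum_of_subset_of_nonneg (hIcoSub i0 i1 le_rfl) (fun i hi _ => abs_nonneg _)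
    linarith
  have hhSy : 2 * h ≤ Sy := by
    have hMm : y td ≤ γ 0 1 ∧ γ 0 1 ≤ y tc := ⟨hymin hIcc, hymax hIcc⟩
    rcases le_total jc jd with hcd | hcd
    · have := hychain jc jd (hle_i0 jc hjcN) hcd (hle_i1 jd hjdN)
      rw [hjc, hjd] at this
      have a1 : y tc - γ 0 1 ≤ |y tc - γ 0 1| := le_abs_self _
      have a2 : y tc - y td ≤ |y td - y tc| := by rw [abs_sub_comm]; exact le_abs_self _
      have a3 : γ 0 1 - y td ≤ |γ 0 1 - y td| := le_abs_self _
      rw [hhv]; linarith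
    · have := hychain jd jc (hle_i0 jd hjdN) hcd (hle_i1 jc hjcN)
      rw [hjc, hjd] at this
      have a1 : γ 0 1 - y td ≤ |y td - γ 0 1| := by rw [abs_sub_comm]; exact le_abs_self _
      have a2 : y tc - y td ≤ |y tc - y td| := le_abs_self _
      have a3 : y tc - γ 0 1 ≤ |γ 0 1 - y tc| := by rw [abs_sub_comm]; exact le_abs_self _
      rw [hhv]; linarith
  -- Sx + Sy ≤ √2 * S
  have hSxSy : Sx + Sy ≤ Real.sqrt 2 * S := by
    rw [hSx, hSy, hS, Finset.mul_sum, ← Finset.sum_add_distrib]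
    exact Finset.sum_le_sum fun i _ => aux_l1_le (γ (u (i+1))) (γ (u i))
  -- S ≤ L
  have hSL : S ≤ L := by
    have hvar := eVariationOn.sum_le (f := γ) (n := i1) humono humem
    have hfin' : (∑ i ∈ Finset.range i1, edist (γ (u (i+1))) (γ (u i))) ≠ ⊤ := by
      exact ne_top_of_le_ne_top hfin hvar
    have : S = (∑ i ∈ Finset.range i1, edist (γ (u (i+1))) (γ (u i))).toReal := by
      rw [ENNReal.toReal_sum (fun i _ => edist_ne_top _ _)]
      exact Finset.sum_congr rfl fun i _ => dist_edist _ _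
    rw [this, hL]
    exact ENNReal.toReal_mono hfin hvar
  have hsqrt2 : (0:ℝ) ≤ Real.sqrt 2 := Real.sqrt_nonneg 2
  calc w + 2 * h ≤ Sx + Sy := add_le_add hwSx hhSy
    _ ≤ Real.sqrt 2 * S := hSxSy
    _ ≤ Real.sqrt 2 * L := mul_le_mul_of_nonneg_left hSL hsqrt2
end

section
/- Let γ be the polygonal path in ℝ² consisting of the two unit segments from a = (1,0) to c = (0,0) and from c to b = (0,1), i.e., the set [a,c] ∪ [c,b] (a curve of length 2 forming the two legs of an isosceles right triangle). Then every rectangle Q with side lengths w and h containing γ satisfies per(Q) − long(Q) = max(w,h) + 2·min(w,h) ≥ 2√2; that is, the bound per(Q) − long(Q) ≤ √2 · len(γ) is attained and cannot be improved. -/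
open Set

/-- Squared distance in the Euclidean plane in coordinates. -/
lemma stmt2_dist_sq (x y : EuclideanSpace ℝ (Fin 2)) :
    dist x y ^ 2 = (x 0 - y 0) ^ 2 + (x 1 - y 1) ^ 2 := by
  rw [EuclideanSpace.dist_eq, Real.sq_sqrt (by positivity)]
  simp [Fin.sum_univ_two, Real.dist_eq, sq_abs]

/-- Tightness of the bound in Lemma 3: for the polygonal path
`γ = [a,c] ∪ [c,b]` with `a = (1,0)`, `c = (0,0)`, `b = (0,1)` (two unit legs of an isosceles
right triangle, so of length `2`), every rectangle with side lengths `w, h` containing `γ`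
satisfies `max(w,h) + 2·min(w,h) ≥ 2√2 = √2 · len(γ)`. -/
theorem stmt_2 (w h : ℝ) (hw : 0 ≤ w) (hh : 0 ≤ h)
    (Q : Set (EuclideanSpace ℝ (Fin 2)))
    (f : EuclideanSpace ℝ (Fin 2) → EuclideanSpace ℝ (Fin 2))
    (hf : Isometry f)
    (hQ : Q = f '' {p : EuclideanSpace ℝ (Fin 2) | p 0 ∈ Set.Icc 0 w ∧ p 1 ∈ Set.Icc 0 h})
    (hsub : segment ℝ (!₂[1, 0] : EuclideanSpace ℝ (Fin 2)) !₂[0, 0] ∪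
        segment ℝ (!₂[0, 0] : EuclideanSpace ℝ (Fin 2)) !₂[0, 1] ⊆ Q) :
    max w h + 2 * min w h ≥ 2 * Real.sqrt 2 := by
  have ha : (!₂[1, 0] : EuclideanSpace ℝ (Fin 2)) ∈ Q :=
    hsub (Or.inl (left_mem_segment ℝ _ _))
  have hc : (!₂[0, 0] : EuclideanSpace ℝ (Fin 2)) ∈ Q :=
    hsub (Or.inl (right_mem_segment ℝ _ _))
  have hb : (!₂[0, 1] : EuclideanSpace ℝ (Fin 2)) ∈ Q :=
    hsub (Or.inr (right_mem_segment ℝ _ _))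
  rw [hQ] at ha hb hc
  obtain ⟨A, hAmem, hfA⟩ := ha
  obtain ⟨B, hBmem, hfB⟩ := hb
  obtain ⟨C, hCmem, hfC⟩ := hc
  obtain ⟨⟨hA00, hA0w⟩, hA10, hA1h⟩ :
      (0 ≤ A 0 ∧ A 0 ≤ w) ∧ 0 ≤ A 1 ∧ A 1 ≤ h := hAmem
  obtain ⟨⟨hB00, hB0w⟩, hB10, hB1h⟩ :
      (0 ≤ B 0 ∧ B 0 ≤ w) ∧ 0 ≤ B 1 ∧ B 1 ≤ h := hBmem
  obtain ⟨⟨hC00, hC0w⟩, hC10, hC1h⟩ :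
      (0 ≤ C 0 ∧ C 0 ≤ w) ∧ 0 ≤ C 1 ∧ C 1 ≤ h := hCmem
  -- distances between preimage points
  have dAC : dist A C = 1 := by
    rw [← hf.dist_eq A C, hfA, hfC, EuclideanSpace.dist_eq]
    norm_num [Fin.sum_univ_two, Real.dist_eq, Matrix.cons_val_zero, Matrix.cons_val_one,
      Matrix.head_cons]
  have dBC : dist B C = 1 := by
    rw [← hf.dist_eq B C, hfB, hfC, EuclideanSpace.dist_eq]
    norm_num [Fin.sum_univ_two, Real.dist_eq, Matrix.cons_val_zero, Matrix.cons_val_one,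
      Matrix.head_cons]
  have dAB : dist A B = Real.sqrt 2 := by
    rw [← hf.dist_eq A B, hfA, hfB, EuclideanSpace.dist_eq]
    norm_num [Fin.sum_univ_two, Real.dist_eq, Matrix.cons_val_zero, Matrix.cons_val_one,
      Matrix.head_cons]
  obtain ⟨u1, hu1def⟩ : ∃ x : ℝ, x = A 0 - C 0 := ⟨_, rfl⟩
  obtain ⟨u2, hu2def⟩ : ∃ x : ℝ, x = A 1 - C 1 := ⟨_, rfl⟩
  obtain ⟨v1, hv1def⟩ : ∃ x : ℝ, x = B 0 - C 0 := ⟨_, rfl⟩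
  obtain ⟨v2, hv2def⟩ : ∃ x : ℝ, x = B 1 - C 1 := ⟨_, rfl⟩
  have hu : u1 ^ 2 + u2 ^ 2 = 1 := by
    have h1 := stmt2_dist_sq A C
    rw [dAC] at h1
    rw [hu1def, hu2def, ← h1]
    norm_num
  have hv : v1 ^ 2 + v2 ^ 2 = 1 := by
    have h1 := stmt2_dist_sq B C
    rw [dBC] at h1
    rw [hv1def, hv2def, ← h1]
    norm_num
  have hd : (u1 - v1) ^ 2 + (u2 - v2) ^ 2 = 2 := by
    have h1 := stmt2_dist_sq A B
    rw [dAB, Real.sq_sqrt (by norm_num : (2:ℝ) ≥ 0)] at h1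
    have e1 : u1 - v1 = A 0 - B 0 := by rw [hu1def, hv1def]; ring
    have e2 : u2 - v2 = A 1 - B 1 := by rw [hu2def, hv2def]; ring
    rw [e1, e2, ← h1]
  -- coordinate bounds
  have bu1 : -w ≤ u1 ∧ u1 ≤ w := ⟨by rw [hu1def]; linarith, by rw [hu1def]; linarith⟩
  have bv1 : -w ≤ v1 ∧ v1 ≤ w := ⟨by rw [hv1def]; linarith, by rw [hv1def]; linarith⟩
  have bu2 : -h ≤ u2 ∧ u2 ≤ h := ⟨by rw [hu2def]; linarith, by rw [hu2def]; linarith⟩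
  have bv2 : -h ≤ v2 ∧ v2 ≤ h := ⟨by rw [hv2def]; linarith, by rw [hv2def]; linarith⟩
  have bd1 : -w ≤ u1 - v1 ∧ u1 - v1 ≤ w :=
    ⟨by rw [hu1def, hv1def]; linarith, by rw [hu1def, hv1def]; linarith⟩
  have bd2 : -h ≤ u2 - v2 ∧ u2 - v2 ≤ h :=
    ⟨by rw [hu2def, hv2def]; linarith, by rw [hu2def, hv2def]; linarith⟩
  clear hu1def hu2def hv1def hv2def dAC dBC dAB
  clear hA00 hA0w hA10 hA1h hB00 hB0w hB10 hB1h hC00 hC0w hC10 hC1h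
  clear hQ hsub hfA hfB hfC hf A B C f Q
  -- orthogonality and row orthonormality
  have huv : u1 * v1 + u2 * v2 = 0 := by linear_combination (hu + hv - hd) / 2
  have hsq : (u1 * v1) ^ 2 = (u2 * v2) ^ 2 := by
    linear_combination (u1 * v1 - u2 * v2) * huv
  have hrow : u1 ^ 2 + v1 ^ 2 = 1 := by
    linear_combination hsq + v2 ^ 2 * hu + (1 - u1 ^ 2) * hv
  have hrow2 : u2 ^ 2 + v2 ^ 2 = 1 := by linarith
  have key1 : (u1 + v1) ^ 2 = (u2 - v2) ^ 2 := by
    linear_combination hrow - hrow2 + 2 * huv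
  have key2 : (u2 + v2) ^ 2 = (u1 - v1) ^ 2 := by
    linear_combination hrow2 - hrow + 2 * huv
  obtain ⟨P, hPdef⟩ : ∃ x : ℝ, x = |u1 - v1| := ⟨_, rfl⟩
  obtain ⟨q, hqdef⟩ : ∃ x : ℝ, x = |u2 - v2| := ⟨_, rfl⟩
  have hP0 : 0 ≤ P := hPdef ▸ abs_nonneg _
  have hq0 : 0 ≤ q := hqdef ▸ abs_nonneg _
  have hPw : P ≤ w := by
    rw [hPdef]; exact abs_le.2 bd1
  have hqh : q ≤ h := by
    rw [hqdef]; exact abs_le.2 bd2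
  have hsum : P ^ 2 + q ^ 2 = 2 := by rw [hPdef, hqdef, sq_abs, sq_abs]; exact hd
  have habs1 : |u1 + v1| = q := by
    rw [hqdef, ← Real.sqrt_sq_eq_abs, ← Real.sqrt_sq_eq_abs, key1]
  have habs2 : |u2 + v2| = P := by
    rw [hPdef, ← Real.sqrt_sq_eq_abs, ← Real.sqrt_sq_eq_abs, key2]
  have h2w : P + q ≤ 2 * w := by
    rw [← habs1, hPdef]
    rcases abs_cases (u1 - v1) with ⟨e1, _⟩ | ⟨e1, _⟩ <;>
      rcases abs_cases (u1 + v1) with ⟨e2, _⟩ | ⟨e2, _⟩ <;>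
      rw [e1, e2] <;> linarith [bu1.1, bu1.2, bv1.1, bv1.2]
  have h2h : P + q ≤ 2 * h := by
    rw [← habs2, hqdef]
    rcases abs_cases (u2 - v2) with ⟨e1, _⟩ | ⟨e1, _⟩ <;>
      rcases abs_cases (u2 + v2) with ⟨e2, _⟩ | ⟨e2, _⟩ <;>
      rw [e1, e2] <;> linarith [bu2.1, bu2.2, bv2.1, bv2.2]
  clear hPdef hqdef habs1 habs2 hu hv hd huv hsq hrow hrow2 key1 key2
  clear bu1 bu2 bv1 bv2 bd1 bd2 u1 u2 v1 v2
  -- the numeric part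
  obtain ⟨s, hsdef⟩ : ∃ x : ℝ, x = Real.sqrt 2 := ⟨_, rfl⟩
  rw [← hsdef]
  have hs0 : 0 ≤ s := hsdef ▸ Real.sqrt_nonneg 2
  have hs2 : s ^ 2 = 2 := hsdef ▸ Real.sq_sqrt (by norm_num)
  clear hsdef
  have hs32 : s ≤ 3 / 2 := by nlinarith
  rcases le_total h w with hwh | hwh
  · rw [max_eq_left hwh, min_eq_right hwh]
    rcases le_total q P with hcc | hcc
    · -- w + 2h ≥ 2P + q ≥ 2√2
      have h8 : (2 * P + q) ^ 2 ≥ 8 := by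
        nlinarith [mul_nonneg hq0 (by linarith : (0:ℝ) ≤ 4 * P - 3 * q)]
      have hX : 2 * P + q ≤ w + 2 * h := by linarith
      nlinarith [h8, hs2, hs0, hP0, hq0, mul_nonneg hs0 (by linarith : (0:ℝ) ≤ 2 * P + q)]
    · -- h ≥ q ≥ 1, so w + 2h ≥ 3 ≥ 2√2
      have hq1 : 1 ≤ q := by nlinarith
      linarith
  · rw [max_eq_right hwh, min_eq_left hwh]
    rcases le_total P q with hcc | hcc
    · have h8 : (2 * q + P) ^ 2 ≥ 8 := by
        nlinarith [mul_nonneg hP0 (by linarith : (0:ℝ) ≤ 4 * q - 3 * P)]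
      have hX : 2 * q + P ≤ h + 2 * w := by linarith
      nlinarith [h8, hs2, hs0, hP0, hq0, mul_nonneg hs0 (by linarith : (0:ℝ) ≤ 2 * q + P)]
    · have hP1 : 1 ≤ P := by nlinarith
      linarith
end

section
/- Let γ : [0,1] → ℝ² be a curve of finite length L. Then there exists a rectangle Q containing the image of γ with perimeter per(Q) ≤ √5 · L. -/
open Set Finset

private lemma cs2 (a b x y : ℝ) :
    a * x + b * y ≤ Real.sqrt (a ^ 2 + b ^ 2) * Real.sqrt (x ^ 2 + y ^ 2) := by
  have h1 : (a * x + b * y) ^ 2 ≤ (a ^ 2 + b ^ 2) * (x ^ 2 + y ^ 2) := by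
    nlinarith [sq_nonneg (a * y - b * x)]
  have h2 : Real.sqrt (a ^ 2 + b ^ 2) * Real.sqrt (x ^ 2 + y ^ 2)
      = Real.sqrt ((a ^ 2 + b ^ 2) * (x ^ 2 + y ^ 2)) := (Real.sqrt_mul (by positivity) _).symm
  rcases le_total (a * x + b * y) 0 with h | h
  · exact h.trans (by positivity)
  · rw [h2]
    exact (Real.le_sqrt h (by positivity)).mpr h1

private lemma mink2 (a b x y : ℝ) :
    Real.sqrt ((a + x) ^ 2 + (b + y) ^ 2) ≤ Real.sqrt (a ^ 2 + b ^ 2) + Real.sqrt (x ^ 2 + y ^ 2) := by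
  have hp := Real.sqrt_nonneg (a ^ 2 + b ^ 2)
  have hq := Real.sqrt_nonneg (x ^ 2 + y ^ 2)
  have hp2 : (Real.sqrt (a ^ 2 + b ^ 2)) ^ 2 = a ^ 2 + b ^ 2 := Real.sq_sqrt (by positivity)
  have hq2 : (Real.sqrt (x ^ 2 + y ^ 2)) ^ 2 = x ^ 2 + y ^ 2 := Real.sq_sqrt (by positivity)
  have hcs := cs2 a b x y
  have key : (a + x) ^ 2 + (b + y) ^ 2
      ≤ (Real.sqrt (a ^ 2 + b ^ 2) + Real.sqrt (x ^ 2 + y ^ 2)) ^ 2 := by nlinarith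
  calc Real.sqrt ((a + x) ^ 2 + (b + y) ^ 2)
      ≤ Real.sqrt ((Real.sqrt (a ^ 2 + b ^ 2) + Real.sqrt (x ^ 2 + y ^ 2)) ^ 2) :=
        Real.sqrt_le_sqrt key
    _ = _ := Real.sqrt_sq (by positivity)

private lemma mink_sum (F G : ℕ → ℝ) : ∀ n : ℕ,
    Real.sqrt ((∑ i ∈ range n, |F i|) ^ 2 + (∑ i ∈ range n, |G i|) ^ 2)
      ≤ ∑ i ∈ range n, Real.sqrt ((F i) ^ 2 + (G i) ^ 2) := by
  intro n
  induction n with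
  | zero => simp
  | succ n ih =>
    rw [Finset.sum_range_succ, Finset.sum_range_succ, Finset.sum_range_succ]
    calc Real.sqrt ((∑ i ∈ range n, |F i| + |F n|) ^ 2 + (∑ i ∈ range n, |G i| + |G n|) ^ 2)
        ≤ Real.sqrt ((∑ i ∈ range n, |F i|) ^ 2 + (∑ i ∈ range n, |G i|) ^ 2)
          + Real.sqrt (|F n| ^ 2 + |G n| ^ 2) := mink2 _ _ _ _
      _ ≤ _ := by rw [sq_abs, sq_abs]; exact add_le_add ih le_rfl

private lemma tel (z : ℕ → ℝ) : ∀ a b : ℕ, a ≤ b →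
    |z b - z a| ≤ ∑ i ∈ Finset.Ico a b, |z (i + 1) - z i| := by
  intro a b h
  induction b, h using Nat.le_induction with
  | base => simp
  | succ n hn ih =>
    rw [Finset.sum_Ico_succ_top (by omega)]
    have h1 : |z (n + 1) - z a| ≤ |z n - z a| + |z (n + 1) - z n| := by
      have := abs_add_le (z n - z a) (z (n + 1) - z n)
      simpa [sub_add_sub_cancel'] using this
    linarith

private lemma merge4 {p₁ p₂ q₁ q₂ : ℝ} (hp : p₁ ≤ p₂) (hq : q₁ ≤ q₂) :
    ∃ a b c d : ℝ, a ≤ b ∧ b ≤ c ∧ c ≤ d ∧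
      (∀ x, (x = a ∨ x = b ∨ x = c ∨ x = d) ↔ (x = p₁ ∨ x = p₂ ∨ x = q₁ ∨ x = q₂)) := by
  rcases le_total p₁ q₁ with h1 | h1
  · rcases le_total p₂ q₁ with h2 | h2
    · exact ⟨p₁, p₂, q₁, q₂, hp, h2, hq, fun x => by tauto⟩
    · rcases le_total p₂ q₂ with h3 | h3
      · exact ⟨p₁, q₁, p₂, q₂, h1, h2, h3, fun x => by tauto⟩
      · exact ⟨p₁, q₁, q₂, p₂, h1, hq, h3, fun x => by tauto⟩
  · rcases le_total q₂ p₁ with h2 | h2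
    · exact ⟨q₁, q₂, p₁, p₂, hq, h2, hp, fun x => by tauto⟩
    · rcases le_total p₂ q₂ with h3 | h3
      · exact ⟨q₁, p₁, p₂, q₂, h1, hp, h3, fun x => by tauto⟩
      · exact ⟨q₁, p₁, q₂, p₂, h1, h2, h3, fun x => by tauto⟩

/-- Any curve `γ : [0,1] → ℝ²` of finite length `L` can be enclosed in a
rectangle `Q` (an isometric image of a box `[0,w] × [0,h]` with `w, h ≥ 0`) of perimeter
`per(Q) = 2(w + h) ≤ √5 · L`. -/
theorem stmt_3 (γ : ℝ → EuclideanSpace ℝ (Fin 2)) (L : ℝ)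
    (hcont : ContinuousOn γ (Set.Icc 0 1))
    (hfin : eVariationOn γ (Set.Icc 0 1) ≠ ⊤)
    (hL : L = (eVariationOn γ (Set.Icc 0 1)).toReal) :
    ∃ (w h : ℝ) (Q : Set (EuclideanSpace ℝ (Fin 2)))
      (f : EuclideanSpace ℝ (Fin 2) → EuclideanSpace ℝ (Fin 2)),
      0 ≤ w ∧ 0 ≤ h ∧ Isometry f ∧
      Q = f '' {p : EuclideanSpace ℝ (Fin 2) | p 0 ∈ Set.Icc 0 w ∧ p 1 ∈ Set.Icc 0 h} ∧
      γ '' Set.Icc 0 1 ⊆ Q ∧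
      2 * (w + h) ≤ Real.sqrt 5 * L := by
  classical
  have h0m : (0:ℝ) ∈ Icc (0:ℝ) 1 := by norm_num
  have h1m : (1:ℝ) ∈ Icc (0:ℝ) 1 := by norm_num
  -- the rotation coefficients
  obtain ⟨co, so, hcs, hrot⟩ : ∃ co so : ℝ, co ^ 2 + so ^ 2 = 1 ∧
      - so * (γ 1 0 - γ 0 0) + co * (γ 1 1 - γ 0 1) = 0 := by
    set dx := γ 1 0 - γ 0 0 with hdx
    set dy := γ 1 1 - γ 0 1 with hdy
    by_cases hz : dx ^ 2 + dy ^ 2 = 0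
    · refine ⟨1, 0, by norm_num, ?_⟩
      have hdy0 : dy = 0 := by nlinarith [sq_nonneg dx, sq_nonneg dy]
      rw [hdy0]; ring
    · have hpos : 0 < dx ^ 2 + dy ^ 2 := lt_of_le_of_ne (by positivity) (Ne.symm hz)
      have hdd : 0 < Real.sqrt (dx ^ 2 + dy ^ 2) := Real.sqrt_pos.mpr hpos
      have h2 : (Real.sqrt (dx ^ 2 + dy ^ 2)) ^ 2 = dx ^ 2 + dy ^ 2 :=
        Real.sq_sqrt (le_of_lt hpos)
      refine ⟨dx / Real.sqrt (dx ^ 2 + dy ^ 2), dy / Real.sqrt (dx ^ 2 + dy ^ 2), ?_, by ring⟩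
      rw [div_pow, div_pow, ← add_div, h2, div_self hz]
  set u : ℝ → ℝ := fun t => co * (γ t 0 - γ 0 0) + so * (γ t 1 - γ 0 1) with hu
  set v : ℝ → ℝ := fun t => - so * (γ t 0 - γ 0 0) + co * (γ t 1 - γ 0 1) with hv
  have hu0 : u 0 = 0 := by simp [hu]
  have hv0 : v 0 = 0 := by simp [hv]
  have hv1 : v 1 = 0 := by simp only [hv]; exact hrot
  -- continuity
  have hcont0 : ContinuousOn (fun t => γ t 0) (Icc (0:ℝ) 1) :=
    (EuclideanSpace.proj (0 : Fin 2)).continuous.comp_continuousOn hcont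
  have hcont1 : ContinuousOn (fun t => γ t 1) (Icc (0:ℝ) 1) :=
    (EuclideanSpace.proj (1 : Fin 2)).continuous.comp_continuousOn hcont
  have hcu : ContinuousOn u (Icc (0:ℝ) 1) := by
    rw [hu]
    exact (continuousOn_const.mul (hcont0.sub continuousOn_const)).add
      (continuousOn_const.mul (hcont1.sub continuousOn_const))
  have hcv : ContinuousOn v (Icc (0:ℝ) 1) := by
    rw [hv]
    exact (continuousOn_const.mul (hcont0.sub continuousOn_const)).add
      (continuousOn_const.mul (hcont1.sub continuousOn_const))
  -- extremizers
  obtain ⟨tr, htr, hmaxu'⟩ := isCompact_Icc.exists_isMaxOn ⟨0, h0m⟩ hcu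
  obtain ⟨tl, htl, hminu'⟩ := isCompact_Icc.exists_isMinOn ⟨0, h0m⟩ hcu
  obtain ⟨tt, htt, hmaxv'⟩ := isCompact_Icc.exists_isMaxOn ⟨0, h0m⟩ hcv
  obtain ⟨tb, htb, hminv'⟩ := isCompact_Icc.exists_isMinOn ⟨0, h0m⟩ hcv
  have hmaxu : ∀ t ∈ Icc (0:ℝ) 1, u t ≤ u tr := fun t ht => isMaxOn_iff.mp hmaxu' t ht
  have hminu : ∀ t ∈ Icc (0:ℝ) 1, u tl ≤ u t := fun t ht => isMinOn_iff.mp hminu' t ht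
  have hmaxv : ∀ t ∈ Icc (0:ℝ) 1, v t ≤ v tt := fun t ht => isMaxOn_iff.mp hmaxv' t ht
  have hminv : ∀ t ∈ Icc (0:ℝ) 1, v tb ≤ v t := fun t ht => isMinOn_iff.mp hminv' t ht
  -- sorted chain of the four extremal times
  obtain ⟨a, b, c, d, hab, hbc, hcd, hiff⟩ :
      ∃ a b c d : ℝ, a ≤ b ∧ b ≤ c ∧ c ≤ d ∧
        (∀ x, (x = a ∨ x = b ∨ x = c ∨ x = d) ↔ (x = tl ∨ x = tr ∨ x = tt ∨ x = tb)) := by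
    rcases le_total tl tr with h | h <;> rcases le_total tt tb with h' | h'
    · obtain ⟨a, b, c, d, h1, h2, h3, h4⟩ := merge4 h h'
      exact ⟨a, b, c, d, h1, h2, h3, fun x => by rw [h4]⟩
    · obtain ⟨a, b, c, d, h1, h2, h3, h4⟩ := merge4 h h'
      exact ⟨a, b, c, d, h1, h2, h3, fun x => by rw [h4]; tauto⟩
    · obtain ⟨a, b, c, d, h1, h2, h3, h4⟩ := merge4 h h'
      exact ⟨a, b, c, d, h1, h2, h3, fun x => by rw [h4]; tauto⟩
    · obtain ⟨a, b, c, d, h1, h2, h3, h4⟩ := merge4 h h'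
      exact ⟨a, b, c, d, h1, h2, h3, fun x => by rw [h4]; tauto⟩
  have hmem : ∀ x, (x = a ∨ x = b ∨ x = c ∨ x = d) → x ∈ Icc (0:ℝ) 1 := by
    intro x hx
    rcases (hiff x).mp hx with rfl | rfl | rfl | rfl
    exacts [htl, htr, htt, htb]
  set cc : ℕ → ℝ := fun n =>
    if n = 0 then 0 else if n = 1 then a else if n = 2 then b
    else if n = 3 then c else if n = 4 then d else 1 with hccdef
  have hcc0 : cc 0 = 0 := by simp [hccdef]
  have hcc5 : cc 5 = 1 := by simp [hccdef]
  have hccmono : Monotone cc := by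
    apply monotone_nat_of_le_succ
    intro n
    rcases n with _ | _ | _ | _ | _ | n
    · simpa [hccdef] using (hmem a (by tauto)).1
    · simpa [hccdef] using hab
    · simpa [hccdef] using hbc
    · simpa [hccdef] using hcd
    · simpa [hccdef] using (hmem d (by tauto)).2
    · simp [hccdef]
  have hccmem : ∀ i, cc i ∈ Icc (0:ℝ) 1 := by
    intro i
    rcases i with _ | _ | _ | _ | _ | i
    · simpa [hccdef] using h0m
    · simpa [hccdef] using hmem a (by tauto)
    · simpa [hccdef] using hmem b (by tauto)
    · simpa [hccdef] using hmem c (by tauto)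
    · simpa [hccdef] using hmem d (by tauto)
    · simpa [hccdef] using h1m
  have hposn : ∀ x, (x = tl ∨ x = tr ∨ x = tt ∨ x = tb) → ∃ k, 1 ≤ k ∧ k ≤ 4 ∧ cc k = x := by
    intro x hx
    rcases (hiff x).mpr hx with h | h | h | h
    · exact ⟨1, by norm_num, by norm_num, by simp [hccdef, h]⟩
    · exact ⟨2, by norm_num, by norm_num, by simp [hccdef, h]⟩
    · exact ⟨3, by norm_num, by norm_num, by simp [hccdef, h]⟩
    · exact ⟨4, by norm_num, by norm_num, by simp [hccdef, h]⟩
  -- chain length bounded by L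
  set S := ∑ i ∈ Finset.range 5, dist (γ (cc (i+1))) (γ (cc i)) with hSdef
  have hSL : S ≤ L := by
    have h1 := eVariationOn.sum_le (f := γ) (n := 5) hccmono hccmem
    have h2 : ∑ i ∈ Finset.range 5, edist (γ (cc (i+1))) (γ (cc i)) = ENNReal.ofReal S := by
      rw [hSdef, ENNReal.ofReal_sum_of_nonneg (fun i _ => dist_nonneg)]
      exact Finset.sum_congr rfl fun i _ => edist_dist _ _
    rw [h2] at h1
    rw [hL]
    exact (ENNReal.ofReal_le_iff_le_toReal hfin).mp h1
  -- coordinate variations along the chain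
  set Du := ∑ i ∈ Finset.range 5, |u (cc (i+1)) - u (cc i)| with hDudef
  set Dv := ∑ i ∈ Finset.range 5, |v (cc (i+1)) - v (cc i)| with hDvdef
  have hDu0 : 0 ≤ Du := Finset.sum_nonneg fun i _ => abs_nonneg _
  have hDv0 : 0 ≤ Dv := Finset.sum_nonneg fun i _ => abs_nonneg _
  have hdistEq : ∀ s t : ℝ, dist (γ s) (γ t) = Real.sqrt ((u s - u t) ^ 2 + (v s - v t) ^ 2) := by
    intro s t
    rw [EuclideanSpace.dist_eq]
    congr 1
    rw [Fin.sum_univ_two]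
    simp only [Real.dist_eq, sq_abs, hu, hv]
    ring_nf
    linear_combination (-(γ s 0 - γ t 0) ^ 2 - (γ s 1 - γ t 1) ^ 2) * hcs
  have hmink : Real.sqrt (Du ^ 2 + Dv ^ 2) ≤ S := by
    have h1 := mink_sum (fun i => u (cc (i+1)) - u (cc i)) (fun i => v (cc (i+1)) - v (cc i)) 5
    rw [hSdef]
    calc Real.sqrt (Du ^ 2 + Dv ^ 2) ≤
        ∑ i ∈ range 5, Real.sqrt ((u (cc (i+1)) - u (cc i)) ^ 2 + (v (cc (i+1)) - v (cc i)) ^ 2) := h1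
      _ = ∑ i ∈ Finset.range 5, dist (γ (cc (i+1))) (γ (cc i)) :=
        Finset.sum_congr rfl fun i _ => (hdistEq _ _).symm
  -- w ≤ Du
  obtain ⟨kl, hkl1, hkl4, hkl⟩ := hposn tl (by tauto)
  obtain ⟨kr, hkr1, hkr4, hkr⟩ := hposn tr (by tauto)
  obtain ⟨kt, hkt1, hkt4, hkt⟩ := hposn tt (by tauto)
  obtain ⟨kb, hkb1, hkb4, hkb⟩ := hposn tb (by tauto)
  have hsubsum : ∀ a' b' : ℕ, b' ≤ 5 →
      (∑ i ∈ Finset.Ico a' b', |u (cc (i+1)) - u (cc i)|) ≤ Du := by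
    intro a' b' hb'
    rw [hDudef, Finset.range_eq_Ico]
    exact Finset.sum_le_sum_of_subset_of_nonneg
      (Finset.Ico_subset_Ico (Nat.zero_le _) hb') (fun i _ _ => abs_nonneg _)
  have hwDu : u tr - u tl ≤ Du := by
    rcases le_total kl kr with h | h
    · have h1 := tel (fun i => u (cc i)) kl kr h
      have h2 : u tr - u tl ≤ |u (cc kr) - u (cc kl)| := by
        rw [hkl, hkr]; exact le_abs_self _
      exact h2.trans (h1.trans (hsubsum kl kr (by omega)))
    · have h1 := tel (fun i => u (cc i)) kr kl h
      have h2 : u tr - u tl ≤ |u (cc kl) - u (cc kr)| := by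
        rw [hkl, hkr, abs_sub_comm]; exact le_abs_self _
      exact h2.trans (h1.trans (hsubsum kr kl (by omega)))
  -- 2h ≤ Dv
  have hvtt0 : 0 ≤ v tt := hv0 ▸ hmaxv 0 h0m
  have hvtb0 : v tb ≤ 0 := hv0 ▸ hminv 0 h0m
  have hhDv : 2 * (v tt - v tb) ≤ Dv := by
    have key : ∀ k1 k2 : ℕ, k1 ≤ k2 → k2 ≤ 5 →
        |v (cc k1) - v (cc 0)| + |v (cc k2) - v (cc k1)| + |v (cc 5) - v (cc k2)| ≤ Dv := by
      intro k1 k2 h12 h25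
      have t1 := tel (fun i => v (cc i)) 0 k1 (Nat.zero_le _)
      have t2 := tel (fun i => v (cc i)) k1 k2 h12
      have t3 := tel (fun i => v (cc i)) k2 5 h25
      have split : Dv = (∑ i ∈ Finset.Ico 0 k1, |v (cc (i+1)) - v (cc i)|)
          + (∑ i ∈ Finset.Ico k1 k2, |v (cc (i+1)) - v (cc i)|)
          + (∑ i ∈ Finset.Ico k2 5, |v (cc (i+1)) - v (cc i)|) := by
        rw [hDvdef, Finset.range_eq_Ico,
          ← Finset.sum_Ico_consecutive _ (Nat.zero_le k1) (h12.trans h25),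
          ← Finset.sum_Ico_consecutive _ h12 h25]
        ring
      rw [split]
      exact add_le_add (add_le_add t1 t2) t3
    have hvcc0 : v (cc 0) = 0 := by rw [hcc0, hv0]
    have hvcc5 : v (cc 5) = 0 := by rw [hcc5, hv1]
    rcases le_total kt kb with h | h
    · have := key kt kb h (by omega)
      rw [hvcc0, hvcc5, hkt, hkb] at this
      rw [abs_of_nonneg (by linarith), abs_of_nonpos (by linarith),
        abs_of_nonneg (by linarith)] at this
      linarith
    · have := key kb kt h (by omega)
      rw [hvcc0, hvcc5, hkt, hkb] at this
      rw [abs_of_nonpos (by linarith), abs_of_nonneg (by linarith),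
        abs_of_nonpos (by linarith)] at this
      linarith
  -- the main estimate
  have hW0 : 0 ≤ u tr - u tl := sub_nonneg.mpr ((hminu tr htr).trans (le_refl _))
  have hH0 : 0 ≤ v tt - v tb := sub_nonneg.mpr ((hminv tt htt).trans (le_refl _))
  have hkey : 2 * ((u tr - u tl) + (v tt - v tb)) ≤ Real.sqrt 5 * L := by
    have c1 := cs2 2 1 Du Dv
    have c15 : Real.sqrt (2 ^ 2 + 1 ^ 2) = Real.sqrt 5 := by norm_num
    rw [c15] at c1
    have c2 : Real.sqrt 5 * Real.sqrt (Du ^ 2 + Dv ^ 2) ≤ Real.sqrt 5 * S :=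
      mul_le_mul_of_nonneg_left hmink (Real.sqrt_nonneg 5)
    have c3 : Real.sqrt 5 * S ≤ Real.sqrt 5 * L :=
      mul_le_mul_of_nonneg_left hSL (Real.sqrt_nonneg 5)
    linarith
  -- construct the isometry
  set f : EuclideanSpace ℝ (Fin 2) → EuclideanSpace ℝ (Fin 2) := fun p =>
    (WithLp.equiv 2 (Fin 2 → ℝ)).symm
      ![γ 0 0 + co * (p 0 + u tl) - so * (p 1 + v tb),
        γ 0 1 + so * (p 0 + u tl) + co * (p 1 + v tb)] with hfdef
  have hfap : ∀ p : EuclideanSpace ℝ (Fin 2),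
      f p 0 = γ 0 0 + co * (p 0 + u tl) - so * (p 1 + v tb) ∧
      f p 1 = γ 0 1 + so * (p 0 + u tl) + co * (p 1 + v tb) := by
    intro p
    constructor <;> simp [hfdef, WithLp.equiv_symm_apply, WithLp.ofLp_toLp]
  have hfiso : Isometry f := by
    apply Isometry.of_dist_eq
    intro p q
    rw [EuclideanSpace.dist_eq, EuclideanSpace.dist_eq]
    congr 1
    rw [Fin.sum_univ_two, Fin.sum_univ_two]
    rw [Real.dist_eq, Real.dist_eq, Real.dist_eq, Real.dist_eq,
      (hfap p).1, (hfap p).2, (hfap q).1, (hfap q).2]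
    rw [sq_abs, sq_abs, sq_abs, sq_abs]
    linear_combination ((p 0 - q 0) ^ 2 + (p 1 - q 1) ^ 2) * hcs
  refine ⟨u tr - u tl, v tt - v tb,
    f '' {p : EuclideanSpace ℝ (Fin 2) |
      p 0 ∈ Set.Icc 0 (u tr - u tl) ∧ p 1 ∈ Set.Icc 0 (v tt - v tb)}, f,
    hW0, hH0, hfiso, rfl, ?_, hkey⟩
  rintro z ⟨t, ht, rfl⟩
  refine ⟨(WithLp.equiv 2 (Fin 2 → ℝ)).symm ![u t - u tl, v t - v tb], ⟨?_, ?_⟩, ?_⟩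
  · simp only [WithLp.equiv_symm_apply, WithLp.ofLp_toLp, Matrix.cons_val_zero]
    exact ⟨sub_nonneg.mpr (hminu t ht), sub_le_sub_right (hmaxu t ht) _⟩
  · simp only [WithLp.equiv_symm_apply, WithLp.ofLp_toLp, Matrix.cons_val_one, Matrix.head_cons]
    exact ⟨sub_nonneg.mpr (hminv t ht), sub_le_sub_right (hmaxv t ht) _⟩
  · have h0 := (hfap ((WithLp.equiv 2 (Fin 2 → ℝ)).symm ![u t - u tl, v t - v tb])).1
    have h1 := (hfap ((WithLp.equiv 2 (Fin 2 → ℝ)).symm ![u t - u tl, v t - v tb])).2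
    simp only [WithLp.equiv_symm_apply, WithLp.ofLp_toLp, Matrix.cons_val_zero, Matrix.cons_val_one,
      Matrix.head_cons] at h0 h1
    have hext : ∀ x y : EuclideanSpace ℝ (Fin 2), x 0 = y 0 → x 1 = y 1 → x = y := by
      intro x y hx0 hx1
      apply WithLp.ofLp_injective; funext i
      fin_cases i
      · exact hx0
      · exact hx1
    apply hext
    · rw [WithLp.equiv_symm_apply, h0]
      simp only [hu, hv]
      linear_combination (γ t 0 - γ 0 0) * hcs
    · rw [WithLp.equiv_symm_apply, h1]
      simp only [hu, hv]
      linear_combination (γ t 1 - γ 0 1) * hcs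
end

section
/- Let γ : [0,1] → ℝ² be a curve of finite length L whose endpoints a = γ(0) and b = γ(1) have equal y-coordinates. Let w and h be the width and height of the axis-aligned bounding box of the image of γ. Then (2w − |a − b|)² + 4h² ≤ L², where |a − b| is the Euclidean distance between the endpoints. In particular, since |a − b| ≤ w, one has w² + 4h² ≤ L². -/
open Set

lemma tele (F : ℕ → ℝ) {i j : ℕ} (h : i ≤ j) :
    |F j - F i| ≤ ∑ l ∈ Finset.Ico i j, |F (l+1) - F l| := by
  induction j, h using Nat.le_induction with
  | base => simp
  | succ j hij ih =>
    rw [Finset.sum_Ico_succ_top (by omega)]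
    have h1 := abs_sub (F j) (F i)
    have h2 := abs_abs_sub_abs_le_abs_sub (F (j+1)) (F j)
    have := abs_sub_abs_le_abs_sub (F (j+1) - F i) (F j - F i)
    have h3 : F (j+1) - F i - (F j - F i) = F (j+1) - F j := by ring
    rw [h3] at this
    have h4 := abs_nonneg (F (j+1) - F j)
    linarith [le_abs_self (|F (j+1) - F i| - |F j - F i|), this]

lemma key (F : ℕ → ℝ) {a b : ℕ} (hab : a ≤ b) (hb : b ≤ 5) :
    |F a - F 0| + |F b - F a| + |F 5 - F b| ≤ ∑ i ∈ Finset.range 5, |F (i+1) - F i| := by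
  rw [Finset.range_eq_Ico, ← Finset.sum_Ico_consecutive _ (Nat.zero_le b) hb,
    ← Finset.sum_Ico_consecutive _ (Nat.zero_le a) hab]
  have h1 := tele F (Nat.zero_le a)
  have h2 := tele F hab
  have h3 := tele F hb
  linarith

def seq6 (v1 v2 v3 v4 : ℝ) : ℕ → ℝ
  | 0 => 0
  | 1 => v1
  | 2 => v2
  | 3 => v3
  | 4 => v4
  | _+5 => 1

lemma seq6_mono {v1 v2 v3 v4 : ℝ} (h0 : 0 ≤ v1) (h12 : v1 ≤ v2) (h23 : v2 ≤ v3)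
    (h34 : v3 ≤ v4) (h41 : v4 ≤ 1) : Monotone (seq6 v1 v2 v3 v4) := by
  apply monotone_nat_of_le_succ
  intro n
  match n with
  | 0 => exact h0
  | 1 => exact h12
  | 2 => exact h23
  | 3 => exact h34
  | 4 => exact h41
  | (m+5) => exact le_refl 1

lemma seq6_mem {v1 v2 v3 v4 : ℝ} (h0 : 0 ≤ v1) (h12 : v1 ≤ v2) (h23 : v2 ≤ v3)
    (h34 : v3 ≤ v4) (h41 : v4 ≤ 1) : ∀ i, seq6 v1 v2 v3 v4 i ∈ Icc (0:ℝ) 1 := by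
  intro n
  match n with
  | 0 => exact ⟨le_refl 0, zero_le_one⟩
  | 1 => exact ⟨h0, h12.trans (h23.trans (h34.trans h41))⟩
  | 2 => exact ⟨h0.trans h12, h23.trans (h34.trans h41)⟩
  | 3 => exact ⟨h0.trans (h12.trans h23), h34.trans h41⟩
  | 4 => exact ⟨h0.trans (h12.trans (h23.trans h34)), h41⟩
  | (m+5) => exact ⟨zero_le_one, le_refl 1⟩

lemma merge (f g : ℝ → ℝ) {s1 s2 r1 r2 : ℝ}
    (hs12 : s1 ≤ s2) (hr12 : r1 ≤ r2)
    (hs1 : s1 ∈ Icc (0:ℝ) 1) (hs2 : s2 ∈ Icc (0:ℝ) 1)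
    (hr1 : r1 ∈ Icc (0:ℝ) 1) (hr2 : r2 ∈ Icc (0:ℝ) 1) :
    ∃ u : ℕ → ℝ, Monotone u ∧ (∀ i, u i ∈ Icc (0:ℝ) 1) ∧
      |f s1 - f 0| + |f s2 - f s1| + |f 1 - f s2|
        ≤ ∑ i ∈ Finset.range 5, |f (u (i+1)) - f (u i)| ∧
      |g r1 - g 0| + |g r2 - g r1| + |g 1 - g r2|
        ≤ ∑ i ∈ Finset.range 5, |g (u (i+1)) - g (u i)| := by
  obtain ⟨hs10, hs11⟩ := hs1
  obtain ⟨hs20, hs21⟩ := hs2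
  obtain ⟨hr10, hr11⟩ := hr1
  obtain ⟨hr20, hr21⟩ := hr2
  rcases le_total s2 r1 with hc1 | hc1
  · -- s1 s2 r1 r2
    exact ⟨seq6 s1 s2 r1 r2, seq6_mono hs10 hs12 hc1 hr12 hr21,
      seq6_mem hs10 hs12 hc1 hr12 hr21,
      key (fun n => f (seq6 s1 s2 r1 r2 n)) (a:=1) (b:=2) (by norm_num) (by norm_num),
      key (fun n => g (seq6 s1 s2 r1 r2 n)) (a:=3) (b:=4) (by norm_num) (by norm_num)⟩
  · rcases le_total s1 r1 with hc2 | hc2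
    · rcases le_total s2 r2 with hc3 | hc3
      · -- s1 r1 s2 r2
        exact ⟨seq6 s1 r1 s2 r2, seq6_mono hs10 hc2 hc1 hc3 hr21,
          seq6_mem hs10 hc2 hc1 hc3 hr21,
          key (fun n => f (seq6 s1 r1 s2 r2 n)) (a:=1) (b:=3) (by norm_num) (by norm_num),
          key (fun n => g (seq6 s1 r1 s2 r2 n)) (a:=2) (b:=4) (by norm_num) (by norm_num)⟩
      · -- s1 r1 r2 s2
        exact ⟨seq6 s1 r1 r2 s2, seq6_mono hs10 hc2 hr12 hc3 hs21,
          seq6_mem hs10 hc2 hr12 hc3 hs21,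
          key (fun n => f (seq6 s1 r1 r2 s2 n)) (a:=1) (b:=4) (by norm_num) (by norm_num),
          key (fun n => g (seq6 s1 r1 r2 s2 n)) (a:=2) (b:=3) (by norm_num) (by norm_num)⟩
    · rcases le_total r2 s1 with hc3 | hc3
      · -- r1 r2 s1 s2
        exact ⟨seq6 r1 r2 s1 s2, seq6_mono hr10 hr12 hc3 hs12 hs21,
          seq6_mem hr10 hr12 hc3 hs12 hs21,
          key (fun n => f (seq6 r1 r2 s1 s2 n)) (a:=3) (b:=4) (by norm_num) (by norm_num),
          key (fun n => g (seq6 r1 r2 s1 s2 n)) (a:=1) (b:=2) (by norm_num) (by norm_num)⟩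
      · rcases le_total s2 r2 with hc4 | hc4
        · -- r1 s1 s2 r2
          exact ⟨seq6 r1 s1 s2 r2, seq6_mono hr10 hc2 hs12 hc4 hr21,
            seq6_mem hr10 hc2 hs12 hc4 hr21,
            key (fun n => f (seq6 r1 s1 s2 r2 n)) (a:=2) (b:=3) (by norm_num) (by norm_num),
            key (fun n => g (seq6 r1 s1 s2 r2 n)) (a:=1) (b:=4) (by norm_num) (by norm_num)⟩
        · -- r1 s1 r2 s2
          exact ⟨seq6 r1 s1 r2 s2, seq6_mono hr10 hc2 hc3 hc4 hs21,
            seq6_mem hr10 hc2 hc3 hc4 hs21,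
            key (fun n => f (seq6 r1 s1 r2 s2 n)) (a:=2) (b:=4) (by norm_num) (by norm_num),
            key (fun n => g (seq6 r1 s1 r2 s2 n)) (a:=1) (b:=3) (by norm_num) (by norm_num)⟩


/-- For a curve `γ : [0,1] → ℝ²` of finite length `L` whose endpoints
`a = γ(0)` and `b = γ(1)` have equal `y`-coordinates, the width `w` and height `h` of the
axis-aligned bounding box of the image of `γ` satisfy `(2w − |a − b|)² + 4h² ≤ L²`, and in
particular `w² + 4h² ≤ L²`. -/
theorem stmt_4 (γ : ℝ → EuclideanSpace ℝ (Fin 2)) (L w h : ℝ)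
    (hcont : ContinuousOn γ (Set.Icc 0 1))
    (hfin : eVariationOn γ (Set.Icc 0 1) ≠ ⊤)
    (hL : L = (eVariationOn γ (Set.Icc 0 1)).toReal)
    (hend : γ 0 1 = γ 1 1)
    (hw : w = sSup ((fun t => γ t 0) '' Set.Icc 0 1) - sInf ((fun t => γ t 0) '' Set.Icc 0 1))
    (hh : h = sSup ((fun t => γ t 1) '' Set.Icc 0 1) - sInf ((fun t => γ t 1) '' Set.Icc 0 1)) :
    (2 * w - dist (γ 0) (γ 1)) ^ 2 + 4 * h ^ 2 ≤ L ^ 2 ∧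
      w ^ 2 + 4 * h ^ 2 ≤ L ^ 2 := by
  set x : ℝ → ℝ := fun t => γ t 0 with hxdef
  set y : ℝ → ℝ := fun t => γ t 1 with hydef
  have hne : (Icc (0:ℝ) 1).Nonempty := ⟨0, by norm_num⟩
  have h0m : (0:ℝ) ∈ Icc (0:ℝ) 1 := by norm_num
  have h1m : (1:ℝ) ∈ Icc (0:ℝ) 1 := by norm_num
  have hxc : ContinuousOn x (Icc 0 1) := (PiLp.continuous_apply _ _ (0 : Fin 2)).comp_continuousOn hcont
  have hyc : ContinuousOn y (Icc 0 1) := (PiLp.continuous_apply _ _ (1 : Fin 2)).comp_continuousOn hcont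
  obtain ⟨tM, htM, hMx⟩ := isCompact_Icc.exists_isMaxOn hne hxc
  obtain ⟨tm, htm, hmx⟩ := isCompact_Icc.exists_isMinOn hne hxc
  obtain ⟨tYM, htYM, hMy⟩ := isCompact_Icc.exists_isMaxOn hne hyc
  obtain ⟨tYm, htYm, hmy⟩ := isCompact_Icc.exists_isMinOn hne hyc
  have hsupx : sSup (x '' Icc 0 1) = x tM :=
    IsGreatest.csSup_eq ⟨mem_image_of_mem _ htM, by rintro _ ⟨t, ht, rfl⟩; exact hMx ht⟩
  have hinfx : sInf (x '' Icc 0 1) = x tm :=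
    IsLeast.csInf_eq ⟨mem_image_of_mem _ htm, by rintro _ ⟨t, ht, rfl⟩; exact hmx ht⟩
  have hsupy : sSup (y '' Icc 0 1) = y tYM :=
    IsGreatest.csSup_eq ⟨mem_image_of_mem _ htYM, by rintro _ ⟨t, ht, rfl⟩; exact hMy ht⟩
  have hinfy : sInf (y '' Icc 0 1) = y tYm :=
    IsLeast.csInf_eq ⟨mem_image_of_mem _ htYm, by rintro _ ⟨t, ht, rfl⟩; exact hmy ht⟩
  have hw' : w = x tM - x tm := by rw [hw, hsupx, hinfx]
  have hh' : h = y tYM - y tYm := by rw [hh, hsupy, hinfy]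
  -- bounds
  have hx0 : x tm ≤ x 0 ∧ x 0 ≤ x tM := ⟨hmx h0m, hMx h0m⟩
  have hx1 : x tm ≤ x 1 ∧ x 1 ≤ x tM := ⟨hmx h1m, hMx h1m⟩
  have hy0 : y tYm ≤ y 0 ∧ y 0 ≤ y tYM := ⟨hmy h0m, hMy h0m⟩
  have hyend : y 0 = y 1 := hend
  -- distance between endpoints
  have hdist : dist (γ 0) (γ 1) = |x 0 - x 1| := by
    rw [EuclideanSpace.dist_eq, Fin.sum_univ_two, Real.dist_eq, Real.dist_eq, hend]
    simp only [sub_self, abs_zero, hxdef]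
    rw [show (0:ℝ) ^ 2 = 0 by ring, add_zero, sq_abs, Real.sqrt_sq_eq_abs]
  set d := dist (γ 0) (γ 1) with hd
  have hdle : d ≤ w := by
    rw [hdist, hw', abs_sub_le_iff]; constructor <;> linarith [hx0.1, hx0.2, hx1.1, hx1.2]
  have hwnn : 0 ≤ w := by rw [hw']; linarith [hmx htM]
  have hhnn : 0 ≤ h := by rw [hh']; linarith [hmy htYM]
  have hdnn : 0 ≤ d := dist_nonneg
  -- x-score
  obtain ⟨s1, s2, hs12, hs1, hs2, hxs⟩ :
      ∃ s1 s2, s1 ≤ s2 ∧ s1 ∈ Icc (0:ℝ) 1 ∧ s2 ∈ Icc (0:ℝ) 1 ∧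
        2 * w - d ≤ |x s1 - x 0| + |x s2 - x s1| + |x 1 - x s2| := by
    have habs1 : x 0 - x 1 ≤ |x 0 - x 1| := le_abs_self _
    have habs2 : -(|x 0 - x 1|) ≤ x 0 - x 1 := neg_abs_le _
    rcases le_total tm tM with hc | hc
    · refine ⟨tm, tM, hc, htm, htM, ?_⟩
      have a1 : x 0 - x tm ≤ |x tm - x 0| := by rw [abs_sub_comm]; exact le_abs_self _
      have a2 : x tM - x tm ≤ |x tM - x tm| := le_abs_self _
      have a3 : x tM - x 1 ≤ |x 1 - x tM| := by rw [abs_sub_comm]; exact le_abs_self _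
      rw [hdist, hw']; linarith
    · refine ⟨tM, tm, hc, htM, htm, ?_⟩
      have a1 : x tM - x 0 ≤ |x tM - x 0| := le_abs_self _
      have a2 : x tM - x tm ≤ |x tm - x tM| := by rw [abs_sub_comm]; exact le_abs_self _
      have a3 : x 1 - x tm ≤ |x 1 - x tm| := le_abs_self _
      rw [hdist, hw']; linarith
  -- y-score
  obtain ⟨r1, r2, hr12, hr1, hr2, hys⟩ :
      ∃ r1 r2, r1 ≤ r2 ∧ r1 ∈ Icc (0:ℝ) 1 ∧ r2 ∈ Icc (0:ℝ) 1 ∧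
        2 * h ≤ |y r1 - y 0| + |y r2 - y r1| + |y 1 - y r2| := by
    rcases le_total tYm tYM with hc | hc
    · refine ⟨tYm, tYM, hc, htYm, htYM, ?_⟩
      have a1 : y 0 - y tYm ≤ |y tYm - y 0| := by rw [abs_sub_comm]; exact le_abs_self _
      have a2 : y tYM - y tYm ≤ |y tYM - y tYm| := le_abs_self _
      have a3 : y tYM - y 1 ≤ |y 1 - y tYM| := by rw [abs_sub_comm]; exact le_abs_self _
      rw [hh']; linarith [hy0.1, hy0.2, hyend]
    · refine ⟨tYM, tYm, hc, htYM, htYm, ?_⟩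
      have a1 : y tYM - y 0 ≤ |y tYM - y 0| := le_abs_self _
      have a2 : y tYM - y tYm ≤ |y tYm - y tYM| := by rw [abs_sub_comm]; exact le_abs_self _
      have a3 : y 1 - y tYm ≤ |y 1 - y tYm| := le_abs_self _
      rw [hh']; linarith [hy0.1, hy0.2, hyend]
  obtain ⟨u, humono, humem, hfx, hfy⟩ := merge x y hs12 hr12 hs1 hs2 hr1 hr2
  -- variation bound
  have hvar : ∑ i ∈ Finset.range 5, dist (γ (u (i+1))) (γ (u i)) ≤ L := by
    have h1 := eVariationOn.sum_le (f := γ) (n := 5) humono humem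
    have h2 : ((∑ i ∈ Finset.range 5, edist (γ (u (i+1))) (γ (u i))).toReal) ≤ L := by
      rw [hL]; exact ENNReal.toReal_mono hfin h1
    rwa [ENNReal.toReal_sum (fun i _ => edist_ne_top _ _), Finset.sum_congr rfl
      (fun i _ => (dist_edist _ _).symm)] at h2
  -- Minkowski via complex numbers
  set v : ℕ → ℂ := fun i => ⟨|x (u (i+1)) - x (u i)|, |y (u (i+1)) - y (u i)|⟩ with hv
  set Sx := ∑ i ∈ Finset.range 5, |x (u (i+1)) - x (u i)| with hSx
  set Sy := ∑ i ∈ Finset.range 5, |y (u (i+1)) - y (u i)| with hSy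
  have hvnorm : ∀ i, ‖v i‖ = dist (γ (u (i+1))) (γ (u i)) := by
    intro i
    rw [Complex.norm_def, Complex.normSq_mk,
      EuclideanSpace.dist_eq, Fin.sum_univ_two]
    rw [Real.dist_eq, Real.dist_eq]
    congr 1
    simp only [hxdef, hydef, abs_mul_abs_self, sq_abs]
    ring
  have hSre : (∑ i ∈ Finset.range 5, v i).re = Sx := by
    rw [Complex.re_sum]
  have hSim : (∑ i ∈ Finset.range 5, v i).im = Sy := by
    rw [Complex.im_sum]
  have hnormsum : Real.sqrt (Sx ^ 2 + Sy ^ 2) ≤ ∑ i ∈ Finset.range 5, dist (γ (u (i+1))) (γ (u i)) := by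
    have := norm_sum_le (Finset.range 5) v
    rw [Complex.norm_def, Complex.normSq_apply, hSre, hSim] at this
    calc Real.sqrt (Sx ^ 2 + Sy ^ 2) = Real.sqrt (Sx * Sx + Sy * Sy) := by ring_nf
      _ ≤ ∑ i ∈ Finset.range 5, ‖v i‖ := this
      _ = _ := Finset.sum_congr rfl fun i _ => hvnorm i
  have hSxnn : 0 ≤ Sx := Finset.sum_nonneg fun i _ => abs_nonneg _
  have hSynn : 0 ≤ Sy := Finset.sum_nonneg fun i _ => abs_nonneg _
  have hAx : 2 * w - d ≤ Sx := le_trans hxs hfx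
  have hAy : 2 * h ≤ Sy := le_trans hys hfy
  have hLnn : 0 ≤ L := by rw [hL]; exact ENNReal.toReal_nonneg
  have hsq : Sx ^ 2 + Sy ^ 2 ≤ L ^ 2 := by
    have h1 : Real.sqrt (Sx ^ 2 + Sy ^ 2) ≤ L := le_trans hnormsum hvar
    have h2 : (Real.sqrt (Sx ^ 2 + Sy ^ 2)) ^ 2 ≤ L ^ 2 := by
      apply pow_le_pow_left₀ (Real.sqrt_nonneg _) h1
    rwa [Real.sq_sqrt (by positivity)] at h2
  have hAnn : 0 ≤ 2 * w - d := by linarith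
  have e1 : (2 * w - d) ^ 2 ≤ Sx ^ 2 := pow_le_pow_left₀ hAnn hAx 2
  have e2 : (2 * h) ^ 2 ≤ Sy ^ 2 := pow_le_pow_left₀ (by linarith) hAy 2
  have e3 : (2 * h) ^ 2 = 4 * h ^ 2 := by ring
  have main : (2 * w - d) ^ 2 + 4 * h ^ 2 ≤ L ^ 2 := by linarith
  have e4 : w ^ 2 ≤ (2 * w - d) ^ 2 := pow_le_pow_left₀ hwnn (by linarith) 2
  exact ⟨main, by linarith⟩
end

section
/- Let γ be the polygonal path in ℝ² consisting of the two unit segments from a = (0,0) to c = (2/√5, 1/√5) and from c to b = (4/√5, 0), i.e., the set [a,c] ∪ [c,b] (a curve of length 2 formed by the two equal sides of an isosceles triangle with sides 1, 1, and 4/√5). Then every rectangle Q containing γ satisfies per(Q) ≥ 2√5; that is, the bound per(Q) ≤ √5 · len(γ) is attained and cannot be improved. -/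
lemma abs_add_abs_le' (a b w : ℝ) (h1 : |a + b| ≤ w) (h2 : |a - b| ≤ w) :
    |a| + |b| ≤ w := by
  obtain ⟨p1, p2⟩ := abs_le.mp h1
  obtain ⟨q1, q2⟩ := abs_le.mp h2
  rcases abs_cases a with ⟨ha, _⟩ | ⟨ha, _⟩ <;>
    rcases abs_cases b with ⟨hb, _⟩ | ⟨hb, _⟩ <;> linarith


lemma ineq_key (w h x y : ℝ) (hx0 : 0 ≤ x) (hy0 : 0 ≤ y)
    (hxy : x^2 + y^2 = 16/5)
    (h1 : x ≤ w) (h2 : y ≤ h)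
    (h3 : x/2 + y/4 ≤ w) (h4 : y/2 + x/4 ≤ h) :
    Real.sqrt 5 ≤ w + h := by
  have hwh0 : 0 ≤ w + h := by linarith
  have goal5 : 5 ≤ (w + h)^2 := by
    rcases le_or_gt y (2*x) with hc1 | hc1
    · rcases le_or_gt x (2*y) with hc2 | hc2
      · have t5 : 5 ≤ (x + y)^2 := by
          nlinarith [mul_nonneg (sub_nonneg.mpr hc1) (sub_nonneg.mpr hc2)]
        have : (x + y)^2 ≤ (w + h)^2 := by
          apply pow_le_pow_left₀ (by linarith) (by linarith)
        linarith
      · have t5 : 5 ≤ (5*x/4 + y/2)^2 := by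
          nlinarith [mul_nonneg hy0 (le_of_lt (sub_pos.mpr hc2))]
        have : (5*x/4 + y/2)^2 ≤ (w + h)^2 := by
          apply pow_le_pow_left₀ (by linarith) (by linarith)
        linarith
    · have t5 : 5 ≤ (5*y/4 + x/2)^2 := by
        nlinarith [mul_nonneg hx0 (le_of_lt (sub_pos.mpr hc1))]
      have : (5*y/4 + x/2)^2 ≤ (w + h)^2 := by
        apply pow_le_pow_left₀ (by linarith) (by linarith)
      linarith
  calc Real.sqrt 5 ≤ Real.sqrt ((w+h)^2) := Real.sqrt_le_sqrt goal5
    _ = w + h := Real.sqrt_sq hwh0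

lemma key_s5 (w h A0 A1 B0 B1 C0 C1 : ℝ)
    (hA0 : A0 ∈ Set.Icc 0 w) (hA1 : A1 ∈ Set.Icc 0 h)
    (hB0 : B0 ∈ Set.Icc 0 w) (hB1 : B1 ∈ Set.Icc 0 h)
    (hC0 : C0 ∈ Set.Icc 0 w) (hC1 : C1 ∈ Set.Icc 0 h)
    (e1 : (A0 - C0)^2 + (A1 - C1)^2 = 1)
    (e2 : (C0 - B0)^2 + (C1 - B1)^2 = 1)
    (e3 : (A0 - B0)^2 + (A1 - B1)^2 = 16/5) :
    Real.sqrt 5 ≤ w + h := by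
  obtain ⟨hA0l, hA0r⟩ := hA0; obtain ⟨hA1l, hA1r⟩ := hA1
  obtain ⟨hB0l, hB0r⟩ := hB0; obtain ⟨hB1l, hB1r⟩ := hB1
  obtain ⟨hC0l, hC0r⟩ := hC0; obtain ⟨hC1l, hC1r⟩ := hC1
  set u0 : ℝ := B0 - A0 with hu0
  set u1 : ℝ := B1 - A1 with hu1
  set m0 : ℝ := C0 - (A0 + B0)/2 with hm0
  set m1 : ℝ := C1 - (A1 + B1)/2 with hm1
  have f1 : u0 * m0 + u1 * m1 = 0 := by
    simp only [hu0, hu1, hm0, hm1]; linear_combination (e1 - e2) / 2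
  have f2 : m0^2 + m1^2 = 1/5 := by
    simp only [hu0, hu1, hm0, hm1]; linear_combination e1/2 + e2/2 - e3/4
  have f3 : u0^2 + u1^2 = 16/5 := by
    simp only [hu0, hu1]; linear_combination e3
  have f4 : (u0 * m1 - u1 * m0)^2 = 16/25 := by
    linear_combination (m0^2 + m1^2)*f3 + (16/5)*f2 - (u0*m0 + u1*m1)*f1
  have f5 : m0 * (16/5) = -u1 * (u0 * m1 - u1 * m0) := by
    linear_combination -m0 * f3 + u0 * f1
  have f6 : m1 * (16/5) = u0 * (u0 * m1 - u1 * m0) := by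
    linear_combination -m1 * f3 + u1 * f1
  have g0 : m0^2 = (u1/4)^2 := by
    have sq5 : (m0 * (16/5))^2 = (-u1 * (u0*m1 - u1*m0))^2 := by
      linear_combination (m0*(16/5) + (-u1 * (u0*m1 - u1*m0))) * f5
    linear_combination (25/256)*sq5 + (25/256)*u1^2*f4
  have g1 : m1^2 = (u0/4)^2 := by
    have sq6 : (m1 * (16/5))^2 = (u0 * (u0*m1 - u1*m0))^2 := by
      linear_combination (m1*(16/5) + u0 * (u0*m1 - u1*m0)) * f6
    linear_combination (25/256)*sq6 + (25/256)*u0^2*f4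
  have gm0 : |m0| = |u1| / 4 := by
    have : |m0| = |u1/4| := by
      rw [← Real.sqrt_sq_eq_abs, ← Real.sqrt_sq_eq_abs (u1/4), g0]
    rwa [abs_div, abs_of_nonneg (by norm_num : (0:ℝ) ≤ 4)] at this
  have gm1 : |m1| = |u0| / 4 := by
    have : |m1| = |u0/4| := by
      rw [← Real.sqrt_sq_eq_abs, ← Real.sqrt_sq_eq_abs (u0/4), g1]
    rwa [abs_div, abs_of_nonneg (by norm_num : (0:ℝ) ≤ 4)] at this
  -- box constraints
  have hwu : |u0| ≤ w := abs_le.mpr ⟨by simp only [hu0]; linarith, by simp only [hu0]; linarith⟩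
  have hhu : |u1| ≤ h := abs_le.mpr ⟨by simp only [hu1]; linarith, by simp only [hu1]; linarith⟩
  have hw2 : |u0|/2 + |u1|/4 ≤ w := by
    have h1 : |u0/2 + m0| ≤ w := by
      rw [show u0/2 + m0 = C0 - A0 by simp only [hu0, hm0]; ring]
      exact abs_le.mpr ⟨by linarith, by linarith⟩
    have h2 : |u0/2 - m0| ≤ w := by
      rw [show u0/2 - m0 = B0 - C0 by simp only [hu0, hm0]; ring]
      exact abs_le.mpr ⟨by linarith, by linarith⟩
    have := abs_add_abs_le' (u0/2) m0 w h1 h2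
    rw [abs_div, abs_of_nonneg (by norm_num : (0:ℝ) ≤ 2), gm0] at this
    linarith
  have hh2 : |u1|/2 + |u0|/4 ≤ h := by
    have h1 : |u1/2 + m1| ≤ h := by
      rw [show u1/2 + m1 = C1 - A1 by simp only [hu1, hm1]; ring]
      exact abs_le.mpr ⟨by linarith, by linarith⟩
    have h2 : |u1/2 - m1| ≤ h := by
      rw [show u1/2 - m1 = B1 - C1 by simp only [hu1, hm1]; ring]
      exact abs_le.mpr ⟨by linarith, by linarith⟩
    have := abs_add_abs_le' (u1/2) m1 h h1 h2
    rw [abs_div, abs_of_nonneg (by norm_num : (0:ℝ) ≤ 2), gm1] at this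
    linarith
  exact ineq_key w h |u0| |u1| (abs_nonneg _) (abs_nonneg _)
    (by rw [sq_abs, sq_abs]; exact f3) hwu hhu hw2 hh2

open Set

/-- Tightness of the bound in Lemma 5: for the polygonal path
`γ = [a,c] ∪ [c,b]` with `a = (0,0)`, `c = (2/√5, 1/√5)`, `b = (4/√5, 0)` (the two unit sides
of an isosceles triangle with sides `1`, `1`, `4/√5`, so a curve of length `2`), every
rectangle containing `γ` has perimeter at least `2√5 = √5 · len(γ)`. -/
theorem stmt_5 (w h : ℝ) (hw : 0 ≤ w) (hh : 0 ≤ h)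
    (Q : Set (EuclideanSpace ℝ (Fin 2)))
    (f : EuclideanSpace ℝ (Fin 2) → EuclideanSpace ℝ (Fin 2))
    (hf : Isometry f)
    (hQ : Q = f '' {p : EuclideanSpace ℝ (Fin 2) | p 0 ∈ Set.Icc 0 w ∧ p 1 ∈ Set.Icc 0 h})
    (hsub : segment ℝ (!₂[0, 0] : EuclideanSpace ℝ (Fin 2))
          !₂[2 / Real.sqrt 5, 1 / Real.sqrt 5] ∪
        segment ℝ (!₂[2 / Real.sqrt 5, 1 / Real.sqrt 5] : EuclideanSpace ℝ (Fin 2))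
          !₂[4 / Real.sqrt 5, 0] ⊆ Q) :
    2 * (w + h) ≥ 2 * Real.sqrt 5 := by
  set a : EuclideanSpace ℝ (Fin 2) := !₂[0, 0] with ha
  set c : EuclideanSpace ℝ (Fin 2) := !₂[2 / Real.sqrt 5, 1 / Real.sqrt 5] with hc
  set b : EuclideanSpace ℝ (Fin 2) := !₂[4 / Real.sqrt 5, 0] with hb
  have haQ : a ∈ Q := hsub (Or.inl (left_mem_segment ℝ a c))
  have hcQ : c ∈ Q := hsub (Or.inl (right_mem_segment ℝ a c))
  have hbQ : b ∈ Q := hsub (Or.inr (right_mem_segment ℝ c b))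
  rw [hQ] at haQ hcQ hbQ
  obtain ⟨A, hA, hfA⟩ := haQ
  obtain ⟨C, hC, hfC⟩ := hcQ
  obtain ⟨B, hB, hfB⟩ := hbQ
  have sqd : ∀ (p q : EuclideanSpace ℝ (Fin 2)),
      (dist p q)^2 = (p 0 - q 0)^2 + (p 1 - q 1)^2 := by
    intro p q
    rw [EuclideanSpace.dist_eq, Real.sq_sqrt (by positivity)]
    simp [Fin.sum_univ_two, Real.dist_eq, sq_abs]
  have h5 : (Real.sqrt 5)^2 = 5 := Real.sq_sqrt (by norm_num)
  have h5pos : (0:ℝ) < Real.sqrt 5 := Real.sqrt_pos.mpr (by norm_num)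
  have dac : (dist a c)^2 = 1 := by
    rw [sqd]
    simp only [ha, hc, PiLp.toLp_apply, Matrix.cons_val_zero, Matrix.cons_val_one, Matrix.head_cons]
    field_simp
    linarith [h5]
  have dcb : (dist c b)^2 = 1 := by
    rw [sqd]
    simp only [hc, hb, PiLp.toLp_apply, Matrix.cons_val_zero, Matrix.cons_val_one, Matrix.head_cons]
    field_simp
    linarith [h5]
  have dab : (dist a b)^2 = 16/5 := by
    rw [sqd]
    simp only [ha, hb, PiLp.toLp_apply, Matrix.cons_val_zero, Matrix.cons_val_one, Matrix.head_cons]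
    field_simp
    linarith [h5]
  have e1 : (A 0 - C 0)^2 + (A 1 - C 1)^2 = 1 := by
    rw [← sqd, ← hf.dist_eq A C, hfA, hfC]; exact dac
  have e2 : (C 0 - B 0)^2 + (C 1 - B 1)^2 = 1 := by
    rw [← sqd, ← hf.dist_eq C B, hfC, hfB]; exact dcb
  have e3 : (A 0 - B 0)^2 + (A 1 - B 1)^2 = 16/5 := by
    rw [← sqd, ← hf.dist_eq A B, hfA, hfB]; exact dab
  have := key_s5 w h (A 0) (A 1) (B 0) (B 1) (C 0) (C 1) hA.1 hA.2 hB.1 hB.2 hC.1 hC.2 e1 e2 e3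
  linarith
end

section
/- Let ρ be a ray with apex p = (p₁, p₂) and direction d = (d₁, d₂) with d₁ > 0 and d₂ > 0 (a ray belonging to the first quadrant), and let Q = [x₁, x₂] × [y₁, y₂] with x₁ ≤ x₂ and y₁ ≤ y₂. Then ρ intersects Q if and only if (i) the corners q₂ = (x₂, y₁) and q₄ = (x₁, y₂) lie on opposite closed sides of the supporting line of ρ, i.e., the cross products (q₂ − p) × d and (q₄ − p) × d (where (u₁,u₂) × (v₁,v₂) = u₁v₂ − u₂v₁) satisfy ((q₂ − p) × d) · ((q₄ − p) × d) ≤ 0, and (ii) the apex is dominated by q₃ = (x₂, y₂), i.e., p₁ ≤ x₂ and p₂ ≤ y₂. -/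
/-- A ray with apex `p = (p₁,p₂)` and direction `d = (d₁,d₂)`, `d₁, d₂ > 0`
(first quadrant), intersects the axis-parallel rectangle `Q = [x₁,x₂] × [y₁,y₂]` iff
(i) the corners `q₂ = (x₂,y₁)` and `q₄ = (x₁,y₂)` lie on opposite closed sides of the
supporting line of the ray, i.e. `((q₂ − p) × d) · ((q₄ − p) × d) ≤ 0` where
`(u₁,u₂) × (v₁,v₂) = u₁v₂ − u₂v₁`, and (ii) the apex is dominated by `q₃ = (x₂,y₂)`. -/
theorem stmt_10 (p₁ p₂ d₁ d₂ x₁ x₂ y₁ y₂ : ℝ) (hd₁ : 0 < d₁) (hd₂ : 0 < d₂)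
    (hx : x₁ ≤ x₂) (hy : y₁ ≤ y₂) :
    ({q : ℝ × ℝ | ∃ t : ℝ, 0 ≤ t ∧ q = (p₁ + t * d₁, p₂ + t * d₂)} ∩
        Set.Icc x₁ x₂ ×ˢ Set.Icc y₁ y₂).Nonempty ↔
      ((x₂ - p₁) * d₂ - (y₁ - p₂) * d₁) * ((x₁ - p₁) * d₂ - (y₂ - p₂) * d₁) ≤ 0 ∧
        p₁ ≤ x₂ ∧ p₂ ≤ y₂ := by
  constructor
  · rintro ⟨q, ⟨t, ht, rfl⟩, hq⟩
    simp only [Set.mem_prod, Set.mem_Icc] at hq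
    obtain ⟨⟨h1, h2⟩, h3, h4⟩ := hq
    have e1 := mul_nonneg ht hd₁.le
    have e2 := mul_nonneg ht hd₂.le
    refine ⟨?_, by linarith, by linarith⟩
    have hA : 0 ≤ (x₂ - p₁) * d₂ - (y₁ - p₂) * d₁ := by nlinarith
    have hB : (x₁ - p₁) * d₂ - (y₂ - p₂) * d₁ ≤ 0 := by nlinarith
    exact mul_nonpos_of_nonneg_of_nonpos hA hB
  · rintro ⟨hprod, hpx, hpy⟩
    have hd : 0 ≤ (x₂ - x₁) * d₂ + (y₂ - y₁) * d₁ := by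
      have := mul_nonneg (sub_nonneg.2 hx) hd₂.le
      have := mul_nonneg (sub_nonneg.2 hy) hd₁.le
      linarith
    have hA : 0 ≤ (x₂ - p₁) * d₂ - (y₁ - p₂) * d₁ := by
      nlinarith [sq_nonneg ((x₂ - p₁) * d₂ - (y₁ - p₂) * d₁), sq_nonneg ((x₁ - p₁) * d₂ - (y₂ - p₂) * d₁)]
    have hB : (x₁ - p₁) * d₂ - (y₂ - p₂) * d₁ ≤ 0 := by
      nlinarith [sq_nonneg ((x₂ - p₁) * d₂ - (y₁ - p₂) * d₁), sq_nonneg ((x₁ - p₁) * d₂ - (y₂ - p₂) * d₁)]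
    set t := max (max ((x₁ - p₁) / d₁) ((y₁ - p₂) / d₂)) 0 with htdef
    have ht0 : (0:ℝ) ≤ t := le_max_right _ _
    refine ⟨(p₁ + t * d₁, p₂ + t * d₂), ⟨t, ht0, rfl⟩, ?_⟩
    have htx : t ≤ (x₂ - p₁) / d₁ := by
      refine max_le (max_le ?_ ?_) ?_
      · rw [div_le_div_iff₀ hd₁ hd₁]; nlinarith
      · rw [div_le_div_iff₀ hd₂ hd₁]; nlinarith
      · exact div_nonneg (by linarith) hd₁.le
    have hty : t ≤ (y₂ - p₂) / d₂ := by
      refine max_le (max_le ?_ ?_) ?_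
      · rw [div_le_div_iff₀ hd₁ hd₂]; nlinarith
      · rw [div_le_div_iff₀ hd₂ hd₂]; nlinarith
      · exact div_nonneg (by linarith) hd₂.le
    have h1 : x₁ ≤ p₁ + t * d₁ := by
      have h := le_trans (le_max_left _ _) (le_max_left _ _ : _ ≤ t)
      have := (div_le_iff₀ hd₁).mp h
      linarith
    have h3 : y₁ ≤ p₂ + t * d₂ := by
      have h := le_trans (le_max_right _ _) (le_max_left _ _ : _ ≤ t)
      have := (div_le_iff₀ hd₂).mp h
      linarith
    have h2 : p₁ + t * d₁ ≤ x₂ := by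
      have := (le_div_iff₀ hd₁).mp htx
      linarith
    have h4 : p₂ + t * d₂ ≤ y₂ := by
      have := (le_div_iff₀ hd₂).mp hty
      linarith
    exact Set.mem_prod.mpr ⟨⟨h1, h2⟩, ⟨h3, h4⟩⟩
end

section
/- Let ρ be a ray with apex p = (p₁, p₂) and direction d = (d₁, d₂) with d₁ < 0 and d₂ > 0 (a ray belonging to the second quadrant), and let Q = [x₁, x₂] × [y₁, y₂] with x₁ ≤ x₂ and y₁ ≤ y₂. Then ρ intersects Q if and only if (i) the corners q₁ = (x₁, y₁) and q₃ = (x₂, y₂) lie on opposite closed sides of the supporting line of ρ, i.e., ((q₁ − p) × d) · ((q₃ − p) × d) ≤ 0 (where (u₁,u₂) × (v₁,v₂) = u₁v₂ − u₂v₁), and (ii) the apex lies right of and below the corner q₄ = (x₁, y₂), i.e., p₁ ≥ x₁ and p₂ ≤ y₂. -/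
/-- A ray with apex `p = (p₁,p₂)` and direction `d = (d₁,d₂)`, `d₁ < 0 < d₂`
(second quadrant), intersects the axis-parallel rectangle `Q = [x₁,x₂] × [y₁,y₂]` iff
(i) the corners `q₁ = (x₁,y₁)` and `q₃ = (x₂,y₂)` lie on opposite closed sides of the
supporting line of the ray, i.e. `((q₁ − p) × d) · ((q₃ − p) × d) ≤ 0` where
`(u₁,u₂) × (v₁,v₂) = u₁v₂ − u₂v₁`, and (ii) the apex lies right of and below the corner
`q₄ = (x₁,y₂)`. -/
theorem stmt_11 (p₁ p₂ d₁ d₂ x₁ x₂ y₁ y₂ : ℝ) (hd₁ : d₁ < 0) (hd₂ : 0 < d₂)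
    (hx : x₁ ≤ x₂) (hy : y₁ ≤ y₂) :
    ({q : ℝ × ℝ | ∃ t : ℝ, 0 ≤ t ∧ q = (p₁ + t * d₁, p₂ + t * d₂)} ∩
        Set.Icc x₁ x₂ ×ˢ Set.Icc y₁ y₂).Nonempty ↔
      ((x₁ - p₁) * d₂ - (y₁ - p₂) * d₁) * ((x₂ - p₁) * d₂ - (y₂ - p₂) * d₁) ≤ 0 ∧
        x₁ ≤ p₁ ∧ p₂ ≤ y₂ := by
  have hd₁' : d₁ ≠ 0 := ne_of_lt hd₁
  have hd₂' : d₂ ≠ 0 := ne_of_gt hd₂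
  constructor
  · rintro ⟨q, ⟨t, ht, rfl⟩, hq⟩
    simp only [Set.mem_prod, Set.mem_Icc] at hq
    obtain ⟨⟨h1, h2⟩, h3, h4⟩ := hq
    have htd₁ : t * d₁ ≤ 0 := mul_nonpos_of_nonneg_of_nonpos ht hd₁.le
    have htd₂ : 0 ≤ t * d₂ := mul_nonneg ht hd₂.le
    have hp1 : x₁ ≤ p₁ := by linarith
    have hp2 : p₂ ≤ y₂ := by linarith
    have hA : (x₁ - p₁) * d₂ - (y₁ - p₂) * d₁ ≤ 0 := by
      nlinarith [mul_nonneg (sub_nonneg.2 h1) hd₂.le,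
        mul_nonneg (sub_nonneg.2 h3) (neg_nonneg.2 hd₁.le)]
    have hB : 0 ≤ (x₂ - p₁) * d₂ - (y₂ - p₂) * d₁ := by
      nlinarith [mul_nonneg (sub_nonneg.2 h2) hd₂.le,
        mul_nonneg (sub_nonneg.2 h4) (neg_nonneg.2 hd₁.le)]
    exact ⟨mul_nonpos_of_nonpos_of_nonneg hA hB, hp1, hp2⟩
  · rintro ⟨hprod, hp1, hp2⟩
    -- f(q₁) ≤ f(q₃)
    have hmono : (x₁ - p₁) * d₂ - (y₁ - p₂) * d₁ ≤ (x₂ - p₁) * d₂ - (y₂ - p₂) * d₁ := by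
      nlinarith [mul_nonneg (sub_nonneg.2 hx) hd₂.le,
        mul_nonneg (sub_nonneg.2 hy) (neg_nonneg.2 hd₁.le)]
    have hA : (x₁ - p₁) * d₂ - (y₁ - p₂) * d₁ ≤ 0 := by nlinarith
    have hB : 0 ≤ (x₂ - p₁) * d₂ - (y₂ - p₂) * d₁ := by nlinarith
    set a := (x₂ - p₁) / d₁ with ha_def
    set b := (y₁ - p₂) / d₂ with hb_def
    set c := (x₁ - p₁) / d₁ with hc_def
    set e := (y₂ - p₂) / d₂ with he_def
    have ha : a * d₁ = x₂ - p₁ := div_mul_cancel₀ _ hd₁'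
    have hb : b * d₂ = y₁ - p₂ := div_mul_cancel₀ _ hd₂'
    have hc : c * d₁ = x₁ - p₁ := div_mul_cancel₀ _ hd₁'
    have he : e * d₂ = y₂ - p₂ := div_mul_cancel₀ _ hd₂'
    have hc0 : 0 ≤ c := by nlinarith
    have he0 : 0 ≤ e := div_nonneg (by linarith) hd₂.le
    have hac : a ≤ c := by nlinarith
    have hbe : b ≤ e := by nlinarith
    have hbc : b ≤ c := by nlinarith [mul_pos hd₂ (neg_pos.2 hd₁)]
    have hae : a ≤ e := by nlinarith [mul_pos hd₂ (neg_pos.2 hd₁)]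
    set t := max a (max b 0) with ht_def
    have ht0 : 0 ≤ t := le_max_of_le_right (le_max_right _ _)
    have hta : a ≤ t := le_max_left _ _
    have htb : b ≤ t := le_max_of_le_right (le_max_left _ _)
    have htc : t ≤ c := max_le hac (max_le hbc hc0)
    have hte : t ≤ e := max_le hae (max_le hbe he0)
    refine ⟨(p₁ + t * d₁, p₂ + t * d₂), ⟨t, ht0, rfl⟩, ?_⟩
    simp only [Set.mem_prod, Set.mem_Icc]
    have h1 : t * d₁ ≤ a * d₁ := mul_le_mul_of_nonpos_right hta hd₁.le
    have h2 : c * d₁ ≤ t * d₁ := mul_le_mul_of_nonpos_right htc hd₁.le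
    have h3 : b * d₂ ≤ t * d₂ := mul_le_mul_of_nonneg_right htb hd₂.le
    have h4 : t * d₂ ≤ e * d₂ := mul_le_mul_of_nonneg_right hte hd₂.le
    exact ⟨⟨by linarith, by linarith⟩, by linarith, by linarith⟩
end

section
/- Let γ : [0,1] → ℝ² be a closed curve (γ(0) = γ(1)) of finite length L. Then there exists a rectangle Q containing the image of γ with perimeter per(Q) ≤ (4/π) · L. -/
open Real List MeasureTheory intervalIntegral

lemma sin_3pi2 : Real.sin (3*π/2) = -1 := by
  have h : (3:ℝ)*π/2 = π/2 + π := by ring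
  rw [h, Real.sin_add_pi, Real.sin_pi_div_two]

lemma integral_abs_cos : ∫ θ in (0:ℝ)..(2*π), |Real.cos θ| = 4 := by
  have pp := Real.pi_pos
  have h1 : ∫ θ in (0:ℝ)..(π/2), |Real.cos θ| = 1 := by
    rw [intervalIntegral.integral_congr (g := Real.cos)]
    · rw [integral_cos]; simp
    · intro x hx
      rw [Set.uIcc_of_le (by linarith)] at hx
      show |Real.cos x| = _
      exact abs_of_nonneg (Real.cos_nonneg_of_mem_Icc ⟨by linarith [hx.1], hx.2⟩)
  have h2 : ∫ θ in (π/2)..(3*π/2), |Real.cos θ| = 2 := by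
    rw [intervalIntegral.integral_congr (g := fun x => -Real.cos x)]
    · rw [intervalIntegral.integral_neg, integral_cos, sin_3pi2, Real.sin_pi_div_two]
      norm_num
    · intro x hx
      rw [Set.uIcc_of_le (by linarith)] at hx
      show |Real.cos x| = _
      exact abs_of_nonpos (Real.cos_nonpos_of_pi_div_two_le_of_le hx.1 (by linarith [hx.2]))
  have h3 : ∫ θ in (3*π/2)..(2*π), |Real.cos θ| = 1 := by
    rw [intervalIntegral.integral_congr (g := Real.cos)]
    · rw [integral_cos, sin_3pi2, Real.sin_two_pi]; norm_num
    · intro x hx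
      rw [Set.uIcc_of_le (by linarith)] at hx
      show |Real.cos x| = _
      rw [← Real.cos_sub_two_pi x]
      exact abs_of_nonneg (Real.cos_nonneg_of_mem_Icc
        ⟨by linarith [hx.1], by linarith [hx.2]⟩)
  have i1 : IntervalIntegrable (fun θ => |Real.cos θ|) volume 0 (π/2) :=
    (Real.continuous_cos.abs).intervalIntegrable _ _
  have i2 : IntervalIntegrable (fun θ => |Real.cos θ|) volume (π/2) (3*π/2) :=
    (Real.continuous_cos.abs).intervalIntegrable _ _
  have i3 : IntervalIntegrable (fun θ => |Real.cos θ|) volume (3*π/2) (2*π) :=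
    (Real.continuous_cos.abs).intervalIntegrable _ _
  have A := intervalIntegral.integral_add_adjacent_intervals (i1.trans i2) i3
  have B := intervalIntegral.integral_add_adjacent_intervals i1 i2
  rw [← A, ← B, h1, h2, h3]; norm_num

lemma integral_abs_cos_sin (a b : ℝ) :
    ∫ θ in (0:ℝ)..(2*π), |a * Real.cos θ + b * Real.sin θ| = 4 * Real.sqrt (a^2 + b^2) := by
  rcases eq_or_ne (Real.sqrt (a^2+b^2)) 0 with hr | hr
  · have h0 : a^2 + b^2 = 0 := by
      have h := Real.sqrt_eq_zero'.mp hr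
      nlinarith [sq_nonneg a, sq_nonneg b]
    have ha : a = 0 := by nlinarith [sq_nonneg a, sq_nonneg b]
    have hb : b = 0 := by nlinarith [sq_nonneg a, sq_nonneg b]
    simp [ha, hb, hr]
  · set r := Real.sqrt (a^2+b^2) with hrdef
    have hrpos : 0 < r := lt_of_le_of_ne (Real.sqrt_nonneg _) (Ne.symm hr)
    set z : Complex := ⟨a, b⟩ with hz
    have hzne : z ≠ 0 := by
      intro h
      apply hr
      have h1 : a = 0 := congrArg Complex.re h
      have h2 : b = 0 := congrArg Complex.im h
      rw [hrdef, h1, h2]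
      simp
    have habs : ‖z‖ = r := by
      rw [Complex.norm_def, Complex.normSq_mk]
      congr 1; ring
    set φ := Complex.arg z with hφ
    have ha : a = r * Real.cos φ := by
      have := Complex.cos_arg hzne
      rw [habs] at this
      field_simp at this
      rw [hφ, show a = z.re from rfl, ← this]; ring
    have hb : b = r * Real.sin φ := by
      have := Complex.sin_arg z
      rw [habs] at this
      field_simp at this
      rw [hφ, show b = z.im from rfl, ← this]; ring
    have key : ∀ θ, |a * Real.cos θ + b * Real.sin θ| = r * |Real.cos (θ - φ)| := by
      intro θ
      rw [Real.cos_sub, ha, hb]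
      rw [show r * Real.cos φ * Real.cos θ + r * Real.sin φ * Real.sin θ
          = r * (Real.cos θ * Real.cos φ + Real.sin θ * Real.sin φ) by ring]
      rw [abs_mul, abs_of_pos hrpos]
    simp only [key]
    rw [intervalIntegral.integral_const_mul]
    have h2 : ∫ θ in (0:ℝ)..(2*π), |Real.cos (θ - φ)| = 4 := by
      rw [intervalIntegral.integral_comp_sub_right (fun u => |Real.cos u|) φ]
      have hper : Function.Periodic (fun u => |Real.cos u|) (2*π) :=
        Real.cos_periodic.comp abs
      have := hper.intervalIntegral_add_eq (-φ) 0
      rw [show -φ + 2*π = 2*π - φ by ring, zero_add] at this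
      rw [show (0:ℝ) - φ = -φ by ring, this, integral_abs_cos]
    rw [h2]; ring

noncomputable def pairSum (d : ℝ → ℝ → ℝ) : List ℝ → ℝ
  | [] => 0
  | [_] => 0
  | a :: b :: t => d a b + pairSum d (b :: t)

variable {d : ℝ → ℝ → ℝ}

@[simp] lemma pairSum_nil : pairSum d [] = 0 := rfl
@[simp] lemma pairSum_single (a : ℝ) : pairSum d [a] = 0 := rfl
@[simp] lemma pairSum_cons_cons (a b : ℝ) (t : List ℝ) :
    pairSum d (a :: b :: t) = d a b + pairSum d (b :: t) := rfl

lemma pairSum_nonneg (hd : ∀ a b, 0 ≤ d a b) : ∀ l, 0 ≤ pairSum d l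
  | [] => le_refl 0
  | [_] => le_refl 0
  | a :: b :: t => by
    rw [pairSum_cons_cons]
    exact add_nonneg (hd a b) (pairSum_nonneg hd (b :: t))

lemma pairSum_cons_ne_nil (a : ℝ) (l : List ℝ) (hl : l ≠ []) :
    pairSum d (a :: l) = d a (l.head hl) + pairSum d l := by
  cases l with
  | nil => exact absurd rfl hl
  | cons b t => rfl

/-- chain bound -/
lemma pairSum_chain (htri : ∀ a b c, d a c ≤ d a b + d b c) (hrefl : ∀ a, d a a = 0) :
    ∀ (t : List ℝ) (a : ℝ), d a ((a :: t).getLast (cons_ne_nil a t)) ≤ pairSum d (a :: t)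
  | [], a => by simp [hrefl]
  | b :: t, a => by
    rw [pairSum_cons_cons]
    have h1 := pairSum_chain htri hrefl t b
    have h2 := htri a b ((b :: t).getLast (cons_ne_nil b t))
    rw [List.getLast_cons (cons_ne_nil b t)]
    linarith

lemma pairSum_split : ∀ (A : List ℝ) (x : ℝ) (C : List ℝ),
    pairSum d (A ++ x :: C) = pairSum d (A ++ [x]) + pairSum d (x :: C)
  | [], x, C => by simp
  | a :: A', x, C => by
    have hne : A' ++ x :: C ≠ [] := by simp
    have hne2 : A' ++ [x] ≠ [] := by simp
    have hh : (A' ++ x :: C).head hne = (A' ++ [x]).head hne2 := by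
      cases A' <;> simp
    show pairSum d (a :: (A' ++ x :: C)) = pairSum d (a :: (A' ++ [x])) + _
    rw [pairSum_cons_ne_nil a _ hne, pairSum_cons_ne_nil a _ hne2,
      pairSum_split A' x C, hh]
    ring

lemma pairSum_le_cons (hd : ∀ a b, 0 ≤ d a b) (x : ℝ) (l : List ℝ) :
    pairSum d l ≤ pairSum d (x :: l) := by
  cases l with
  | nil => simp
  | cons b t =>
    rw [pairSum_cons_cons]
    linarith [hd x b]

lemma pairSum_cons_le_cons_cons (hd : ∀ a b, 0 ≤ d a b)
    (htri : ∀ a b c, d a c ≤ d a b + d b c) (x y : ℝ) (l : List ℝ) :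
    pairSum d (x :: l) ≤ pairSum d (x :: y :: l) := by
  cases l with
  | nil => simpa using hd x y
  | cons z t =>
    rw [pairSum_cons_cons, pairSum_cons_cons, pairSum_cons_cons]
    linarith [htri x z y, htri x y z]

lemma pairSum_sublist_cons (hd : ∀ a b, 0 ≤ d a b)
    (htri : ∀ a b c, d a c ≤ d a b + d b c) :
    ∀ {l l' : List ℝ}, l <+ l' → ∀ x, pairSum d (x :: l) ≤ pairSum d (x :: l') := by
  intro l l' h
  induction h with
  | slnil => intro x; exact le_refl _
  | cons y h IH =>
    intro x
    calc pairSum d (x :: _) ≤ pairSum d (x :: _) := IH x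
    _ ≤ _ := pairSum_cons_le_cons_cons hd htri x y _
  | cons_cons y h IH =>
    intro x
    rw [pairSum_cons_cons, pairSum_cons_cons]
    linarith [IH y]

lemma pairSum_mono_sublist (hd : ∀ a b, 0 ≤ d a b)
    (htri : ∀ a b c, d a c ≤ d a b + d b c) :
    ∀ {l l' : List ℝ}, l <+ l' → pairSum d l ≤ pairSum d l' := by
  intro l l' h
  induction h with
  | slnil => exact le_refl _
  | cons y h IH => exact IH.trans (pairSum_le_cons hd y _)
  | cons_cons y h _ => exact pairSum_sublist_cons hd htri h y

section Key
variable (q : ℝ → ℝ)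

lemma absd_nonneg : ∀ a b : ℝ, 0 ≤ |q b - q a| := fun _ _ => abs_nonneg _
lemma absd_tri : ∀ a b c : ℝ, |q c - q a| ≤ |q b - q a| + |q c - q b| := by
  intro a b c
  calc |q c - q a| = |(q b - q a) + (q c - q b)| := by ring_nf
  _ ≤ _ := abs_add_le _ _
lemma absd_refl : ∀ a : ℝ, |q a - q a| = 0 := by simp

lemma sorted_head_le {l : List ℝ} (hs : l.Pairwise (·≤·)) {a : ℝ} (ha : a ∈ l) (hne : l ≠ []) :
    l.head hne ≤ a := by
  cases l with
  | nil => exact absurd rfl hne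
  | cons b t =>
    rcases mem_cons.mp ha with rfl | h
    · exact le_refl _
    · exact rel_of_pairwise_cons hs h

lemma sorted_le_getLast {l : List ℝ} (hs : l.Pairwise (·≤·)) {a : ℝ} (ha : a ∈ l) (hne : l ≠ []) :
    a ≤ l.getLast hne := by
  induction l with
  | nil => exact absurd rfl hne
  | cons b t IH =>
    cases t with
    | nil => simp at ha ⊢; simp [ha]
    | cons c t' =>
      rw [List.getLast_cons (cons_ne_nil c t')]
      rcases mem_cons.mp ha with rfl | h
      · exact le_trans (rel_of_pairwise_cons hs (List.getLast_mem _))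
          (le_refl _)
      · exact IH hs.of_cons h (cons_ne_nil c t')

lemma pairSum_two_point (A B C : List ℝ) (x y : ℝ)
    (hends : q ((A ++ (x :: (B ++ (y :: C)))).head (by simp)) =
             q ((A ++ (x :: (B ++ (y :: C)))).getLast (by simp))) :
    2 * |q y - q x| ≤ pairSum (fun a b => |q b - q a|) (A ++ (x :: (B ++ (y :: C)))) := by
  set d : ℝ → ℝ → ℝ := fun a b => |q b - q a| with hd
  have hBy : B ++ (y :: C) ≠ [] := by simp
  have e2 : pairSum d (x :: (B ++ (y :: C))) =
      pairSum d ((x :: B) ++ [y]) + pairSum d (y :: C) := pairSum_split (x :: B) y C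
  have hsum : pairSum d (A ++ (x :: (B ++ (y :: C)))) =
      pairSum d (A ++ [x]) + pairSum d ((x :: B) ++ [y]) + pairSum d (y :: C) := by
    rw [pairSum_split A x (B ++ (y :: C)), e2]; ring
  -- middle bound
  have b2 : |q y - q x| ≤ pairSum d ((x :: B) ++ [y]) := by
    have h := pairSum_chain (d := d) (absd_tri q) (absd_refl q) (B ++ [y]) x
    have hlast2 : (x :: (B ++ [y])).getLast (cons_ne_nil _ _) = y := List.getLast_concat (l := x :: B)
    rw [hlast2] at h
    exact h
  -- head value
  have hne : A ++ (x :: (B ++ (y :: C))) ≠ [] := by simp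
  have b1 : |q x - q ((A ++ (x :: (B ++ (y :: C)))).head hne)| ≤ pairSum d (A ++ [x]) := by
    cases A with
    | nil =>
      simp only [List.nil_append, List.head_cons]
      rw [show |q x - q x| = 0 by simp]
      exact pairSum_nonneg (absd_nonneg q) _
    | cons a A' =>
      rw [show ((a :: A') ++ (x :: (B ++ (y :: C)))).head (by simp) = a from rfl]
      have h := pairSum_chain (d := d) (absd_tri q) (absd_refl q) (A' ++ [x]) a
      rw [show (a :: (A' ++ [x])).getLast (cons_ne_nil _ _) = x from
        List.getLast_concat (l := a :: A')] at h
      exact h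
  have hlast : (A ++ (x :: (B ++ (y :: C)))).getLast hne = (y :: C).getLast (cons_ne_nil _ _) := by
    rw [List.getLast_append_of_ne_nil _ (by simp), List.getLast_cons hBy,
      List.getLast_append_of_ne_nil _ (cons_ne_nil _ _)]
  have b3 : |q ((A ++ (x :: (B ++ (y :: C)))).getLast hne) - q y| ≤ pairSum d (y :: C) := by
    rw [hlast]
    exact pairSum_chain (d := d) (absd_tri q) (absd_refl q) C y
  have tri : |q y - q x| ≤ |q x - q ((A ++ (x :: (B ++ (y :: C)))).head hne)|
      + |q ((A ++ (x :: (B ++ (y :: C)))).getLast hne) - q y| := by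
    rw [hends, abs_sub_comm (q y) (q x)]
    exact abs_sub_le _ _ _
  rw [hsum]
  linarith

end Key

lemma sort_sublist_of_subset {T T' : Finset ℝ} (h : T ⊆ T') :
    T.sort (·≤·) <+ T'.sort (·≤·) := by
  apply List.sublist_of_subperm_of_pairwise _ (Finset.pairwise_sort _ _) (Finset.pairwise_sort _ _)
  apply List.Nodup.subperm (Finset.sort_nodup _ _)
  intro a ha
  rw [Finset.mem_sort] at ha ⊢
  exact h ha

lemma ends_eq (q : ℝ → ℝ) (hq : q 0 = q 1) {E : List ℝ} (hs : E.Pairwise (·≤·))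
    (h0 : (0:ℝ) ∈ E) (h1 : (1:ℝ) ∈ E) (hE : ∀ z ∈ E, z ∈ Set.Icc (0:ℝ) 1) (hne : E ≠ []) :
    q (E.head hne) = q (E.getLast hne) := by
  have hh : E.head hne = 0 :=
    le_antisymm (sorted_head_le hs h0 hne) (hE _ (List.head_mem hne)).1
  have hl : E.getLast hne = 1 :=
    le_antisymm (hE _ (List.getLast_mem hne)).2 (sorted_le_getLast hs h1 hne)
  rw [hh, hl, hq]

lemma key_finset (q : ℝ → ℝ) (hq : q 0 = q 1) (T : Finset ℝ) (h0 : (0:ℝ) ∈ T)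
    (h1 : (1:ℝ) ∈ T) (hT : ∀ z ∈ T, z ∈ Set.Icc (0:ℝ) 1) {x y : ℝ}
    (hx : x ∈ T) (hy : y ∈ T) :
    2 * |q y - q x| ≤ pairSum (fun a b => |q b - q a|) (T.sort (·≤·)) := by
  have hxl : x ∈ T.sort (·≤·) := (Finset.mem_sort _).mpr hx
  have hyl : y ∈ T.sort (·≤·) := (Finset.mem_sort _).mpr hy
  have h0l : (0:ℝ) ∈ T.sort (·≤·) := (Finset.mem_sort _).mpr h0
  have h1l : (1:ℝ) ∈ T.sort (·≤·) := (Finset.mem_sort _).mpr h1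
  have hTl : ∀ z ∈ T.sort (·≤·), z ∈ Set.Icc (0:ℝ) 1 := fun z hz =>
    hT z ((Finset.mem_sort _).mp hz)
  have hsl : (T.sort (·≤·)).Pairwise (·≤·) := Finset.pairwise_sort _ _
  rcases eq_or_ne x y with rfl | hxy
  · rw [show |q x - q x| = 0 by simp]
    simpa using pairSum_nonneg (absd_nonneg q) (T.sort (·≤·))
  · obtain ⟨A, R, hA⟩ := List.append_of_mem hxl
    have hyAR : y ∈ A ++ x :: R := hA ▸ hyl
    rcases List.mem_append.mp hyAR with hyA | hyxR
    · -- y before x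
      obtain ⟨A', R', hA'⟩ := List.append_of_mem hyA
      have hdec : T.sort (·≤·) = A' ++ (y :: (R' ++ (x :: R))) := by
        rw [hA, hA']; simp
      rw [abs_sub_comm, hdec]
      apply pairSum_two_point q A' R' R y x
      apply ends_eq q hq (hdec ▸ hsl) (hdec ▸ h0l) (hdec ▸ h1l)
      intro z hz
      exact hTl z (hdec ▸ hz)
    · rcases List.mem_cons.mp hyxR with h | hyR
      · exact absurd h.symm hxy
      · obtain ⟨B, C, hB⟩ := List.append_of_mem hyR
        have hdec : T.sort (·≤·) = A ++ (x :: (B ++ (y :: C))) := by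
          rw [hA, hB]
        rw [hdec]
        apply pairSum_two_point q A B C x y
        apply ends_eq q hq (hdec ▸ hsl) (hdec ▸ h0l) (hdec ▸ h1l)
        intro z hz
        exact hTl z (hdec ▸ hz)

section VarBound
variable {E : Type*} [PseudoMetricSpace E] (γ : ℝ → E)

lemma pairSum_dist_le_evar_aux :
    ∀ (t : List ℝ) (a : ℝ), Pairwise (·≤·) (a::t) → (∀ z ∈ a::t, z ∈ Set.Icc (0:ℝ) 1) →
    ENNReal.ofReal (pairSum (fun u v => dist (γ u) (γ v)) (a::t)) ≤
      eVariationOn γ (Set.Icc 0 1 ∩ Set.Icc a ((a::t).getLast (cons_ne_nil a t)))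
  | [], a, _, _ => by simp
  | b :: t', a, hs, hmem => by
    have hab : a ≤ b := rel_of_pairwise_cons hs mem_cons_self
    have hs' : Pairwise (·≤·) (b :: t') := hs.of_cons
    have hmem' : ∀ z ∈ b :: t', z ∈ Set.Icc (0:ℝ) 1 := fun z hz => hmem z (mem_cons_of_mem a hz)
    have hble : b ≤ (b :: t').getLast (cons_ne_nil b t') :=
      sorted_le_getLast hs' mem_cons_self (cons_ne_nil b t')
    have ha01 : a ∈ Set.Icc (0:ℝ) 1 := hmem a mem_cons_self
    have hb01 : b ∈ Set.Icc (0:ℝ) 1 := hmem' b mem_cons_self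
    have IH := pairSum_dist_le_evar_aux t' b hs' hmem'
    rw [pairSum_cons_cons, ENNReal.ofReal_add dist_nonneg
      (pairSum_nonneg (fun _ _ => dist_nonneg) _)]
    have h1 : ENNReal.ofReal (dist (γ a) (γ b)) ≤
        eVariationOn γ (Set.Icc 0 1 ∩ Set.Icc a b) := by
      rw [← edist_dist]
      exact eVariationOn.edist_le γ ⟨ha01, le_refl a, hab⟩ ⟨hb01, hab, le_refl b⟩
    have h2 := eVariationOn.Icc_add_Icc γ (s := Set.Icc (0:ℝ) 1) hab hble hb01
    rw [List.getLast_cons_cons, ← h2]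
    exact add_le_add h1 IH

lemma pairSum_dist_le_toReal {l : List ℝ} (hs : Pairwise (·≤·) l)
    (hmem : ∀ z ∈ l, z ∈ Set.Icc (0:ℝ) 1) (hfin : eVariationOn γ (Set.Icc 0 1) ≠ ⊤) :
    pairSum (fun u v => dist (γ u) (γ v)) l ≤ (eVariationOn γ (Set.Icc 0 1)).toReal := by
  cases l with
  | nil => exact ENNReal.toReal_nonneg
  | cons a t =>
    have h := (pairSum_dist_le_evar_aux γ t a hs hmem).trans
      (eVariationOn.mono γ Set.inter_subset_left)
    have hnn : 0 ≤ pairSum (fun u v => dist (γ u) (γ v)) (a :: t) :=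
      pairSum_nonneg (fun _ _ => dist_nonneg) _
    calc pairSum (fun u v => dist (γ u) (γ v)) (a :: t)
        = (ENNReal.ofReal (pairSum (fun u v => dist (γ u) (γ v)) (a :: t))).toReal :=
          (ENNReal.toReal_ofReal hnn).symm
    _ ≤ _ := ENNReal.toReal_mono hfin h

end VarBound

lemma pairSum_param_continuous {d : ℝ → ℝ → ℝ → ℝ}
    (hd : ∀ a b, Continuous fun θ => d θ a b) (l : List ℝ) :
    Continuous fun θ => pairSum (d θ) l := by
  induction l with
  | nil => exact continuous_const
  | cons a t IH =>
    cases t with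
    | nil => exact continuous_const
    | cons b t' =>
      simp only [pairSum_cons_cons]
      exact (hd a b).add IH

lemma pairSum_param_integral {d : ℝ → ℝ → ℝ → ℝ}
    (hd : ∀ a b, Continuous fun θ => d θ a b) {D : ℝ → ℝ → ℝ}
    (key : ∀ a b, ∫ θ in (0:ℝ)..(2*π), d θ a b = 4 * D a b) (l : List ℝ) :
    ∫ θ in (0:ℝ)..(2*π), pairSum (d θ) l = 4 * pairSum D l := by
  induction l with
  | nil => simp [pairSum]
  | cons a t IH =>
    cases t with
    | nil => simp [pairSum]
    | cons b t' =>
      simp only [pairSum_cons_cons]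
      rw [intervalIntegral.integral_add ((hd a b).intervalIntegrable _ _)
        ((pairSum_param_continuous hd (b :: t')).intervalIntegrable _ _), key a b, IH]
      ring

noncomputable section MainAux

abbrev E2 := EuclideanSpace ℝ (Fin 2)

def q1 (γ : ℝ → E2) (θ t : ℝ) : ℝ := γ t 0 * Real.cos θ + γ t 1 * Real.sin θ
def q2 (γ : ℝ → E2) (θ t : ℝ) : ℝ := γ t 1 * Real.cos θ - γ t 0 * Real.sin θ

lemma q1_diff (γ : ℝ → E2) (θ a b : ℝ) :
    q1 γ θ b - q1 γ θ a = (γ b 0 - γ a 0) * Real.cos θ + (γ b 1 - γ a 1) * Real.sin θ := by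
  simp only [q1]; ring

lemma q2_diff (γ : ℝ → E2) (θ a b : ℝ) :
    q2 γ θ b - q2 γ θ a = (γ b 1 - γ a 1) * Real.cos θ + (-(γ b 0 - γ a 0)) * Real.sin θ := by
  simp only [q2]; ring

lemma dist_coords (x y : E2) : dist x y = Real.sqrt ((y 0 - x 0)^2 + (y 1 - x 1)^2) := by
  rw [EuclideanSpace.dist_eq, Fin.sum_univ_two]
  congr 1
  rw [Real.dist_eq, Real.dist_eq, sq_abs, sq_abs]; ring

lemma int_d1 (γ : ℝ → E2) (a b : ℝ) :
    ∫ θ in (0:ℝ)..(2*π), |q1 γ θ b - q1 γ θ a| = 4 * dist (γ a) (γ b) := by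
  simp only [q1_diff]
  rw [integral_abs_cos_sin, dist_coords]

lemma int_d2 (γ : ℝ → E2) (a b : ℝ) :
    ∫ θ in (0:ℝ)..(2*π), |q2 γ θ b - q2 γ θ a| = 4 * dist (γ a) (γ b) := by
  simp only [q2_diff]
  rw [integral_abs_cos_sin, dist_coords]
  rw [show (γ b 1 - γ a 1)^2 + (-(γ b 0 - γ a 0))^2 = (γ b 0 - γ a 0)^2 + (γ b 1 - γ a 1)^2
    by ring]

lemma cont_d1 (γ : ℝ → E2) (a b : ℝ) : Continuous fun θ => |q1 γ θ b - q1 γ θ a| := by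
  simp only [q1_diff]
  exact ((continuous_const.mul Real.continuous_cos).add
    (continuous_const.mul Real.continuous_sin)).abs

lemma cont_d2 (γ : ℝ → E2) (a b : ℝ) : Continuous fun θ => |q2 γ θ b - q2 γ θ a| := by
  simp only [q2_diff]
  exact ((continuous_const.mul Real.continuous_cos).add
    (continuous_const.mul Real.continuous_sin)).abs

lemma contOn_coord (γ : ℝ → E2) (hcont : ContinuousOn γ (Set.Icc 0 1)) (i : Fin 2) :
    ContinuousOn (fun t => γ t i) (Set.Icc 0 1) := by
  have h := (EuclideanSpace.proj (𝕜 := ℝ) i).continuous.comp_continuousOn hcont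
  exact h

lemma contOn_q1 (γ : ℝ → E2) (hcont : ContinuousOn γ (Set.Icc 0 1)) (θ : ℝ) :
    ContinuousOn (q1 γ θ) (Set.Icc 0 1) :=
  ((contOn_coord γ hcont 0).mul continuousOn_const).add
    ((contOn_coord γ hcont 1).mul continuousOn_const)

lemma contOn_q2 (γ : ℝ → E2) (hcont : ContinuousOn γ (Set.Icc 0 1)) (θ : ℝ) :
    ContinuousOn (q2 γ θ) (Set.Icc 0 1) :=
  ((contOn_coord γ hcont 1).mul continuousOn_const).sub
    ((contOn_coord γ hcont 0).mul continuousOn_const)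

def mkE (a b : ℝ) : E2 := (WithLp.equiv 2 (Fin 2 → ℝ)).symm ![a, b]

@[simp] lemma mkE_apply0 (a b : ℝ) : mkE a b 0 = a := rfl
@[simp] lemma mkE_apply1 (a b : ℝ) : mkE a b 1 = b := rfl

end MainAux

open Set

/-- Any closed curve `γ : [0,1] → ℝ²` (with `γ(0) = γ(1)`) of finite
length `L` can be enclosed in a rectangle `Q` of perimeter `per(Q) = 2(w + h) ≤ (4/π) · L`. -/
theorem stmt_12 (γ : ℝ → EuclideanSpace ℝ (Fin 2)) (L : ℝ)
    (hcont : ContinuousOn γ (Set.Icc 0 1))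
    (hclosed : γ 0 = γ 1)
    (hfin : eVariationOn γ (Set.Icc 0 1) ≠ ⊤)
    (hL : L = (eVariationOn γ (Set.Icc 0 1)).toReal) :
    ∃ (w h : ℝ) (Q : Set (EuclideanSpace ℝ (Fin 2)))
      (f : EuclideanSpace ℝ (Fin 2) → EuclideanSpace ℝ (Fin 2)),
      0 ≤ w ∧ 0 ≤ h ∧ Isometry f ∧
      Q = f '' {p : EuclideanSpace ℝ (Fin 2) | p 0 ∈ Set.Icc 0 w ∧ p 1 ∈ Set.Icc 0 h} ∧
      γ '' Set.Icc 0 1 ⊆ Q ∧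
      2 * (w + h) ≤ (4 / Real.pi) * L := by
  classical
  have pipos := Real.pi_pos
  have hLnn : 0 ≤ L := hL ▸ ENNReal.toReal_nonneg
  have h01 : (0:ℝ) ∈ Set.Icc (0:ℝ) 1 := by norm_num
  have h11 : (1:ℝ) ∈ Set.Icc (0:ℝ) 1 := by norm_num
  have hne : (Set.Icc (0:ℝ) 1).Nonempty := ⟨0, h01⟩
  -- extremizers for each direction
  have hext : ∀ θ : ℝ, ∃ a b c e : ℝ, a ∈ Set.Icc (0:ℝ) 1 ∧ b ∈ Set.Icc (0:ℝ) 1 ∧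
      c ∈ Set.Icc (0:ℝ) 1 ∧ e ∈ Set.Icc (0:ℝ) 1 ∧
      IsMinOn (q1 γ θ) (Set.Icc 0 1) a ∧ IsMaxOn (q1 γ θ) (Set.Icc 0 1) b ∧
      IsMinOn (q2 γ θ) (Set.Icc 0 1) c ∧ IsMaxOn (q2 γ θ) (Set.Icc 0 1) e := by
    intro θ
    obtain ⟨a, ha, hmina⟩ := isCompact_Icc.exists_isMinOn hne (contOn_q1 γ hcont θ)
    obtain ⟨b, hb, hmaxb⟩ := isCompact_Icc.exists_isMaxOn hne (contOn_q1 γ hcont θ)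
    obtain ⟨c, hc, hminc⟩ := isCompact_Icc.exists_isMinOn hne (contOn_q2 γ hcont θ)
    obtain ⟨e, he, hmaxe⟩ := isCompact_Icc.exists_isMaxOn hne (contOn_q2 γ hcont θ)
    exact ⟨a, b, c, e, ha, hb, hc, he, hmina, hmaxb, hminc, hmaxe⟩
  have hq1closed : ∀ θ, q1 γ θ 0 = q1 γ θ 1 := fun θ => by simp [q1, hclosed]
  have hq2closed : ∀ θ, q2 γ θ 0 = q2 γ θ 1 := fun θ => by simp [q2, hclosed]
  -- the crucial direction
  have crux : ∃ θ a b c e : ℝ, a ∈ Set.Icc (0:ℝ) 1 ∧ b ∈ Set.Icc (0:ℝ) 1 ∧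
      c ∈ Set.Icc (0:ℝ) 1 ∧ e ∈ Set.Icc (0:ℝ) 1 ∧
      IsMinOn (q1 γ θ) (Set.Icc 0 1) a ∧ IsMaxOn (q1 γ θ) (Set.Icc 0 1) b ∧
      IsMinOn (q2 γ θ) (Set.Icc 0 1) c ∧ IsMaxOn (q2 γ θ) (Set.Icc 0 1) e ∧
      2 * ((q1 γ θ b - q1 γ θ a) + (q2 γ θ e - q2 γ θ c)) ≤ (4 / Real.pi) * L := by
    by_contra hcon
    push_neg at hcon
    -- for each θ there is a partition witnessing a large sum
    have hpart : ∀ θ : ℝ, ∃ T : Finset ℝ, (0:ℝ) ∈ T ∧ (1:ℝ) ∈ T ∧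
        (∀ z ∈ T, z ∈ Set.Icc (0:ℝ) 1) ∧
        (4 / Real.pi) * L <
          pairSum (fun u v => |q1 γ θ v - q1 γ θ u|) (T.sort (·≤·)) +
          pairSum (fun u v => |q2 γ θ v - q2 γ θ u|) (T.sort (·≤·)) := by
      intro θ
      obtain ⟨a, b, c, e, ha, hb, hc, he, hmina, hmaxb, hminc, hmaxe⟩ := hext θ
      have hlt := hcon θ a b c e ha hb hc he hmina hmaxb hminc hmaxe
      refine ⟨{0, 1, a, b, c, e}, by simp, by simp, ?_, ?_⟩
      · intro z hz
        simp only [Finset.mem_insert, Finset.mem_singleton] at hz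
        rcases hz with rfl | rfl | rfl | rfl | rfl | rfl
        exacts [h01, h11, ha, hb, hc, he]
      · have hT : ∀ z ∈ ({0, 1, a, b, c, e} : Finset ℝ), z ∈ Set.Icc (0:ℝ) 1 := by
          intro z hz
          simp only [Finset.mem_insert, Finset.mem_singleton] at hz
          rcases hz with rfl | rfl | rfl | rfl | rfl | rfl
          exacts [h01, h11, ha, hb, hc, he]
        have k1 := key_finset (q1 γ θ) (hq1closed θ) _ (by simp) (by simp) hT
          (show a ∈ ({0, 1, a, b, c, e} : Finset ℝ) by simp)
          (show b ∈ ({0, 1, a, b, c, e} : Finset ℝ) by simp)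
        have k2 := key_finset (q2 γ θ) (hq2closed θ) _ (by simp) (by simp) hT
          (show c ∈ ({0, 1, a, b, c, e} : Finset ℝ) by simp)
          (show e ∈ ({0, 1, a, b, c, e} : Finset ℝ) by simp)
        have hab : q1 γ θ a ≤ q1 γ θ b := isMinOn_iff.mp hmina b hb
        have hce : q2 γ θ c ≤ q2 γ θ e := isMinOn_iff.mp hminc e he
        rw [abs_of_nonneg (sub_nonneg.mpr hab)] at k1
        rw [abs_of_nonneg (sub_nonneg.mpr hce)] at k2
        linarith
    choose Tof hT0 hT1 hTmem hTbound using hpart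
    -- compactness
    set O : ℝ → Set ℝ := fun θ0 => {x : ℝ |
      (4 / Real.pi) * L <
        pairSum (fun u v => |q1 γ x v - q1 γ x u|) ((Tof θ0).sort (·≤·)) +
        pairSum (fun u v => |q2 γ x v - q2 γ x u|) ((Tof θ0).sort (·≤·))} with hO
    have hOopen : ∀ θ0, IsOpen (O θ0) := by
      intro θ0
      apply isOpen_lt continuous_const
      exact (pairSum_param_continuous (fun a b => cont_d1 γ a b) _).add
        (pairSum_param_continuous (fun a b => cont_d2 γ a b) _)
    have hcover : Set.Icc (0:ℝ) (2*π) ⊆ ⋃ θ0, O θ0 := by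
      intro x _
      exact Set.mem_iUnion.mpr ⟨x, hTbound x⟩
    obtain ⟨s, hs⟩ := isCompact_Icc.elim_finite_subcover O hOopen hcover
    -- merged partition
    set T : Finset ℝ := (s.biUnion Tof) ∪ {0, 1} with hT
    have hT0' : (0:ℝ) ∈ T := by simp [hT]
    have hT1' : (1:ℝ) ∈ T := by simp [hT]
    have hTmem' : ∀ z ∈ T, z ∈ Set.Icc (0:ℝ) 1 := by
      intro z hz
      rw [hT, Finset.mem_union] at hz
      rcases hz with hz | hz
      · obtain ⟨i, _, hzi⟩ := Finset.mem_biUnion.mp hz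
        exact hTmem i z hzi
      · simp only [Finset.mem_insert, Finset.mem_singleton] at hz
        rcases hz with rfl | rfl
        exacts [h01, h11]
    set F : ℝ → ℝ := fun x =>
      pairSum (fun u v => |q1 γ x v - q1 γ x u|) (T.sort (·≤·)) +
      pairSum (fun u v => |q2 γ x v - q2 γ x u|) (T.sort (·≤·)) with hF
    have hFcont : Continuous F :=
      (pairSum_param_continuous (fun a b => cont_d1 γ a b) _).add
        (pairSum_param_continuous (fun a b => cont_d2 γ a b) _)
    have hFbig : ∀ x ∈ Set.Icc (0:ℝ) (2*π), (4 / Real.pi) * L < F x := by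
      intro x hx
      obtain ⟨i, hi, hxi⟩ := Set.mem_iUnion₂.mp (hs hx)
      have hsub : (Tof i).sort (·≤·) <+ T.sort (·≤·) := by
        apply sort_sublist_of_subset
        intro z hz
        rw [hT, Finset.mem_union]
        exact Or.inl (Finset.mem_biUnion.mpr ⟨i, hi, hz⟩)
      have m1 := pairSum_mono_sublist (absd_nonneg (q1 γ x)) (absd_tri (q1 γ x)) hsub
      have m2 := pairSum_mono_sublist (absd_nonneg (q2 γ x)) (absd_tri (q2 γ x)) hsub
      have := hxi
      rw [hO] at this
      simp only [Set.mem_setOf_eq] at this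
      calc (4 / Real.pi) * L < _ := this
      _ ≤ F x := add_le_add m1 m2
    -- the integral of F
    have hsorted : (T.sort (·≤·)).Pairwise (·≤·) := Finset.pairwise_sort _ _
    have hmemsort : ∀ z ∈ T.sort (·≤·), z ∈ Set.Icc (0:ℝ) 1 := fun z hz =>
      hTmem' z ((Finset.mem_sort _).mp hz)
    have hDsum : pairSum (fun u v => dist (γ u) (γ v)) (T.sort (·≤·)) ≤ L := by
      rw [hL]
      exact pairSum_dist_le_toReal γ hsorted hmemsort hfin
    have hint : ∫ x in (0:ℝ)..(2*π), F x = 8 * pairSum (fun u v => dist (γ u) (γ v)) (T.sort (·≤·)) := by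
      rw [hF]
      rw [intervalIntegral.integral_add
        ((pairSum_param_continuous (fun a b => cont_d1 γ a b) _).intervalIntegrable _ _)
        ((pairSum_param_continuous (fun a b => cont_d2 γ a b) _).intervalIntegrable _ _)]
      rw [pairSum_param_integral (fun a b => cont_d1 γ a b) (int_d1 γ) _,
        pairSum_param_integral (fun a b => cont_d2 γ a b) (int_d2 γ) _]
      ring
    -- minimum of F
    obtain ⟨x0, hx0, hminF⟩ := isCompact_Icc.exists_isMinOn
      (⟨0, by constructor <;> [norm_num; positivity]⟩ : (Set.Icc (0:ℝ) (2*π)).Nonempty)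
      hFcont.continuousOn
    have hlow : 2*π * F x0 ≤ ∫ x in (0:ℝ)..(2*π), F x := by
      have hmono := intervalIntegral.integral_mono_on (by positivity : (0:ℝ) ≤ 2*π)
        (_root_.intervalIntegrable_const (μ := MeasureTheory.volume) (c := F x0)) (hFcont.intervalIntegrable _ _)
        (fun x hx => isMinOn_iff.mp hminF x hx)
      rwa [intervalIntegral.integral_const, smul_eq_mul, sub_zero] at hmono
    have hstrict : 8 * L < 2*π * F x0 := by
      have h1 : (4 / Real.pi) * L < F x0 := hFbig x0 hx0
      have h2 : 2*π * ((4 / Real.pi) * L) < 2*π * F x0 :=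
        mul_lt_mul_of_pos_left h1 (by positivity)
      have h3 : 2*π * ((4 / Real.pi) * L) = 8 * L := by
        field_simp
        ring
      exact h3 ▸ h2
    have : (8:ℝ) * L < 8 * L := by
      calc (8:ℝ) * L < 2*π * F x0 := hstrict
      _ ≤ ∫ x in (0:ℝ)..(2*π), F x := hlow
      _ = 8 * pairSum (fun u v => dist (γ u) (γ v)) (T.sort (·≤·)) := hint
      _ ≤ 8 * L := by linarith
    linarith
  -- construct the rectangle from crux
  obtain ⟨θ, a, b, c, e, ha, hb, hc, he, hmina, hmaxb, hminc, hmaxe, hper⟩ := crux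
  set m1 := q1 γ θ a with hm1
  set M1 := q1 γ θ b with hM1
  set m2 := q2 γ θ c with hm2
  set M2 := q2 γ θ e with hM2
  refine ⟨M1 - m1, M2 - m2, _, fun x => mkE
      ((m1 + x 0) * Real.cos θ - (m2 + x 1) * Real.sin θ)
      ((m1 + x 0) * Real.sin θ + (m2 + x 1) * Real.cos θ), ?_, ?_, ?_, rfl, ?_, ?_⟩
  · exact sub_nonneg.mpr (isMinOn_iff.mp hmina b hb)
  · exact sub_nonneg.mpr (isMinOn_iff.mp hminc e he)
  · -- isometry
    apply Isometry.of_dist_eq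
    intro x y
    rw [dist_coords, dist_coords]
    congr 1
    simp only [mkE_apply0, mkE_apply1]
    linear_combination ((y 0 - x 0)^2 + (y 1 - x 1)^2) * Real.sin_sq_add_cos_sq θ
  · -- image containment
    rintro p ⟨t, ht, rfl⟩
    refine ⟨mkE (q1 γ θ t - m1) (q2 γ θ t - m2), ?_, ?_⟩
    · constructor
      · simp only [mkE_apply0]
        constructor
        · exact sub_nonneg.mpr (isMinOn_iff.mp hmina t ht)
        · exact sub_le_sub_right (isMaxOn_iff.mp hmaxb t ht) m1
      · simp only [mkE_apply1]
        constructor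
        · exact sub_nonneg.mpr (isMinOn_iff.mp hminc t ht)
        · exact sub_le_sub_right (isMaxOn_iff.mp hmaxe t ht) m2
    · ext i
      fin_cases i
      · simp only [mkE_apply0, mkE_apply1]
        show (m1 + (q1 γ θ t - m1)) * Real.cos θ - (m2 + (q2 γ θ t - m2)) * Real.sin θ = γ t 0
        simp only [q1, q2]
        linear_combination (γ t 0) * Real.sin_sq_add_cos_sq θ
      · simp only [mkE_apply0, mkE_apply1]
        show (m1 + (q1 γ θ t - m1)) * Real.sin θ + (m2 + (q2 γ θ t - m2)) * Real.cos θ = γ t 1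
        simp only [q1, q2]
        linear_combination (γ t 1) * Real.sin_sq_add_cos_sq θ
  · exact hper
end

section
/- Let 𝓛 be a set of lines in ℝ² and let γ : [0,1] → ℝ² be a closed curve (γ(0) = γ(1)) of finite length L such that every line in 𝓛 intersects the image of γ. Then there exists a rectangle Q with per(Q) ≤ (4/π) · L such that every line in 𝓛 intersects the boundary of Q; in particular, the boundary of Q is a closed tour of length at most (4/π) · L visiting every line in 𝓛. -/
open Set

section Helpers

open Real

lemma absSinInt (c : ℝ) : ∫ θ in (0:ℝ)..π, |Real.sin (θ + c)| = 2 := by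
  have hper : Function.Periodic (fun x => |Real.sin x|) π := by
    intro x; simp [Real.sin_add_pi]
  have h1 : ∫ θ in (0:ℝ)..π, |Real.sin (θ + c)| = ∫ x in c..(π + c), |Real.sin x| := by
    have := intervalIntegral.integral_comp_add_right (a := 0) (b := π) (fun x => |Real.sin x|) c
    simpa using this
  have h2 : ∫ x in c..(c + π), |Real.sin x| = ∫ x in (0:ℝ)..(0 + π), |Real.sin x| :=
    hper.intervalIntegral_add_eq c 0
  have h3 : ∫ x in (0:ℝ)..π, |Real.sin x| = ∫ x in (0:ℝ)..π, Real.sin x := by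
    apply intervalIntegral.integral_congr
    intro x hx
    rw [Set.uIcc_of_le Real.pi_pos.le] at hx
    exact abs_of_nonneg (Real.sin_nonneg_of_nonneg_of_le_pi hx.1 hx.2)
  rw [h1, show π + c = c + π by ring, h2]
  simp only [zero_add] at h2 ⊢
  rw [h3, integral_sin]
  norm_num

lemma abs_lin_le (a b θ : ℝ) : |a * Real.cos θ + b * Real.sin θ| ≤ Real.sqrt (a^2 + b^2) := by
  rw [← Real.sqrt_sq_eq_abs]
  apply Real.sqrt_le_sqrt
  nlinarith [Real.sin_sq_add_cos_sq θ, sq_nonneg (a * Real.sin θ - b * Real.cos θ)]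

lemma absLinInt (a b : ℝ) : ∫ θ in (0:ℝ)..π, |a * Real.cos θ + b * Real.sin θ|
    = 2 * Real.sqrt (a^2 + b^2) := by
  by_cases hz : a = 0 ∧ b = 0
  · simp [hz.1, hz.2]
  · set z : ℂ := ⟨b, a⟩ with hzdef
    have hz0 : z ≠ 0 := by
      simp only [ne_eq, Complex.ext_iff, Complex.zero_re, Complex.zero_im, hzdef]
      tauto
    have habs : ‖z‖ = Real.sqrt (a^2 + b^2) := by
      rw [Complex.norm_def, Complex.normSq_apply]
      simp [hzdef]; ring_nf
    have hcos : Real.cos z.arg = b / Real.sqrt (a^2+b^2) := by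
      rw [Complex.cos_arg hz0, habs]
    have hsin : Real.sin z.arg = a / Real.sqrt (a^2+b^2) := by
      rw [Complex.sin_arg, habs]
    have hr : Real.sqrt (a^2+b^2) ≠ 0 := by
      intro h
      rw [Real.sqrt_eq_zero (by positivity)] at h
      have := sq_nonneg a; have := sq_nonneg b
      exact hz ⟨by nlinarith, by nlinarith⟩
    have key : ∀ θ, a * Real.cos θ + b * Real.sin θ
        = Real.sqrt (a^2+b^2) * Real.sin (θ + z.arg) := by
      intro θ
      rw [Real.sin_add, hcos, hsin]
      field_simp
      ring
    calc ∫ θ in (0:ℝ)..π, |a * Real.cos θ + b * Real.sin θ|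
        = ∫ θ in (0:ℝ)..π, Real.sqrt (a^2+b^2) * |Real.sin (θ + z.arg)| := by
          apply intervalIntegral.integral_congr; intro x _
          simp only []
          rw [key x, abs_mul, abs_of_nonneg (Real.sqrt_nonneg _)]
      _ = Real.sqrt (a^2+b^2) * ∫ θ in (0:ℝ)..π, |Real.sin (θ + z.arg)| := by
          rw [intervalIntegral.integral_const_mul]
      _ = 2 * Real.sqrt (a^2 + b^2) := by rw [absSinInt]; ring

lemma telescope_abs (g : ℕ → ℝ) {a b : ℕ} (hab : a ≤ b) :
    |g b - g a| ≤ ∑ k ∈ Finset.Ico a b, |g (k+1) - g k| := by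
  have : g b - g a = ∑ k ∈ Finset.Ico a b, (g (k+1) - g k) := by
    rw [Finset.sum_Ico_eq_sub _ hab]
    rw [Finset.sum_range_sub (fun k => g k), Finset.sum_range_sub (fun k => g k)]
    ring
  rw [this]
  exact Finset.abs_sum_le_sum_abs _ _

lemma three_split (g : ℕ → ℝ) {i j n : ℕ} (h1 : i ≤ j) (h2 : j ≤ n) :
    |g i - g 0| + |g j - g i| + |g n - g j| ≤ ∑ k ∈ Finset.range n, |g (k+1) - g k| := by
  rw [Finset.range_eq_Ico, ← Finset.sum_Ico_consecutive _ (Nat.zero_le i) (h1.trans h2),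
    ← Finset.sum_Ico_consecutive _ h1 h2]
  have t1 := telescope_abs g (Nat.zero_le i)
  have t2 := telescope_abs g h1
  have t3 := telescope_abs g h2
  linarith

lemma find_interval {s : ℝ} (hs : s ∈ Set.Icc (0:ℝ) 1) {n : ℕ} (hn : 0 < n) :
    ∃ i : ℕ, i < n ∧ (i:ℝ)/n ≤ s ∧ s ≤ ((i:ℝ)+1)/n := by
  have hn' : (0:ℝ) < n := by exact_mod_cast hn
  by_cases h1 : s = 1
  · refine ⟨n - 1, Nat.sub_lt hn one_pos, ?_, ?_⟩
    · rw [h1, div_le_one hn']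
      have : ((n-1:ℕ):ℝ) ≤ (n:ℝ) := by exact_mod_cast Nat.sub_le n 1
      linarith
    · rw [h1, le_div_iff₀ hn']
      have h2 := Nat.succ_pred_eq_of_pos hn
      have : ((n-1:ℕ):ℝ) + 1 = n := by exact_mod_cast h2
      linarith
  · have hs1 : s < 1 := lt_of_le_of_ne hs.2 h1
    have hsn : s * n < n := by nlinarith
    have hsn0 : (0:ℝ) ≤ s * n := mul_nonneg hs.1 hn'.le
    refine ⟨⌊s * n⌋₊, ?_, ?_, ?_⟩
    · exact_mod_cast (Nat.floor_lt hsn0).mpr hsn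
    · rw [div_le_iff₀ hn']
      exact Nat.floor_le hsn0
    · rw [le_div_iff₀ hn']
      exact (Nat.lt_floor_add_one (s * n)).le

lemma aux_bdd {a b lo hi t : ℝ} (hb : b ≠ 0) (h : a + t*b ∈ Set.Icc lo hi) :
    t ≤ (|a| + |lo| + |hi|)/|b| := by
  have hbpos : 0 < |b| := abs_pos.mpr hb
  rw [le_div_iff₀ hbpos]
  have h1 : |a + t*b| ≤ |lo| + |hi| := by
    rw [abs_le]
    constructor
    · have := neg_abs_le lo; have := abs_nonneg hi; linarith [h.1]
    · have := le_abs_self hi; have := abs_nonneg lo; linarith [h.2]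
  have h2 : |t*b| ≤ |a + t*b| + |a| := by
    calc |t*b| = |(a + t*b) + (-a)| := by ring_nf
      _ ≤ |a + t*b| + |(-a)| := abs_add_le _ _
      _ = |a + t*b| + |a| := by rw [abs_neg]
  calc t * |b| ≤ |t| * |b| := by nlinarith [le_abs_self t, abs_nonneg b]
    _ = |t * b| := (abs_mul t b).symm
    _ ≤ |a| + |lo| + |hi| := by linarith

lemma line_box {w h A B C D : ℝ} (hBD : B ≠ 0 ∨ D ≠ 0)
    (hA : A ∈ Set.Icc 0 w) (hC : C ∈ Set.Icc 0 h) :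
    ∃ t : ℝ, (A + t*B ∈ Set.Icc 0 w ∧ C + t*D ∈ Set.Icc 0 h) ∧
      (A + t*B = 0 ∨ A + t*B = w ∨ C + t*D = 0 ∨ C + t*D = h) := by
  set T : Set ℝ := {t | A + t*B ∈ Set.Icc 0 w ∧ C + t*D ∈ Set.Icc 0 h} with hT
  have hT0 : (0:ℝ) ∈ T := by
    constructor <;> simpa
  have hTne : T.Nonempty := ⟨0, hT0⟩
  have hclosed : IsClosed T := by
    apply IsClosed.inter
    · exact isClosed_Icc.preimage (by fun_prop)
    · exact isClosed_Icc.preimage (by fun_prop)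
  have hbdd : BddAbove T := by
    rcases hBD with hB | hD
    · exact ⟨(|A| + |(0:ℝ)| + |w|)/|B|, fun t ht => aux_bdd hB ht.1⟩
    · exact ⟨(|C| + |(0:ℝ)| + |h|)/|D|, fun t ht => aux_bdd hD ht.2⟩
  set t₂ := sSup T with ht₂def
  have ht₂ : t₂ ∈ T := hclosed.csSup_mem hTne hbdd
  refine ⟨t₂, ⟨ht₂.1, ht₂.2⟩, ?_⟩
  by_contra hedge
  push_neg at hedge
  obtain ⟨h1, h2, h3, h4⟩ := hedge
  have hx : A + t₂*B ∈ Set.Ioo 0 w :=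
    ⟨lt_of_le_of_ne ht₂.1.1 (Ne.symm h1), lt_of_le_of_ne ht₂.1.2 h2⟩
  have hy : C + t₂*D ∈ Set.Ioo 0 h :=
    ⟨lt_of_le_of_ne ht₂.2.1 (Ne.symm h3), lt_of_le_of_ne ht₂.2.2 h4⟩
  have e1 : ∀ᶠ t in nhds t₂, A + t*B ∈ Set.Ioo 0 w :=
    (Continuous.continuousAt (by fun_prop)).eventually_mem (isOpen_Ioo.mem_nhds hx)
  have e2 : ∀ᶠ t in nhds t₂, C + t*D ∈ Set.Ioo 0 h :=
    (Continuous.continuousAt (by fun_prop)).eventually_mem (isOpen_Ioo.mem_nhds hy)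
  have e3 : ∀ᶠ t in nhdsWithin t₂ (Set.Ioi t₂), t ∈ T := by
    apply Filter.Eventually.filter_mono nhdsWithin_le_nhds
    filter_upwards [e1, e2] with t h1' h2'
    exact ⟨Set.Ioo_subset_Icc_self h1', Set.Ioo_subset_Icc_self h2'⟩
  obtain ⟨t', ht'T, ht'gt⟩ := (e3.and (eventually_mem_nhdsWithin)).exists
  exact absurd (le_csSup hbdd ht'T) (not_le.mpr ht'gt)

noncomputable def Pf (θ : ℝ) (x : EuclideanSpace ℝ (Fin 2)) : ℝ :=
  x 0 * Real.cos θ + x 1 * Real.sin θ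

lemma e2_norm (x : EuclideanSpace ℝ (Fin 2)) : ‖x‖ = Real.sqrt ((x 0)^2 + (x 1)^2) := by
  rw [EuclideanSpace.norm_eq]
  simp [Fin.sum_univ_two, sq_abs]

lemma e2_dist (x y : EuclideanSpace ℝ (Fin 2)) :
    dist x y = Real.sqrt ((x 0 - y 0)^2 + (x 1 - y 1)^2) := by
  rw [EuclideanSpace.dist_eq]
  simp [Fin.sum_univ_two, Real.dist_eq, sq_abs]

lemma e2_abs_apply_le0 (x : EuclideanSpace ℝ (Fin 2)) : |x 0| ≤ ‖x‖ := by
  rw [e2_norm, ← Real.sqrt_sq_eq_abs]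
  exact Real.sqrt_le_sqrt (by nlinarith [sq_nonneg (x 1)])

lemma e2_abs_apply_le1 (x : EuclideanSpace ℝ (Fin 2)) : |x 1| ≤ ‖x‖ := by
  rw [e2_norm, ← Real.sqrt_sq_eq_abs]
  exact Real.sqrt_le_sqrt (by nlinarith [sq_nonneg (x 0)])

lemma e2_sub_apply (x y : EuclideanSpace ℝ (Fin 2)) (i : Fin 2) : (x - y) i = x i - y i := rfl

lemma Pf_abs_sub_le (θ : ℝ) (x y : EuclideanSpace ℝ (Fin 2)) :
    |Pf θ x - Pf θ y| ≤ ‖x - y‖ := by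
  have h : Pf θ x - Pf θ y = (x 0 - y 0) * Real.cos θ + (x 1 - y 1) * Real.sin θ := by
    unfold Pf; ring
  rw [h, e2_norm, e2_sub_apply, e2_sub_apply]
  exact abs_lin_le _ _ _

lemma Pf_lip_theta (x : EuclideanSpace ℝ (Fin 2)) (θ θ' : ℝ) :
    |Pf θ x - Pf θ' x| ≤ 2 * ‖x‖ * |θ - θ'| := by
  have h : Pf θ x - Pf θ' x
      = x 0 * (Real.cos θ - Real.cos θ') + x 1 * (Real.sin θ - Real.sin θ') := by
    unfold Pf; ring
  have hc : |Real.cos θ - Real.cos θ'| ≤ |θ - θ'| := by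
    rw [Real.cos_sub_cos]
    rw [abs_mul, abs_mul]
    have h1 : |Real.sin ((θ+θ')/2)| ≤ 1 := Real.abs_sin_le_one _
    have h2 : |Real.sin ((θ-θ')/2)| ≤ |(θ-θ')/2| := Real.abs_sin_le_abs
    have h3 : |(θ-θ')/2| = |θ-θ'|/2 := by rw [abs_div]; norm_num
    rw [h3] at h2
    have := abs_nonneg (θ - θ')
    have h4 : |Real.sin ((θ - θ') / 2)| ≥ 0 := abs_nonneg _
    have h5 : |(-2:ℝ)| = 2 := by norm_num
    rw [h5]
    nlinarith
  have hs : |Real.sin θ - Real.sin θ'| ≤ |θ - θ'| := by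
    rw [Real.sin_sub_sin]
    rw [abs_mul, abs_mul]
    have h1 : |Real.cos ((θ+θ')/2)| ≤ 1 := Real.abs_cos_le_one _
    have h2 : |Real.sin ((θ-θ')/2)| ≤ |(θ-θ')/2| := Real.abs_sin_le_abs
    have h3 : |(θ-θ')/2| = |θ-θ'|/2 := by rw [abs_div]; norm_num
    rw [h3] at h2
    have := abs_nonneg (θ - θ')
    have h4 : |Real.sin ((θ - θ') / 2)| ≥ 0 := abs_nonneg _
    have h5 : |(2:ℝ)| = 2 := by norm_num
    rw [h5]
    nlinarith
  calc |Pf θ x - Pf θ' x|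
      ≤ |x 0| * |Real.cos θ - Real.cos θ'| + |x 1| * |Real.sin θ - Real.sin θ'| := by
        rw [h]
        calc |x 0 * (Real.cos θ - Real.cos θ') + x 1 * (Real.sin θ - Real.sin θ')|
            ≤ |x 0 * (Real.cos θ - Real.cos θ')| + |x 1 * (Real.sin θ - Real.sin θ')| :=
              abs_add_le _ _
          _ = |x 0| * |Real.cos θ - Real.cos θ'| + |x 1| * |Real.sin θ - Real.sin θ'| := by
              rw [abs_mul, abs_mul]
    _ ≤ ‖x‖ * |θ - θ'| + ‖x‖ * |θ - θ'| := by
        have h0 := e2_abs_apply_le0 x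
        have h1 := e2_abs_apply_le1 x
        have := abs_nonneg (θ - θ')
        have := abs_nonneg (x 0)
        have := abs_nonneg (x 1)
        nlinarith
    _ = 2 * ‖x‖ * |θ - θ'| := by ring

lemma Pf_cont_x (θ : ℝ) : Continuous (Pf θ) := by
  unfold Pf
  have h0 : Continuous (fun x : EuclideanSpace ℝ (Fin 2) => x 0) :=
    (EuclideanSpace.proj (0 : Fin 2)).continuous
  have h1 : Continuous (fun x : EuclideanSpace ℝ (Fin 2) => x 1) :=
    (EuclideanSpace.proj (1 : Fin 2)).continuous
  fun_prop

end Helpers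

/-- If every line of a set `𝓛` of lines in `ℝ²` intersects the image of a
closed curve `γ` of finite length `L`, then there is a rectangle `Q` with
`per(Q) ≤ (4/π) · L` whose boundary (the isometric image of the boundary of the box
`[0,w] × [0,h]`) intersects every line of `𝓛`: the boundary of `Q` is a closed tour of
length at most `(4/π) · L` visiting every line in `𝓛`. -/
theorem stmt_13 (𝓛 : Set (AffineSubspace ℝ (EuclideanSpace ℝ (Fin 2))))
    (hlines : ∀ ℓ ∈ 𝓛, Module.finrank ℝ (AffineSubspace.direction ℓ) = 1)
    (γ : ℝ → EuclideanSpace ℝ (Fin 2)) (L : ℝ)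
    (hcont : ContinuousOn γ (Set.Icc 0 1))
    (hclosed : γ 0 = γ 1)
    (hfin : eVariationOn γ (Set.Icc 0 1) ≠ ⊤)
    (hL : L = (eVariationOn γ (Set.Icc 0 1)).toReal)
    (hvisit : ∀ ℓ ∈ 𝓛, ((ℓ : Set (EuclideanSpace ℝ (Fin 2))) ∩ γ '' Set.Icc 0 1).Nonempty) :
    ∃ (w h : ℝ) (f : EuclideanSpace ℝ (Fin 2) → EuclideanSpace ℝ (Fin 2)),
      0 ≤ w ∧ 0 ≤ h ∧ Isometry f ∧
      2 * (w + h) ≤ (4 / Real.pi) * L ∧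
      ∀ ℓ ∈ 𝓛, ((ℓ : Set (EuclideanSpace ℝ (Fin 2))) ∩
        f '' {p : EuclideanSpace ℝ (Fin 2) | (p 0 ∈ Set.Icc 0 w ∧ p 1 ∈ Set.Icc 0 h) ∧
          (p 0 = 0 ∨ p 0 = w ∨ p 1 = 0 ∨ p 1 = h)}).Nonempty := by
  classical
  have hπ : (0:ℝ) < Real.pi := Real.pi_pos
  have hL0 : 0 ≤ L := hL ▸ ENNReal.toReal_nonneg
  have hIcc : IsCompact (Set.Icc (0:ℝ) 1) := isCompact_Icc
  have hne : (Set.Icc (0:ℝ) 1).Nonempty := ⟨0, by norm_num⟩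
  have hcontP : ∀ θ, ContinuousOn (fun t => Pf θ (γ t)) (Set.Icc 0 1) :=
    fun θ => (Pf_cont_x θ).comp_continuousOn hcont
  choose sp hsp hspmax using fun θ => hIcc.exists_isMaxOn hne (hcontP θ)
  choose sm hsm hsmmin using fun θ => hIcc.exists_isMinOn hne (hcontP θ)
  have hWmax : ∀ θ, ∀ t ∈ Set.Icc (0:ℝ) 1, Pf θ (γ t) ≤ Pf θ (γ (sp θ)) :=
    fun θ t ht => (hspmax θ) ht
  have hWmin : ∀ θ, ∀ t ∈ Set.Icc (0:ℝ) 1, Pf θ (γ (sm θ)) ≤ Pf θ (γ t) :=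
    fun θ t ht => (hsmmin θ) ht
  set W : ℝ → ℝ := fun θ => Pf θ (γ (sp θ)) - Pf θ (γ (sm θ)) with hWdef
  have hW0 : ∀ θ, 0 ≤ W θ := fun θ => sub_nonneg.mpr (hWmin θ (sp θ) (hsp θ))
  -- bound on norms
  obtain ⟨R, hR0, hRB⟩ : ∃ R, 0 ≤ R ∧ ∀ t ∈ Set.Icc (0:ℝ) 1, ‖γ t‖ ≤ R := by
    obtain ⟨r, hr⟩ := (hIcc.image_of_continuousOn hcont).isBounded.subset_closedBall 0
    refine ⟨max r 0, le_max_right _ _, fun t ht => ?_⟩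
    have := hr (Set.mem_image_of_mem γ ht)
    rw [Metric.mem_closedBall, dist_zero_right] at this
    exact this.trans (le_max_left _ _)
  -- W is Lipschitz
  have hWlip : ∀ θ θ', W θ - W θ' ≤ 4 * R * |θ - θ'| := by
    intro θ θ'
    have h1 : Pf θ (γ (sp θ)) ≤ Pf θ' (γ (sp θ)) + 2 * R * |θ - θ'| := by
      have hlip := Pf_lip_theta (γ (sp θ)) θ θ'
      have hn := hRB (sp θ) (hsp θ)
      have h6 : 2 * ‖γ (sp θ)‖ * |θ - θ'| ≤ 2 * R * |θ - θ'| := by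
        nlinarith [abs_nonneg (θ - θ')]
      have h7 := le_abs_self (Pf θ (γ (sp θ)) - Pf θ' (γ (sp θ)))
      linarith
    have h2 : Pf θ' (γ (sp θ)) ≤ Pf θ' (γ (sp θ')) := hWmax θ' (sp θ) (hsp θ)
    have h3 : Pf θ' (γ (sm θ')) ≤ Pf θ' (γ (sm θ)) := hWmin θ' (sm θ) (hsm θ)
    have h4 : Pf θ' (γ (sm θ)) ≤ Pf θ (γ (sm θ)) + 2 * R * |θ - θ'| := by
      have hlip := Pf_lip_theta (γ (sm θ)) θ' θ
      have hn := hRB (sm θ) (hsm θ)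
      have h5 : |θ' - θ| = |θ - θ'| := abs_sub_comm _ _
      rw [h5] at hlip
      have h6 : 2 * ‖γ (sm θ)‖ * |θ - θ'| ≤ 2 * R * |θ - θ'| := by
        nlinarith [abs_nonneg (θ - θ')]
      have h7 := le_abs_self (Pf θ' (γ (sm θ)) - Pf θ (γ (sm θ)))
      linarith
    simp only [hWdef]
    linarith
  have hWcont : Continuous W := by
    refine LipschitzWith.continuous (K := Real.toNNReal (4*R)) ?_
    apply LipschitzWith.of_dist_le_mul
    intro θ θ'
    rw [Real.dist_eq, Real.dist_eq, Real.coe_toNNReal _ (by positivity)]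
    rw [abs_sub_le_iff]
    constructor
    · exact hWlip θ θ'
    · rw [abs_sub_comm]
      exact hWlip θ' θ
  -- integral bound
  have hIntW : ∫ θ in (0:ℝ)..Real.pi, W θ ≤ L := by
    apply le_of_forall_pos_le_add
    intro ε hε
    set ε' := ε / (4 * Real.pi) with hε'def
    have hε'0 : 0 < ε' := by positivity
    obtain ⟨δ, hδ0, hδ⟩ := Metric.uniformContinuousOn_iff.mp
      (hIcc.uniformContinuousOn_of_continuous hcont) ε' hε'0
    obtain ⟨n, hn⟩ := exists_nat_one_div_lt hδ0
    set N := n + 1 with hNdef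
    have hN0 : 0 < N := Nat.succ_pos n
    have hN0' : (0:ℝ) < N := by exact_mod_cast hN0
    have hn' : 1 / (N:ℝ) < δ := by
      rw [hNdef]
      push_cast
      exact hn
    set pts : ℕ → ℝ := fun i => min ((i:ℝ)/N) 1 with hptsdef
    have hptsIcc : ∀ i, pts i ∈ Set.Icc (0:ℝ) 1 :=
      fun i => ⟨le_min (by positivity) zero_le_one, min_le_right _ _⟩
    have hptsmono : Monotone pts := by
      intro i j hij
      exact min_le_min (by gcongr) le_rfl
    have hptseq : ∀ i ≤ N, pts i = (i:ℝ)/N := by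
      intro i hi
      apply min_eq_left
      rw [div_le_one hN0']
      exact_mod_cast hi
    -- claim 3 : total polygonal length at most L
    have hsum : ∑ k ∈ Finset.range N, ‖γ (pts (k+1)) - γ (pts k)‖ ≤ L := by
      have h1 := eVariationOn.sum_le (f := γ) (n := N) hptsmono hptsIcc
      have key : ENNReal.ofReal (∑ k ∈ Finset.range N, ‖γ (pts (k+1)) - γ (pts k)‖)
          ≤ eVariationOn γ (Set.Icc 0 1) := by
        rw [ENNReal.ofReal_sum_of_nonneg (fun k _ => norm_nonneg _)]
        refine le_trans (le_of_eq ?_) h1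
        apply Finset.sum_congr rfl
        intro k _
        rw [← dist_eq_norm, ← edist_dist]
      rw [hL]
      exact (ENNReal.ofReal_le_iff_le_toReal hfin).mp key
    -- S
    set S : ℝ → ℝ :=
      fun θ => ∑ k ∈ Finset.range N, |Pf θ (γ (pts (k+1))) - Pf θ (γ (pts k))| with hSdef
    have hScont : Continuous S := by
      apply continuous_finset_sum
      intro k _
      apply Continuous.abs
      unfold Pf
      fun_prop
    have hSint : ∫ θ in (0:ℝ)..Real.pi, S θ
        = ∑ k ∈ Finset.range N, 2 * ‖γ (pts (k+1)) - γ (pts k)‖ := by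
      rw [intervalIntegral.integral_finset_sum]
      · apply Finset.sum_congr rfl
        intro k _
        have heq : (fun θ => |Pf θ (γ (pts (k+1))) - Pf θ (γ (pts k))|)
            = fun θ => |(γ (pts (k+1)) 0 - γ (pts k) 0) * Real.cos θ
              + (γ (pts (k+1)) 1 - γ (pts k) 1) * Real.sin θ| := by
          funext θ; unfold Pf; ring_nf
        rw [heq, absLinInt, e2_norm, e2_sub_apply, e2_sub_apply]
      · intro k _
        apply Continuous.intervalIntegrable
        apply Continuous.abs
        unfold Pf
        fun_prop
    -- claim 1
    have hclaim1 : ∀ θ, 2 * W θ ≤ S θ + 4 * ε' := by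
      intro θ
      obtain ⟨i, hiN, hi1, hi2⟩ := find_interval (hsp θ) hN0
      obtain ⟨j, hjN, hj1, hj2⟩ := find_interval (hsm θ) hN0
      set g : ℕ → ℝ := fun k => Pf θ (γ (pts k)) with hgdef
      have happ : ∀ (k : ℕ), k < N → ∀ (s : ℝ), s ∈ Set.Icc (0:ℝ) 1 →
          (k:ℝ)/N ≤ s → s ≤ ((k:ℝ)+1)/N → |g k - Pf θ (γ s)| ≤ ε' := by
        intro k hk s hsI h1 h2
        have hpk : pts k = (k:ℝ)/N := hptseq k hk.le
        have hd : dist (pts k) s < δ := by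
          rw [Real.dist_eq, hpk]
          have h3 : |(k:ℝ)/N - s| ≤ 1/N := by
            rw [abs_le]
            constructor
            · have : ((k:ℝ)+1)/N = (k:ℝ)/N + 1/N := by ring
              rw [this] at h2
              linarith
            · have : (0:ℝ) < 1/N := by positivity
              linarith
          linarith
        have hdist := hδ (pts k) (hptsIcc k) s hsI hd
        calc |g k - Pf θ (γ s)| ≤ ‖γ (pts k) - γ s‖ := Pf_abs_sub_le θ _ _
          _ = dist (γ (pts k)) (γ s) := (dist_eq_norm _ _).symm
          _ ≤ ε' := hdist.le
      have hgi := happ i hiN (sp θ) (hsp θ) hi1 hi2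
      have hgj := happ j hjN (sm θ) (hsm θ) hj1 hj2
      have hg0 : g 0 = Pf θ (γ 0) := by
        simp only [hgdef]
        congr 2
        rw [hptseq 0 (Nat.zero_le N)]
        simp
      have hgN : g N = Pf θ (γ 1) := by
        simp only [hgdef]
        congr 2
        rw [hptseq N le_rfl, div_self hN0'.ne']
      have hgg : g N = g 0 := by rw [hg0, hgN, hclosed]
      have hSθ : S θ = ∑ k ∈ Finset.range N, |g (k+1) - g k| := rfl
      have hWθ : W θ = Pf θ (γ (sp θ)) - Pf θ (γ (sm θ)) := rfl
      have habs1 := abs_le.mp hgi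
      have habs2 := abs_le.mp hgj
      rcases le_total i j with hij | hji
      · have h3 := three_split g hij hjN.le
        rw [← hSθ] at h3
        have b1 : g i - g 0 ≤ |g i - g 0| := le_abs_self _
        have b2 : g i - g j ≤ |g j - g i| := by rw [abs_sub_comm]; exact le_abs_self _
        have b3 : g 0 - g j ≤ |g N - g j| := by rw [hgg]; exact le_abs_self _
        linarith
      · have h3 := three_split g hji hiN.le
        rw [← hSθ] at h3
        have b1 : g 0 - g j ≤ |g j - g 0| := by rw [abs_sub_comm]; exact le_abs_self _
        have b2 : g i - g j ≤ |g i - g j| := le_abs_self _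
        have b3 : g i - g 0 ≤ |g N - g i| := by rw [hgg, abs_sub_comm]; exact le_abs_self _
        linarith
    -- integrate
    have hWint : IntervalIntegrable W MeasureTheory.volume 0 Real.pi :=
      hWcont.intervalIntegrable _ _
    have hSint' : IntervalIntegrable S MeasureTheory.volume 0 Real.pi :=
      hScont.intervalIntegrable _ _
    have h2 : ∫ θ in (0:ℝ)..Real.pi, 2 * W θ ≤ ∫ θ in (0:ℝ)..Real.pi, (S θ + 4*ε') := by
      apply intervalIntegral.integral_mono_on hπ.le
        ((continuous_const.mul hWcont).intervalIntegrable _ _)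
        (hSint'.add (intervalIntegrable_const))
      intro θ _
      exact hclaim1 θ
    rw [intervalIntegral.integral_const_mul,
      intervalIntegral.integral_add hSint' intervalIntegrable_const,
      intervalIntegral.integral_const, hSint] at h2
    have h4 : ∑ k ∈ Finset.range N, 2 * ‖γ (pts (k+1)) - γ (pts k)‖ ≤ 2 * L := by
      rw [← Finset.mul_sum]
      linarith
    have h5 : (Real.pi - 0) • (4*ε') = ε := by
      rw [smul_eq_mul, hε'def]
      field_simp
      ring
    rw [h5] at h2
    linarith
  -- mean value to find θ₀
  have hWshift : Continuous (fun θ => W (θ + Real.pi/2)) :=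
    hWcont.comp (continuous_add_right (Real.pi/2))
  have hGcont : Continuous (fun θ => W θ + W (θ + Real.pi/2)) := hWcont.add hWshift
  have hGint : ∫ θ in (0:ℝ)..(Real.pi/2), (W θ + W (θ + Real.pi/2)) ≤ L := by
    have e1 : ∫ θ in (0:ℝ)..(Real.pi/2), W (θ + Real.pi/2)
        = ∫ θ in (Real.pi/2:ℝ)..Real.pi, W θ := by
      have := intervalIntegral.integral_comp_add_right (a := 0) (b := Real.pi/2) W (Real.pi/2)
      rw [this]
      norm_num
    rw [intervalIntegral.integral_add (hWcont.intervalIntegrable _ _)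
      (hWshift.intervalIntegrable _ _), e1,
      intervalIntegral.integral_add_adjacent_intervals (hWcont.intervalIntegrable _ _)
      (hWcont.intervalIntegrable _ _)]
    exact hIntW
  obtain ⟨θ₀, hθ₀mem, hθ₀min⟩ := isCompact_Icc.exists_isMinOn (s := Set.Icc 0 (Real.pi/2))
    ⟨0, Set.mem_Icc.mpr ⟨le_rfl, by positivity⟩⟩ hGcont.continuousOn
  have hmean : (W θ₀ + W (θ₀ + Real.pi/2)) * (Real.pi/2) ≤ L := by
    have hmono : ∫ θ in (0:ℝ)..(Real.pi/2), (W θ₀ + W (θ₀ + Real.pi/2))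
        ≤ ∫ θ in (0:ℝ)..(Real.pi/2), (W θ + W (θ + Real.pi/2)) := by
      apply intervalIntegral.integral_mono_on (by positivity)
        intervalIntegrable_const (hGcont.intervalIntegrable _ _)
      intro θ hθ
      exact hθ₀min hθ
    rw [intervalIntegral.integral_const, smul_eq_mul] at hmono
    have := hGint
    nlinarith
  have hper : 2 * (W θ₀ + W (θ₀ + Real.pi/2)) ≤ (4 / Real.pi) * L := by
    rw [div_mul_eq_mul_div, le_div_iff₀ hπ]
    nlinarith
  -- construct rectangle
  set c := Real.cos θ₀ with hcdef
  set s := Real.sin θ₀ with hsdef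
  have hcs : c^2 + s^2 = 1 := by
    rw [hcdef, hsdef]
    exact Real.cos_sq_add_sin_sq θ₀
  set θ₁ := θ₀ + Real.pi/2 with hθ₁def
  have hPθ₁ : ∀ x : EuclideanSpace ℝ (Fin 2), Pf θ₁ x = -(x 0) * s + x 1 * c := by
    intro x
    unfold Pf
    rw [hθ₁def, Real.cos_add_pi_div_two, Real.sin_add_pi_div_two]
    ring
  set m1 := Pf θ₀ (γ (sm θ₀)) with hm1def
  set m2 := Pf θ₁ (γ (sm θ₁)) with hm2def
  refine ⟨W θ₀, W θ₁, fun p =>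
    WithLp.toLp 2 (![(m1 + p 0)*c - (m2 + p 1)*s, (m1 + p 0)*s + (m2 + p 1)*c] : Fin 2 → ℝ),
    hW0 θ₀, hW0 θ₁, ?_, hper, ?_⟩
  · apply Isometry.of_dist_eq
    intro p q
    rw [e2_dist, e2_dist]
    congr 1
    simp only [WithLp.ofLp_toLp, Matrix.cons_val_zero, Matrix.cons_val_one, Matrix.head_cons]
    linear_combination ((p 0 - q 0)^2 + (p 1 - q 1)^2) * hcs
  · intro ℓ hℓ
    obtain ⟨x, hxl, hxK⟩ := hvisit ℓ hℓ
    obtain ⟨t₀, ht₀, hxγ⟩ := hxK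
    have hdir : ℓ.direction ≠ ⊥ := by
      intro hb
      have h := hlines ℓ hℓ
      rw [hb] at h
      simp at h
    obtain ⟨v, hv, hv0⟩ := Submodule.exists_mem_ne_zero_of_ne_bot hdir
    set A := Pf θ₀ x - m1 with hAdef
    set B := Pf θ₀ v with hBdef
    set Cc := Pf θ₁ x - m2 with hCcdef
    set D := Pf θ₁ v with hDdef
    have hBD : B ≠ 0 ∨ D ≠ 0 := by
      by_contra hcn
      push_neg at hcn
      obtain ⟨hB0, hD0⟩ := hcn
      apply hv0
      have hB0' : v 0 * c + v 1 * s = 0 := hB0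
      have hD0' : -(v 0) * s + v 1 * c = 0 := by
        have := hPθ₁ v
        rw [hDdef, this] at hD0
        exact hD0
      have hva : v 0 = 0 := by linear_combination c * hB0' - s * hD0' - v 0 * hcs
      have hvb : v 1 = 0 := by linear_combination s * hB0' + c * hD0' - v 1 * hcs
      ext i
      fin_cases i
      · exact hva
      · exact hvb
    have hPmax : Pf θ₀ x ≤ Pf θ₀ (γ (sp θ₀)) := by
      rw [← hxγ]; exact hWmax θ₀ t₀ ht₀
    have hPmin : m1 ≤ Pf θ₀ x := by
      rw [← hxγ, hm1def]; exact hWmin θ₀ t₀ ht₀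
    have hPmax1 : Pf θ₁ x ≤ Pf θ₁ (γ (sp θ₁)) := by
      rw [← hxγ]; exact hWmax θ₁ t₀ ht₀
    have hPmin1 : m2 ≤ Pf θ₁ x := by
      rw [← hxγ, hm2def]; exact hWmin θ₁ t₀ ht₀
    have hAmem : A ∈ Set.Icc 0 (W θ₀) := by
      constructor
      · rw [hAdef]; linarith
      · rw [hAdef]
        have : W θ₀ = Pf θ₀ (γ (sp θ₀)) - m1 := rfl
        rw [this]
        linarith
    have hCmem : Cc ∈ Set.Icc 0 (W θ₁) := by
      constructor
      · rw [hCcdef]; linarith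
      · rw [hCcdef]
        have : W θ₁ = Pf θ₁ (γ (sp θ₁)) - m2 := rfl
        rw [this]
        linarith
    obtain ⟨t, ⟨hbox1, hbox2⟩, hedge⟩ := line_box hBD hAmem hCmem
    have hyl : t • v + x ∈ ℓ := by
      have h := AffineSubspace.vadd_mem_of_mem_direction (Submodule.smul_mem _ t hv) hxl
      exact h
    have hPx0 : Pf θ₀ x = x 0 * c + x 1 * s := rfl
    have hPv0 : Pf θ₀ v = v 0 * c + v 1 * s := rfl
    have hy0 : (t • v + x) 0 = t * v 0 + x 0 := rfl
    have hy1 : (t • v + x) 1 = t * v 1 + x 1 := rfl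
    refine ⟨t • v + x, hyl, WithLp.toLp 2 (![A + t*B, Cc + t*D] : Fin 2 → ℝ), ⟨⟨?_, ?_⟩, ?_⟩, ?_⟩
    · simpa using hbox1
    · simpa using hbox2
    · simpa using hedge
    · ext i
      fin_cases i
      · show (m1 + (![A + t*B, Cc + t*D] : Fin 2 → ℝ) 0) * c
            - (m2 + (![A + t*B, Cc + t*D] : Fin 2 → ℝ) 1) * s = (t • v + x) 0
        simp only [Matrix.cons_val_zero, Matrix.cons_val_one, Matrix.head_cons]
        rw [hy0, hAdef, hBdef, hCcdef, hDdef, hPx0, hPv0, hPθ₁ x, hPθ₁ v]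
        linear_combination (t * v 0 + x 0) * hcs
      · show (m1 + (![A + t*B, Cc + t*D] : Fin 2 → ℝ) 0) * s
            + (m2 + (![A + t*B, Cc + t*D] : Fin 2 → ℝ) 1) * c = (t • v + x) 1
        simp only [Matrix.cons_val_zero, Matrix.cons_val_one, Matrix.head_cons]
        rw [hy1, hAdef, hBdef, hCcdef, hDdef, hPx0, hPv0, hPθ₁ x, hPθ₁ v]
        linear_combination (t * v 1 + x 1) * hcs
end

section
/- Let 𝓛 be a set of lines in ℝ² and let γ : [0,1] → ℝ² be a curve of finite length L such that every line in 𝓛 intersects the image of γ. Then there exist a rectangle Q with side lengths w ≥ h and three of its closed sides s₁, s₂, s₃ (the two short sides and one long side) such that every line in 𝓛 intersects s₁ ∪ s₂ ∪ s₃ and the total length of these three sides satisfies w + 2h ≤ √2 · L; in particular, there is a polygonal path of length at most √2 · L visiting every line in 𝓛. -/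
open Set List Finset

lemma abs_sub_le_sum_Ico (f : ℕ → ℝ) {i j : ℕ} (hij : i ≤ j) :
    |f j - f i| ≤ ∑ k ∈ Finset.Ico i j, |f (k+1) - f k| := by
  induction j, hij using Nat.le_induction with
  | base => simp
  | succ j hij ih =>
      rw [Finset.sum_Ico_succ_top (by omega)]
      calc |f (j+1) - f i| ≤ |f (j+1) - f j| + |f j - f i| := abs_sub_le _ _ _
        _ = |f j - f i| + |f (j+1) - f j| := by ring
        _ ≤ (∑ k ∈ Finset.Ico i j, |f (k+1) - f k|) + |f (j+1) - f j| :=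
            add_le_add_left ih _

lemma chain3_le (f : ℕ → ℝ) {i0 i1 i2 i3 n : ℕ} (h01 : i0 ≤ i1) (h12 : i1 ≤ i2)
    (h23 : i2 ≤ i3) (h3n : i3 ≤ n) :
    |f i1 - f i0| + |f i2 - f i1| + |f i3 - f i2| ≤
      ∑ k ∈ Finset.range n, |f (k+1) - f k| := by
  have e1 : ∑ k ∈ Finset.Ico i0 i1, |f (k+1) - f k| + ∑ k ∈ Finset.Ico i1 i2, |f (k+1) - f k|
      + ∑ k ∈ Finset.Ico i2 i3, |f (k+1) - f k| = ∑ k ∈ Finset.Ico i0 i3, |f (k+1) - f k| := by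
    rw [Finset.sum_Ico_consecutive _ h01 h12, Finset.sum_Ico_consecutive _ (h01.trans h12) h23]
  have e2 : ∑ k ∈ Finset.Ico i0 i3, |f (k+1) - f k| ≤ ∑ k ∈ Finset.range n, |f (k+1) - f k| := by
    apply Finset.sum_le_sum_of_subset_of_nonneg
    · intro x hx; simp only [Finset.mem_Ico] at hx; simp only [Finset.mem_range]; omega
    · intros; positivity
  calc |f i1 - f i0| + |f i2 - f i1| + |f i3 - f i2|
      ≤ _ := add_le_add (add_le_add (abs_sub_le_sum_Ico f h01) (abs_sub_le_sum_Ico f h12)) (abs_sub_le_sum_Ico f h23)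
    _ = _ := e1
    _ ≤ _ := e2

lemma chain1_le (f : ℕ → ℝ) {i j n : ℕ} (hij : i ≤ j) (hjn : j ≤ n) :
    |f j - f i| ≤ ∑ k ∈ Finset.range n, |f (k+1) - f k| := by
  have := chain3_le f (le_refl i) hij (le_refl j) hjn
  simpa using this

lemma line_meets_three_sides {w h qx qy Dx Dy : ℝ}
    (hqx : qx ∈ Icc 0 w) (hqy : qy ∈ Icc 0 h) (hD : ¬ (Dx = 0 ∧ Dy = 0)) :
    ∃ t px py, px = qx + t * Dx ∧ py = qy + t * Dy ∧
      ((px = 0 ∧ py ∈ Icc 0 h) ∨ (px = w ∧ py ∈ Icc 0 h) ∨ (px ∈ Icc 0 w ∧ py = 0)) := by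
  obtain ⟨hqx0, hqxw⟩ := hqx
  obtain ⟨hqy0, hqyh⟩ := hqy
  by_cases hDx : Dx = 0
  · -- vertical line: go to the bottom side
    have hDy : Dy ≠ 0 := fun hy => hD ⟨hDx, hy⟩
    refine ⟨-qy / Dy, qx, 0, by rw [hDx]; ring, by field_simp; ring, ?_⟩
    exact Or.inr (Or.inr ⟨⟨hqx0, hqxw⟩, rfl⟩)
  · -- non-vertical: parametrize by x
    set k := Dy / Dx with hk
    set g : ℝ → ℝ := fun x => qy + (x - qx) * k with hg
    have key : ∀ x, ∃ t, x = qx + t * Dx ∧ g x = qy + t * Dy := by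
      intro x
      refine ⟨(x - qx) / Dx, by rw [div_mul_cancel₀ _ hDx]; ring, ?_⟩
      simp only [hg, hk]
      rw [mul_div_assoc', mul_comm (x - qx) Dy, mul_div_assoc, mul_comm]
    by_cases h0 : g 0 ∈ Icc (0:ℝ) h
    · obtain ⟨t, ht1, ht2⟩ := key 0
      exact ⟨t, 0, g 0, ht1, ht2, Or.inl ⟨rfl, h0⟩⟩
    by_cases hw' : g w ∈ Icc (0:ℝ) h
    · obtain ⟨t, ht1, ht2⟩ := key w
      exact ⟨t, w, g w, ht1, ht2, Or.inr (Or.inl ⟨rfl, hw'⟩)⟩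
    · -- g 0 and g w both outside [0,h]; g qx = qy inside; find zero crossing
      have hgqx : g qx = qy := by simp [hg]
      have hcont : ContinuousOn g (Icc 0 w) := by
        apply Continuous.continuousOn; simp only [hg]; continuity
      -- g qx lies between g 0 and g w
      have hbetween : min (g 0) (g w) ≤ qy ∧ qy ≤ max (g 0) (g w) := by
        rcases le_total 0 k with hk0 | hk0
        · constructor
          · calc min (g 0) (g w) ≤ g 0 := min_le_left _ _
              _ ≤ qy := by simp only [hg]; nlinarith
          · calc qy ≤ g w := by simp only [hg]; nlinarith
              _ ≤ max (g 0) (g w) := le_max_right _ _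
        · constructor
          · calc min (g 0) (g w) ≤ g w := min_le_right _ _
              _ ≤ qy := by simp only [hg]; nlinarith
          · calc qy ≤ g 0 := by simp only [hg]; nlinarith
              _ ≤ max (g 0) (g w) := le_max_left _ _
      simp only [Set.mem_Icc, not_and_or, not_le] at h0 hw'
      -- one endpoint value < 0, the other > h
      have hcases : (g 0 < 0 ∧ h < g w) ∨ (g w < 0 ∧ h < g 0) := by
        rcases h0 with h0 | h0 <;> rcases hw' with hw' | hw'
        · exfalso; rcases le_max_iff.mp hbetween.2 with h' | h' <;> linarith
        · exact Or.inl ⟨h0, hw'⟩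
        · exact Or.inr ⟨hw', h0⟩
        · exfalso; rcases min_le_iff.mp hbetween.1 with h' | h' <;> linarith
      have hww : (0:ℝ) ≤ w := le_trans hqx0 hqxw
      have : ∃ x ∈ Icc 0 w, g x = 0 := by
        rcases hcases with ⟨h1, h2⟩ | ⟨h1, h2⟩
        · have : (0:ℝ) ∈ Icc (g 0) (g w) := ⟨le_of_lt h1, by linarith⟩
          obtain ⟨x, hx, hgx⟩ := intermediate_value_Icc hww hcont this
          exact ⟨x, hx, hgx⟩
        · have : (0:ℝ) ∈ Icc (g w) (g 0) := ⟨le_of_lt h1, by linarith⟩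
          obtain ⟨x, hx, hgx⟩ := intermediate_value_Icc' hww hcont this
          exact ⟨x, hx, hgx⟩
      obtain ⟨x, hx, hgx⟩ := this
      obtain ⟨t, ht1, ht2⟩ := key x
      exact ⟨t, x, 0, ht1, by rw [← hgx]; exact ht2, Or.inr (Or.inr ⟨hx, rfl⟩)⟩

lemma getD_sorted_mono {l : List ℝ} {d : ℝ} (hs : l.Pairwise (· ≤ ·))
    (hd : ∀ x ∈ l, x ≤ d) : Monotone (fun i => l.getD i d) := by
  intro i j hij
  simp only []
  show l.getD i d ≤ l.getD j d
  by_cases hj : j < l.length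
  · have hi : i < l.length := lt_of_le_of_lt hij hj
    rw [List.getD_eq_getElem _ _ hi, List.getD_eq_getElem _ _ hj]
    exact hs.rel_get_of_le (a := ⟨i, hi⟩) (b := ⟨j, hj⟩) hij
  · rw [List.getD_eq_default _ _ (not_lt.mp hj)]
    by_cases hi : i < l.length
    · rw [List.getD_eq_getElem _ _ hi]
      exact hd _ (List.getElem_mem hi)
    · rw [List.getD_eq_default _ _ (not_lt.mp hi)]

lemma indexOf_mono {l : List ℝ} (hs : l.Pairwise (· ≤ ·)) {x y : ℝ}
    (hx : x ∈ l) (hy : y ∈ l) (hxy : x ≤ y) : l.idxOf x ≤ l.idxOf y := by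
  by_contra hcon
  push_neg at hcon
  have hxl := List.idxOf_lt_length_iff.mpr hx
  have hyl := List.idxOf_lt_length_iff.mpr hy
  have := hs.rel_get_of_le (a := ⟨l.idxOf y, hyl⟩) (b := ⟨l.idxOf x, hxl⟩) (le_of_lt hcon)
  simp only [List.get_eq_getElem, List.getElem_idxOf] at this
  have hxy' : x = y := le_antisymm hxy this
  subst hxy'
  exact absurd rfl (ne_of_lt hcon)

lemma getD_indexOf {l : List ℝ} {x d : ℝ} (hx : x ∈ l) :
    l.getD (l.idxOf x) d = x := by
  rw [List.getD_eq_getElem _ _ (List.idxOf_lt_length_iff.mpr hx), List.getElem_idxOf]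

lemma coord_incr {a b : ℝ} (hab : a^2 + b^2 = 1) (p q : EuclideanSpace ℝ (Fin 2)) :
    |(a * p 0 + b * p 1) - (a * q 0 + b * q 1)| +
    |(-b * p 0 + a * p 1) - (-b * q 0 + a * q 1)| ≤ Real.sqrt 2 * dist p q := by
  have hd : dist p q = Real.sqrt ((p 0 - q 0)^2 + (p 1 - q 1)^2) := by
    rw [EuclideanSpace.dist_eq, Fin.sum_univ_two]
    simp [Real.dist_eq, sq_abs]
  rw [hd, ← Real.sqrt_mul (by norm_num : (0:ℝ) ≤ 2)]
  set A := (a * p 0 + b * p 1) - (a * q 0 + b * q 1) with hA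
  set B := (-b * p 0 + a * p 1) - (-b * q 0 + a * q 1) with hB
  have hs : A^2 + B^2 = (p 0 - q 0)^2 + (p 1 - q 1)^2 := by
    rw [hA, hB]
    linear_combination ((p 0 - q 0)^2 + (p 1 - q 1)^2) * hab
  rw [show (2:ℝ) * ((p 0 - q 0)^2 + (p 1 - q 1)^2) = 2 * (A^2 + B^2) by rw [hs]]
  rw [← Real.sqrt_sq (by positivity : (0:ℝ) ≤ |A| + |B|)]
  apply Real.sqrt_le_sqrt
  nlinarith [sq_nonneg (|A| - |B|), sq_abs A, sq_abs B]

noncomputable def evec (x y : ℝ) : EuclideanSpace ℝ (Fin 2) := !₂[x, y]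

@[simp] lemma evec_0 (x y : ℝ) : evec x y 0 = x := rfl
@[simp] lemma evec_1 (x y : ℝ) : evec x y 1 = y := rfl

lemma euclid_dist (p q : EuclideanSpace ℝ (Fin 2)) :
    dist p q = Real.sqrt ((p 0 - q 0)^2 + (p 1 - q 1)^2) := by
  rw [EuclideanSpace.dist_eq, Fin.sum_univ_two]
  simp [Real.dist_eq, sq_abs]

lemma master (𝓛 : Set (AffineSubspace ℝ (EuclideanSpace ℝ (Fin 2))))
    (γ : ℝ → EuclideanSpace ℝ (Fin 2)) (a b cx cy w h : ℝ)
    (hab : a^2 + b^2 = 1)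
    (hX : ∀ t ∈ Icc (0:ℝ) 1, a * γ t 0 + b * γ t 1 ∈ Icc cx (cx + w))
    (hY : ∀ t ∈ Icc (0:ℝ) 1, -b * γ t 0 + a * γ t 1 ∈ Icc cy (cy + h))
    (hlines : ∀ ℓ ∈ 𝓛, Module.finrank ℝ (AffineSubspace.direction ℓ) = 1)
    (hvisit : ∀ ℓ ∈ 𝓛, ((ℓ : Set (EuclideanSpace ℝ (Fin 2))) ∩ γ '' Set.Icc 0 1).Nonempty) :
    ∃ f : EuclideanSpace ℝ (Fin 2) → EuclideanSpace ℝ (Fin 2), Isometry f ∧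
      ∀ ℓ ∈ 𝓛, ((ℓ : Set (EuclideanSpace ℝ (Fin 2))) ∩
        f '' ({p : EuclideanSpace ℝ (Fin 2) | p 0 = 0 ∧ p 1 ∈ Set.Icc 0 h} ∪
          {p : EuclideanSpace ℝ (Fin 2) | p 0 = w ∧ p 1 ∈ Set.Icc 0 h} ∪
          {p : EuclideanSpace ℝ (Fin 2) | p 0 ∈ Set.Icc 0 w ∧ p 1 = 0})).Nonempty := by
  refine ⟨fun p => evec (a * (cx + p 0) - b * (cy + p 1)) (b * (cx + p 0) + a * (cy + p 1)),
    ?_, ?_⟩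
  · apply Isometry.of_dist_eq
    intro p q
    rw [euclid_dist, euclid_dist]
    congr 1
    simp only [evec_0, evec_1]
    linear_combination ((p 0 - q 0)^2 + (p 1 - q 1)^2) * hab
  · intro ℓ hℓ
    obtain ⟨q, hqℓ, tq, htq, hγtq⟩ := hvisit ℓ hℓ
    have hdir : AffineSubspace.direction ℓ ≠ ⊥ := by
      intro hbot
      have := hlines ℓ hℓ
      rw [hbot] at this
      simp [finrank_bot] at this
    obtain ⟨D, hDmem, hDne⟩ := Submodule.exists_mem_ne_zero_of_ne_bot hdir
    set DX := a * D 0 + b * D 1 with hDX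
    set DY := -b * D 0 + a * D 1 with hDY
    have hDne' : ¬ (DX = 0 ∧ DY = 0) := by
      rintro ⟨h1, h2⟩
      apply hDne
      ext i
      fin_cases i
      · show D 0 = 0
        have : a * DX - b * DY = D 0 := by rw [hDX, hDY]; linear_combination (D 0) * hab
        rw [← this, h1, h2]; ring
      · show D 1 = 0
        have : b * DX + a * DY = D 1 := by rw [hDX, hDY]; linear_combination (D 1) * hab
        rw [← this, h1, h2]; ring
    have hqx : a * γ tq 0 + b * γ tq 1 - cx ∈ Icc 0 w := by
      have := hX tq htq; constructor <;> [linarith [this.1]; linarith [this.2]]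
    have hqy : -b * γ tq 0 + a * γ tq 1 - cy ∈ Icc 0 h := by
      have := hY tq htq; constructor <;> [linarith [this.1]; linarith [this.2]]
    obtain ⟨t, px, py, hpx, hpy, hS⟩ := line_meets_three_sides hqx hqy hDne'
    refine ⟨t • D + q, ?_, evec px py, ?_, ?_⟩
    · have := AffineSubspace.vadd_mem_of_mem_direction
        (Submodule.smul_mem _ t hDmem) hqℓ
      rwa [vadd_eq_add] at this
    · simp only [Set.mem_union, Set.mem_setOf_eq, evec_0, evec_1]
      tauto
    · ext i
      have hq0 : q 0 = γ tq 0 := by rw [hγtq]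
      have hq1 : q 1 = γ tq 1 := by rw [hγtq]
      fin_cases i
      · show a * (cx + px) - b * (cy + py) = (t • D + q) 0
        have : (t • D + q) 0 = t * D 0 + q 0 := by
          simp [PiLp.add_apply, PiLp.smul_apply, smul_eq_mul]
        rw [this, hpx, hpy, hDX, hDY, hq0]
        linear_combination (γ tq 0 + t * D 0) * hab
      · show b * (cx + px) + a * (cy + py) = (t • D + q) 1
        have : (t • D + q) 1 = t * D 1 + q 1 := by
          simp [PiLp.add_apply, PiLp.smul_apply, smul_eq_mul]
        rw [this, hpx, hpy, hDX, hDY, hq1]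
        linear_combination (γ tq 1 + t * D 1) * hab
/-- If every line of a set `𝓛` of lines in `ℝ²` intersects the image of a
curve `γ` of finite length `L`, then there are a rectangle with side lengths `w ≥ h ≥ 0` and
three of its closed sides (the two short sides and one long side, of total length `w + 2h`)
such that every line of `𝓛` intersects their union and `w + 2h ≤ √2 · L`: a polygonal path
of length at most `√2 · L` visiting every line in `𝓛`. -/
theorem stmt_14 (𝓛 : Set (AffineSubspace ℝ (EuclideanSpace ℝ (Fin 2))))
    (hlines : ∀ ℓ ∈ 𝓛, Module.finrank ℝ (AffineSubspace.direction ℓ) = 1)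
    (γ : ℝ → EuclideanSpace ℝ (Fin 2)) (L : ℝ)
    (hcont : ContinuousOn γ (Set.Icc 0 1))
    (hfin : eVariationOn γ (Set.Icc 0 1) ≠ ⊤)
    (hL : L = (eVariationOn γ (Set.Icc 0 1)).toReal)
    (hvisit : ∀ ℓ ∈ 𝓛, ((ℓ : Set (EuclideanSpace ℝ (Fin 2))) ∩ γ '' Set.Icc 0 1).Nonempty) :
    ∃ (w h : ℝ) (f : EuclideanSpace ℝ (Fin 2) → EuclideanSpace ℝ (Fin 2)),
      0 ≤ h ∧ h ≤ w ∧ Isometry f ∧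
      w + 2 * h ≤ Real.sqrt 2 * L ∧
      ∀ ℓ ∈ 𝓛, ((ℓ : Set (EuclideanSpace ℝ (Fin 2))) ∩
        f '' ({p : EuclideanSpace ℝ (Fin 2) | p 0 = 0 ∧ p 1 ∈ Set.Icc 0 h} ∪
          {p : EuclideanSpace ℝ (Fin 2) | p 0 = w ∧ p 1 ∈ Set.Icc 0 h} ∪
          {p : EuclideanSpace ℝ (Fin 2) | p 0 ∈ Set.Icc 0 w ∧ p 1 = 0})).Nonempty := by
  -- choose a unit vector (a,b) along the chord γ(1) - γ(0)
  obtain ⟨a, b, hab, hchord⟩ :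
      ∃ a b : ℝ, a^2 + b^2 = 1 ∧ -b * (γ 1 0 - γ 0 0) + a * (γ 1 1 - γ 0 1) = 0 := by
    by_cases hv : γ 1 0 - γ 0 0 = 0 ∧ γ 1 1 - γ 0 1 = 0
    · exact ⟨1, 0, by norm_num, by rw [hv.1, hv.2]; ring⟩
    · set v0 := γ 1 0 - γ 0 0 with hv0
      set v1 := γ 1 1 - γ 0 1 with hv1
      have hpos : 0 < v0^2 + v1^2 := by
        rcases not_and_or.mp hv with h | h <;> positivity
      have hn : 0 < Real.sqrt (v0^2 + v1^2) := Real.sqrt_pos.mpr hpos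
      have hn2 : Real.sqrt (v0^2 + v1^2) ^ 2 = v0^2 + v1^2 := Real.sq_sqrt hpos.le
      refine ⟨v0 / Real.sqrt (v0^2 + v1^2), v1 / Real.sqrt (v0^2 + v1^2), ?_, by ring⟩
      rw [div_pow, div_pow, ← add_div, hn2]
      exact div_self hpos.ne'
  set X : ℝ → ℝ := fun t => a * γ t 0 + b * γ t 1 with hXdef
  set Y : ℝ → ℝ := fun t => -b * γ t 0 + a * γ t 1 with hYdef
  have hY01 : Y 1 = Y 0 := by
    simp only [hYdef]
    linear_combination hchord
  -- continuity of the coordinates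
  have hc0 : ContinuousOn (fun t => γ t 0) (Set.Icc 0 1) :=
    ((EuclideanSpace.proj (0 : Fin 2)).continuous.comp_continuousOn hcont)
  have hc1 : ContinuousOn (fun t => γ t 1) (Set.Icc 0 1) :=
    ((EuclideanSpace.proj (1 : Fin 2)).continuous.comp_continuousOn hcont)
  have hXc : ContinuousOn X (Set.Icc 0 1) :=
    (continuousOn_const.mul hc0).add (continuousOn_const.mul hc1)
  have hYc : ContinuousOn Y (Set.Icc 0 1) :=
    (continuousOn_const.mul hc0).add (continuousOn_const.mul hc1)
  have hne : (Set.Icc (0:ℝ) 1).Nonempty := Set.nonempty_Icc.mpr zero_le_one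
  obtain ⟨tXM, htXM, hXM'⟩ := isCompact_Icc.exists_isMaxOn hne hXc
  obtain ⟨tXm, htXm, hXm'⟩ := isCompact_Icc.exists_isMinOn hne hXc
  obtain ⟨tYM, htYM, hYM'⟩ := isCompact_Icc.exists_isMaxOn hne hYc
  obtain ⟨tYm, htYm, hYm'⟩ := isCompact_Icc.exists_isMinOn hne hYc
  have hXM := isMaxOn_iff.mp hXM'
  have hXm := isMinOn_iff.mp hXm'
  have hYM := isMaxOn_iff.mp hYM'
  have hYm := isMinOn_iff.mp hYm'
  set w0 : ℝ := X tXM - X tXm with hw0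
  set h0 : ℝ := Y tYM - Y tYm with hh0
  have hw0nn : 0 ≤ w0 := by have := hXM tXm htXm; linarith
  have hh0nn : 0 ≤ h0 := by have := hYM tYm htYm; linarith
  -- sorted partition containing the six special points
  set l : List ℝ := [0, tXm, tXM, tYm, tYM, 1] with hldef
  set l' : List ℝ := l.insertionSort (· ≤ ·) with hl'def
  have hsorted : l'.Pairwise (· ≤ ·) := List.pairwise_insertionSort (· ≤ ·) l
  have hmem_iff : ∀ x : ℝ, x ∈ l' ↔ x ∈ l := fun x => (l.perm_insertionSort (· ≤ ·)).mem_iff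
  have hmemIcc : ∀ x ∈ l', x ∈ Set.Icc (0:ℝ) 1 := by
    intro x hx
    rw [hmem_iff] at hx
    simp only [hldef, List.mem_cons, List.not_mem_nil, or_false] at hx
    rcases hx with rfl | rfl | rfl | rfl | rfl | rfl
    · exact Set.left_mem_Icc.mpr zero_le_one
    · exact htXm
    · exact htXM
    · exact htYm
    · exact htYM
    · exact Set.right_mem_Icc.mpr zero_le_one
  set u : ℕ → ℝ := fun i => l'.getD i 1 with hudef
  have humono : Monotone u := getD_sorted_mono hsorted (fun x hx => (hmemIcc x hx).2)
  have hus : ∀ i, u i ∈ Set.Icc (0:ℝ) 1 := by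
    intro i
    by_cases hi : i < l'.length
    · show l'.getD i 1 ∈ _
      rw [List.getD_eq_getElem _ _ hi]
      exact hmemIcc _ (List.getElem_mem hi)
    · show l'.getD i 1 ∈ _
      rw [List.getD_eq_default _ _ (not_lt.mp hi)]
      exact Set.right_mem_Icc.mpr zero_le_one
  set N : ℕ := l'.length with hN
  -- membership of the special points in l'
  have hm0 : (0:ℝ) ∈ l' := (hmem_iff 0).mpr (by simp [hldef])
  have hm1 : (1:ℝ) ∈ l' := (hmem_iff 1).mpr (by simp [hldef])
  have hmXm : tXm ∈ l' := (hmem_iff tXm).mpr (by simp [hldef])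
  have hmXM : tXM ∈ l' := (hmem_iff tXM).mpr (by simp [hldef])
  have hmYm : tYm ∈ l' := (hmem_iff tYm).mpr (by simp [hldef])
  have hmYM : tYM ∈ l' := (hmem_iff tYM).mpr (by simp [hldef])
  have hu_at : ∀ x : ℝ, x ∈ l' → u (l'.idxOf x) = x := fun x hx => getD_indexOf hx
  -- total length of the partition is at most L
  have hdist_sum : ∑ k ∈ Finset.range N, dist (γ (u (k+1))) (γ (u k)) ≤ L := by
    have h1 := eVariationOn.sum_le (f := γ) (n := N) humono hus
    have h2 : ∑ k ∈ Finset.range N, dist (γ (u (k+1))) (γ (u k))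
        = (∑ k ∈ Finset.range N, edist (γ (u (k+1))) (γ (u k))).toReal := by
      rw [ENNReal.toReal_sum (fun k _ => edist_ne_top _ _)]
      exact Finset.sum_congr rfl fun k _ => dist_edist _ _
    rw [h2, hL]
    exact ENNReal.toReal_mono hfin h1
  have hXYsum : (∑ k ∈ Finset.range N, |X (u (k+1)) - X (u k)|)
      + (∑ k ∈ Finset.range N, |Y (u (k+1)) - Y (u k)|) ≤ Real.sqrt 2 * L := by
    rw [← Finset.sum_add_distrib]
    calc ∑ k ∈ Finset.range N, (|X (u (k+1)) - X (u k)| + |Y (u (k+1)) - Y (u k)|)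
        ≤ ∑ k ∈ Finset.range N, Real.sqrt 2 * dist (γ (u (k+1))) (γ (u k)) :=
          Finset.sum_le_sum fun k _ => coord_incr hab _ _
      _ = Real.sqrt 2 * ∑ k ∈ Finset.range N, dist (γ (u (k+1))) (γ (u k)) := by
          rw [Finset.mul_sum]
      _ ≤ Real.sqrt 2 * L :=
          mul_le_mul_of_nonneg_left hdist_sum (Real.sqrt_nonneg 2)
  -- the X-chain gives w0
  have hXbound : w0 ≤ ∑ k ∈ Finset.range N, |X (u (k+1)) - X (u k)| := by
    rcases le_total tXm tXM with hor | hor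
    · have hij := indexOf_mono hsorted hmXm hmXM hor
      have hle : l'.idxOf tXM ≤ N := (List.idxOf_lt_length_iff.mpr hmXM).le
      have := chain1_le (fun i => X (u i)) hij hle
      simp only [hu_at _ hmXm, hu_at _ hmXM] at this
      rw [abs_of_nonneg (by linarith)] at this
      exact this
    · have hij := indexOf_mono hsorted hmXM hmXm hor
      have hle : l'.idxOf tXm ≤ N := (List.idxOf_lt_length_iff.mpr hmXm).le
      have := chain1_le (fun i => X (u i)) hij hle
      simp only [hu_at _ hmXm, hu_at _ hmXM] at this
      rw [abs_of_nonpos (by linarith)] at this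
      have h' : w0 = -(X tXm - X tXM) := by rw [hw0]; ring
      rw [h'] ; exact this
  -- the Y-chain gives 2 * h0
  have hYbound : 2 * h0 ≤ ∑ k ∈ Finset.range N, |Y (u (k+1)) - Y (u k)| := by
    have h1le : l'.idxOf (1:ℝ) ≤ N := (List.idxOf_lt_length_iff.mpr hm1).le
    rcases le_total tYm tYM with hor | hor
    · have h01 := indexOf_mono hsorted hm0 hmYm htYm.1
      have h12 := indexOf_mono hsorted hmYm hmYM hor
      have h23 := indexOf_mono hsorted hmYM hm1 htYM.2
      have := chain3_le (fun i => Y (u i)) h01 h12 h23 h1le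
      simp only [hu_at _ hm0, hu_at _ hm1, hu_at _ hmYm, hu_at _ hmYM, hY01] at this
      have e1 := neg_abs_le (Y tYm - Y 0)
      have e2 := le_abs_self (Y tYM - Y tYm)
      have e3 := neg_abs_le (Y 0 - Y tYM)
      linarith
    · have h01 := indexOf_mono hsorted hm0 hmYM htYM.1
      have h12 := indexOf_mono hsorted hmYM hmYm hor
      have h23 := indexOf_mono hsorted hmYm hm1 htYm.2
      have := chain3_le (fun i => Y (u i)) h01 h12 h23 h1le
      simp only [hu_at _ hm0, hu_at _ hm1, hu_at _ hmYm, hu_at _ hmYM, hY01] at this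
      have e1 := le_abs_self (Y tYM - Y 0)
      have e2 := neg_abs_le (Y tYm - Y tYM)
      have e3 := le_abs_self (Y 0 - Y tYm)
      linarith
  have hmain : w0 + 2 * h0 ≤ Real.sqrt 2 * L := by linarith
  -- bounding boxes
  have hbX : ∀ t ∈ Set.Icc (0:ℝ) 1, X t ∈ Set.Icc (X tXm) (X tXm + w0) := by
    intro t ht
    have h1 := hXm t ht
    have h2 := hXM t ht
    constructor <;> [exact h1; (show X t ≤ X tXm + w0; rw [hw0]; linarith)]
  have hbY : ∀ t ∈ Set.Icc (0:ℝ) 1, Y t ∈ Set.Icc (Y tYm) (Y tYm + h0) := by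
    intro t ht
    have h1 := hYm t ht
    have h2 := hYM t ht
    constructor <;> [exact h1; (show Y t ≤ Y tYm + h0; rw [hh0]; linarith)]
  rcases le_total h0 w0 with hcase | hcase
  · -- frame (a, b): box w0 × h0
    obtain ⟨f, hiso, hcover⟩ := master 𝓛 γ a b (X tXm) (Y tYm) w0 h0 hab hbX hbY hlines hvisit
    exact ⟨w0, h0, f, hh0nn, hcase, hiso, hmain, hcover⟩
  · -- rotate frame by 90°: (-b, a); box h0 × w0
    have hab' : (-b)^2 + a^2 = 1 := by linear_combination hab
    have hbX' : ∀ t ∈ Set.Icc (0:ℝ) 1, -b * γ t 0 + a * γ t 1 ∈ Set.Icc (Y tYm) (Y tYm + h0) :=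
      hbY
    have hbY' : ∀ t ∈ Set.Icc (0:ℝ) 1,
        -a * γ t 0 + -b * γ t 1 ∈ Set.Icc (-(X tXM)) (-(X tXM) + w0) := by
      intro t ht
      have h1 := hXm t ht
      have h2 := hXM t ht
      have hXt : -a * γ t 0 + -b * γ t 1 = -(X t) := by simp only [hXdef]; ring
      rw [Set.mem_Icc, hXt]
      have hXw : X tXM = X tXm + w0 := by rw [hw0]; ring
      constructor <;> linarith
    obtain ⟨f, hiso, hcover⟩ :=
      master 𝓛 γ (-b) a (Y tYm) (-(X tXM)) h0 w0 hab' hbX' hbY' hlines hvisit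
    exact ⟨h0, w0, f, hw0nn, hcase, hiso, by linarith, hcover⟩
end
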